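/- arXiv:2212.02443 — 9 statements merged into one kernel-verified Lean document; each statement's English description precedes it below -/
import Mathlib

section
/- For every bivariate copula C, Spearman's rho and Spearman's footrule satisfy the inequality (2√3/9)·(1 + 2·φ(C))^{3/2} − 1 ≤ ρ(C). -/
open MeasureTheory Set

noncomputable section

/-- A bivariate copula on `[0,1]²`. -/
def IsCopula (C : ℝ → ℝ → ℝ) : Prop :=
  (∀ u ∈ Icc (0:ℝ) 1, ∀ v ∈ Icc (0:ℝ) 1, C u v ∈ Icc (0:ℝ) 1) ∧
  (∀ u ∈ Icc (0:ℝ) 1, C u 0 = 0 ∧ C 0 u = 0 ∧ C u 1 = u ∧ C 1 u = u) ∧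
  (∀ u₁ u₂ v₁ v₂ : ℝ, 0 ≤ u₁ → u₁ ≤ u₂ → u₂ ≤ 1 → 0 ≤ v₁ → v₁ ≤ v₂ → v₂ ≤ 1 →
    0 ≤ C u₂ v₂ - C u₂ v₁ - C u₁ v₂ + C u₁ v₁)

/-- Spearman's rho of a copula. -/
def spearmanRho (C : ℝ → ℝ → ℝ) : ℝ :=
  12 * (∫ u in (0:ℝ)..1, ∫ v in (0:ℝ)..1, C u v) - 3

/-- Spearman's footrule of a copula. -/
def spearmanFootrule (C : ℝ → ℝ → ℝ) : ℝ :=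
  6 * (∫ u in (0:ℝ)..1, C u u) - 2

variable {C : ℝ → ℝ → ℝ}

lemma cop_nonneg (hC : IsCopula C) {u v : ℝ} (hu : u ∈ Icc (0:ℝ) 1) (hv : v ∈ Icc (0:ℝ) 1) :
    0 ≤ C u v := (hC.1 u hu v hv).1

lemma cop_mono2 (hC : IsCopula C) {u v w : ℝ} (hu : u ∈ Icc (0:ℝ) 1)
    (hv : 0 ≤ v) (hvw : v ≤ w) (hw : w ≤ 1) : C u v ≤ C u w := by
  have h := hC.2.2 0 u v w le_rfl hu.1 hu.2 hv hvw hw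
  have h0v : C 0 v = 0 := (hC.2.1 v ⟨hv, hvw.trans hw⟩).2.1
  have h0w : C 0 w = 0 := (hC.2.1 w ⟨hv.trans hvw, hw⟩).2.1
  linarith

lemma cop_mono1 (hC : IsCopula C) {u v w : ℝ} (hv : v ∈ Icc (0:ℝ) 1)
    (hu : 0 ≤ u) (huw : u ≤ w) (hw : w ≤ 1) : C u v ≤ C w v := by
  have h := hC.2.2 u w 0 v hu huw hw le_rfl hv.1 hv.2
  have h1 : C u 0 = 0 := (hC.2.1 u ⟨hu, huw.trans hw⟩).1
  have h2 : C w 0 = 0 := (hC.2.1 w ⟨hu.trans huw, hw⟩).1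
  linarith

lemma cop_lip2 (hC : IsCopula C) {u v w : ℝ} (hu : u ∈ Icc (0:ℝ) 1)
    (hv : 0 ≤ v) (hvw : v ≤ w) (hw : w ≤ 1) : C u w - C u v ≤ w - v := by
  have h := hC.2.2 u 1 v w hu.1 hu.2 le_rfl hv hvw hw
  have h1 : C 1 v = v := (hC.2.1 v ⟨hv, hvw.trans hw⟩).2.2.2
  have h2 : C 1 w = w := (hC.2.1 w ⟨hv.trans hvw, hw⟩).2.2.2
  linarith

lemma cop_lip1 (hC : IsCopula C) {u v w : ℝ} (hv : v ∈ Icc (0:ℝ) 1)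
    (hu : 0 ≤ u) (huw : u ≤ w) (hw : w ≤ 1) : C w v - C u v ≤ w - u := by
  have h := hC.2.2 u w v 1 hu huw hw hv.1 hv.2 le_rfl
  have h1 : C u 1 = u := (hC.2.1 u ⟨hu, huw.trans hw⟩).2.2.1
  have h2 : C w 1 = w := (hC.2.1 w ⟨hu.trans huw, hw⟩).2.2.1
  linarith

lemma cop_lowW (hC : IsCopula C) {u v : ℝ} (hu : u ∈ Icc (0:ℝ) 1) (hv : v ∈ Icc (0:ℝ) 1) :
    u + v - 1 ≤ C u v := by
  have h := hC.2.2 u 1 v 1 hu.1 hu.2 le_rfl hv.1 hv.2 le_rfl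
  have h1 : C 1 v = v := (hC.2.1 v hv).2.2.2
  have h2 : C u 1 = u := (hC.2.1 u hu).2.2.1
  have h3 : C 1 1 = 1 := (hC.2.1 1 ⟨zero_le_one, le_rfl⟩).2.2.1
  linarith

lemma cop_diag_le (hC : IsCopula C) {t : ℝ} (ht : t ∈ Icc (0:ℝ) 1) : C t t ≤ t := by
  have := cop_mono2 hC ht ht.1 ht.2 le_rfl
  rwa [(hC.2.1 t ht).2.2.1] at this

lemma cop_ii (hC : IsCopula C) {t a b : ℝ} (ht : t ∈ Icc (0:ℝ) 1)
    (ha : 0 ≤ a) (hab : a ≤ b) (hb : b ≤ 1) :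
    IntervalIntegrable (fun v => C t v) volume a b := by
  apply MonotoneOn.intervalIntegrable
  intro x hx y hy hxy
  rw [uIcc_of_le hab] at hx hy
  exact cop_mono2 hC ht (ha.trans hx.1) hxy (hy.2.trans hb)

lemma inner_bound (hC : IsCopula C) {t : ℝ} (ht : t ∈ Icc (0:ℝ) 1) :
    (C t t)^2 + (1 - 2*t) * (C t t) + t^2/2 ≤ ∫ v in (0:ℝ)..1, C t v := by
  have hδ0 : 0 ≤ C t t := cop_nonneg hC ht ht
  have hδt : C t t ≤ t := cop_diag_le hC ht
  have hδW : 2*t - 1 ≤ C t t := by have := cop_lowW hC ht ht; linarith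
  set δ := C t t with hδdef
  have h1 : (0:ℝ) ≤ t - δ := by linarith
  have h2 : t - δ ≤ t := by linarith
  have h3 : t ≤ 1 - t + δ := by linarith
  have h4 : 1 - t + δ ≤ 1 := by linarith
  have ht1 : t ≤ 1 := ht.2
  have ht0 : 0 ≤ t := ht.1
  -- split the integral
  have i1 := cop_ii hC ht (le_refl 0) h1 (by linarith)
  have i2 := cop_ii hC ht h1 h2 (by linarith)
  have i3 := cop_ii hC ht ht0 h3 h4
  have i4 := cop_ii hC ht (by linarith : (0:ℝ) ≤ 1 - t + δ) h4 le_rfl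
  have s1 : (∫ v in (0:ℝ)..(t-δ), C t v) + (∫ v in (t-δ)..t, C t v)
      = ∫ v in (0:ℝ)..t, C t v :=
    intervalIntegral.integral_add_adjacent_intervals i1 i2
  have s2 : (∫ v in (0:ℝ)..t, C t v) + (∫ v in t..(1-t+δ), C t v)
      = ∫ v in (0:ℝ)..(1-t+δ), C t v :=
    intervalIntegral.integral_add_adjacent_intervals (cop_ii hC ht (le_refl 0) ht0 ht1) i3
  have s3 : (∫ v in (0:ℝ)..(1-t+δ), C t v) + (∫ v in (1-t+δ)..1, C t v)
      = ∫ v in (0:ℝ)..1, C t v :=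
    intervalIntegral.integral_add_adjacent_intervals
      (cop_ii hC ht (le_refl 0) (by linarith) h4) i4
  -- piece 1
  have p1 : (0:ℝ) ≤ ∫ v in (0:ℝ)..(t-δ), C t v := by
    apply intervalIntegral.integral_nonneg h1
    intro v hv
    exact cop_nonneg hC ht ⟨hv.1, by linarith [hv.2]⟩
  -- piece 2
  have p2 : δ^2/2 ≤ ∫ v in (t-δ)..t, C t v := by
    have e2 : (∫ v in (t-δ)..t, ((δ - t) + v)) = δ^2/2 := by
      rw [intervalIntegral.integral_add intervalIntegrable_const intervalIntegral.intervalIntegrable_id,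
        intervalIntegral.integral_const, integral_id]
      simp only [smul_eq_mul]; ring
    rw [← e2]
    apply intervalIntegral.integral_mono_on h2
      (intervalIntegrable_const.add intervalIntegral.intervalIntegrable_id) i2
    intro v hv
    have hv0 : 0 ≤ v := le_trans h1 hv.1
    have := cop_lip2 hC ht hv0 hv.2 ht1
    linarith
  -- piece 3
  have p3 : (1 - 2*t + δ) * δ ≤ ∫ v in t..(1-t+δ), C t v := by
    have e3 : (∫ v in t..(1-t+δ), (δ:ℝ)) = (1 - 2*t + δ) * δ := by
      rw [intervalIntegral.integral_const]; simp only [smul_eq_mul]; ring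
    rw [← e3]
    apply intervalIntegral.integral_mono_on h3 intervalIntegrable_const i3
    intro v hv
    exact cop_mono2 hC ht ht0 hv.1 (le_trans hv.2 h4)
  -- piece 4
  have p4 : (t^2 - δ^2)/2 ≤ ∫ v in (1-t+δ)..1, C t v := by
    have e4 : (∫ v in (1-t+δ)..1, ((t - 1) + v)) = (t^2 - δ^2)/2 := by
      rw [intervalIntegral.integral_add intervalIntegrable_const intervalIntegral.intervalIntegrable_id,
        intervalIntegral.integral_const, integral_id]
      simp only [smul_eq_mul]; ring
    rw [← e4]
    apply intervalIntegral.integral_mono_on h4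
      (intervalIntegrable_const.add intervalIntegral.intervalIntegrable_id) i4
    intro v hv
    have := cop_lowW hC ht ⟨by linarith [hv.1], hv.2⟩
    linarith
  linarith

lemma cop_diag_cont (hC : IsCopula C) : ContinuousOn (fun t => C t t) (Icc (0:ℝ) 1) := by
  apply LipschitzOnWith.continuousOn (K := 2)
  rw [lipschitzOnWith_iff_dist_le_mul]
  intro x hx y hy
  rw [Real.dist_eq, Real.dist_eq]
  have key : ∀ s t : ℝ, s ∈ Icc (0:ℝ) 1 → t ∈ Icc (0:ℝ) 1 → s ≤ t →
      |C t t - C s s| ≤ 2 * |t - s| := by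
    intro s t hs ht hst
    have m1 : C s t ≤ C t t := cop_mono1 hC ht hs.1 hst ht.2
    have m2 : C s s ≤ C s t := cop_mono2 hC hs hs.1 hst ht.2
    have l1 : C t t - C s t ≤ t - s := cop_lip1 hC ht hs.1 hst ht.2
    have l2 : C s t - C s s ≤ t - s := cop_lip2 hC hs hs.1 hst ht.2
    rw [abs_of_nonneg (by linarith), abs_of_nonneg (by linarith)]
    linarith
  push_cast
  rcases le_total x y with h | h
  · rw [abs_sub_comm, abs_sub_comm x y]; exact key x y hx hy h
  · exact key y x hy hx h

lemma cop_h_cont (hC : IsCopula C) :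
    ContinuousOn (fun t => C t t - max 0 (2*t - 1)) (Icc (0:ℝ) 1) :=
  (cop_diag_cont hC).sub (by fun_prop)

lemma outer_mono (hC : IsCopula C) :
    MonotoneOn (fun u => ∫ v in (0:ℝ)..1, C u v) (Icc (0:ℝ) 1) := by
  intro x hx y hy hxy
  apply intervalIntegral.integral_mono_on zero_le_one
    (cop_ii hC hx le_rfl zero_le_one le_rfl) (cop_ii hC hy le_rfl zero_le_one le_rfl)
  intro v hv
  exact cop_mono1 hC hv hx.1 hxy hy.2

lemma integral_qmax (L : ℝ) (hL0 : 0 ≤ L) (hL1 : L ≤ 1) :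
    (∫ t in (0:ℝ)..1, (max (L - |1 - 2*t|) 0)^2) = L^3/3 := by
  set q : ℝ → ℝ := fun t => (max (L - |1 - 2*t|) 0)^2 with hq
  have hqc : Continuous q := by fun_prop
  have ha0 : (0:ℝ) ≤ (1-L)/2 := by linarith
  have hah : (1-L)/2 ≤ 1/2 := by linarith
  have hhb : (1:ℝ)/2 ≤ (1+L)/2 := by linarith
  have hb1 : (1+L)/2 ≤ 1 := by linarith
  have s1 : (∫ t in (0:ℝ)..((1-L)/2), q t) + (∫ t in ((1-L)/2)..(1/2), q t)
      = ∫ t in (0:ℝ)..(1/2), q t :=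
    intervalIntegral.integral_add_adjacent_intervals
      (hqc.intervalIntegrable _ _) (hqc.intervalIntegrable _ _)
  have s2 : (∫ t in (0:ℝ)..(1/2), q t) + (∫ t in ((1:ℝ)/2)..((1+L)/2), q t)
      = ∫ t in (0:ℝ)..((1+L)/2), q t :=
    intervalIntegral.integral_add_adjacent_intervals
      (hqc.intervalIntegrable _ _) (hqc.intervalIntegrable _ _)
  have s3 : (∫ t in (0:ℝ)..((1+L)/2), q t) + (∫ t in ((1+L)/2)..1, q t)
      = ∫ t in (0:ℝ)..1, q t :=
    intervalIntegral.integral_add_adjacent_intervals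
      (hqc.intervalIntegrable _ _) (hqc.intervalIntegrable _ _)
  have p1 : (∫ t in (0:ℝ)..((1-L)/2), q t) = 0 := by
    rw [intervalIntegral.integral_congr (g := fun _ => (0:ℝ))]
    · simp
    · intro t ht
      rw [uIcc_of_le ha0] at ht
      have habs : |1 - 2*t| = 1 - 2*t := abs_of_nonneg (by nlinarith [ht.2])
      have : L - |1 - 2*t| ≤ 0 := by rw [habs]; nlinarith [ht.2]
      simp [q, max_eq_right this]
  have p2 : (∫ t in ((1-L)/2)..(1/2), q t) = L^3/6 := by
    have : (∫ t in ((1-L)/2)..(1/2), q t)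
        = ∫ t in ((1-L)/2)..(1/2), (fun x => x^2) (2*t + (L-1)) := by
      apply intervalIntegral.integral_congr
      intro t ht
      rw [uIcc_of_le hah] at ht
      have habs : |1 - 2*t| = 1 - 2*t := abs_of_nonneg (by nlinarith [ht.2])
      have hnn : (0:ℝ) ≤ L - (1 - 2*t) := by nlinarith [ht.1]
      simp only [q, habs, max_eq_left hnn]
      ring
    rw [this, intervalIntegral.integral_comp_mul_add (fun x => x^2) two_ne_zero (L-1)]
    rw [show 2*((1-L)/2) + (L-1) = 0 by ring, show 2*(1/2 : ℝ) + (L-1) = L by ring,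
      integral_pow]
    simp only [smul_eq_mul]; norm_num; ring
  have p3 : (∫ t in ((1:ℝ)/2)..((1+L)/2), q t) = L^3/6 := by
    have : (∫ t in ((1:ℝ)/2)..((1+L)/2), q t)
        = ∫ t in ((1:ℝ)/2)..((1+L)/2), (fun x => x^2) ((-2)*t + (L+1)) := by
      apply intervalIntegral.integral_congr
      intro t ht
      rw [uIcc_of_le hhb] at ht
      have habs : |1 - 2*t| = 2*t - 1 := by
        rw [abs_of_nonpos (by nlinarith [ht.1])]; ring
      have hnn : (0:ℝ) ≤ L - (2*t - 1) := by nlinarith [ht.2]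
      simp only [q, habs, max_eq_left hnn]
      ring
    rw [this, intervalIntegral.integral_comp_mul_add (fun x => x^2) (by norm_num : (-2:ℝ) ≠ 0) (L+1)]
    rw [show (-2:ℝ)*(1/2) + (L+1) = L by ring, show (-2)*((1+L)/2) + (L+1) = 0 by ring,
      integral_pow]
    simp only [smul_eq_mul]; norm_num; ring
  have p4 : (∫ t in ((1+L)/2)..1, q t) = 0 := by
    rw [intervalIntegral.integral_congr (g := fun _ => (0:ℝ))]
    · simp
    · intro t ht
      rw [uIcc_of_le hb1] at ht
      have habs : |1 - 2*t| = 2*t - 1 := by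
        rw [abs_of_nonpos (by nlinarith [ht.1])]; ring
      have : L - |1 - 2*t| ≤ 0 := by rw [habs]; nlinarith [ht.1]
      simp [q, max_eq_right this]
  linarith

lemma integral_pospart : (∫ t in (0:ℝ)..1, max 0 (2*t - 1)) = 1/4 := by
  have hc : Continuous (fun t : ℝ => max 0 (2*t - 1)) := by fun_prop
  have s1 : (∫ t in (0:ℝ)..(1/2), max 0 (2*t-1)) + (∫ t in ((1:ℝ)/2)..1, max 0 (2*t-1))
      = ∫ t in (0:ℝ)..1, max 0 (2*t-1) :=
    intervalIntegral.integral_add_adjacent_intervals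
      (hc.intervalIntegrable _ _) (hc.intervalIntegrable _ _)
  have p1 : (∫ t in (0:ℝ)..(1/2), max 0 (2*t-1)) = 0 := by
    rw [intervalIntegral.integral_congr (g := fun _ => (0:ℝ))]
    · simp
    · intro t ht
      rw [uIcc_of_le (by norm_num : (0:ℝ) ≤ 1/2)] at ht
      exact max_eq_left (by nlinarith [ht.2])
  have p2 : (∫ t in ((1:ℝ)/2)..1, max 0 (2*t-1)) = 1/4 := by
    have : (∫ t in ((1:ℝ)/2)..1, max 0 (2*t-1))
        = ∫ t in ((1:ℝ)/2)..1, ((-1) + 2*t) := by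
      apply intervalIntegral.integral_congr
      intro t ht
      rw [uIcc_of_le (by norm_num : (1:ℝ)/2 ≤ 1)] at ht
      show max 0 (2*t - 1) = -1 + 2*t
      rw [max_eq_right (by nlinarith [ht.1])]; ring
    rw [this, intervalIntegral.integral_add intervalIntegrable_const
        ((intervalIntegral.intervalIntegrable_id).const_mul 2),
      intervalIntegral.integral_const, intervalIntegral.integral_const_mul, integral_id]
    norm_num
  linarith

lemma integral_minpart : (∫ t in (0:ℝ)..1, min t (1 - t)) = 1/4 := by
  have hc : Continuous (fun t : ℝ => min t (1 - t)) := by fun_prop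
  have s1 : (∫ t in (0:ℝ)..(1/2), min t (1-t)) + (∫ t in ((1:ℝ)/2)..1, min t (1-t))
      = ∫ t in (0:ℝ)..1, min t (1-t) :=
    intervalIntegral.integral_add_adjacent_intervals
      (hc.intervalIntegrable _ _) (hc.intervalIntegrable _ _)
  have p1 : (∫ t in (0:ℝ)..(1/2), min t (1-t)) = 1/8 := by
    have : (∫ t in (0:ℝ)..(1/2), min t (1-t)) = ∫ t in (0:ℝ)..(1/2), t := by
      apply intervalIntegral.integral_congr
      intro t ht
      rw [uIcc_of_le (by norm_num : (0:ℝ) ≤ 1/2)] at ht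
      exact min_eq_left (by linarith [ht.2])
    rw [this, integral_id]; norm_num
  have p2 : (∫ t in ((1:ℝ)/2)..1, min t (1-t)) = 1/8 := by
    have : (∫ t in ((1:ℝ)/2)..1, min t (1-t)) = ∫ t in ((1:ℝ)/2)..1, (1 + (-1)*t) := by
      apply intervalIntegral.integral_congr
      intro t ht
      rw [uIcc_of_le (by norm_num : (1:ℝ)/2 ≤ 1)] at ht
      show min t (1 - t) = 1 + (-1)*t
      rw [min_eq_right (by linarith [ht.1])]; ring
    rw [this, intervalIntegral.integral_add intervalIntegrable_const
        ((intervalIntegral.intervalIntegrable_id).const_mul (-1)),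
      intervalIntegral.integral_const, intervalIntegral.integral_const_mul, integral_id]
    norm_num
  linarith


lemma quad_aux (L x y : ℝ) (hy : 0 ≤ y) :
    L*y - (max (L-x) 0)^2/4 ≤ y^2 + x*y := by
  rcases le_total L x with hc | hc
  · rw [max_eq_right (by linarith)]
    nlinarith [mul_nonneg (sub_nonneg.2 hc) hy, sq_nonneg y]
  · rw [max_eq_left (by linarith)]
    nlinarith [sq_nonneg (y - (L - x)/2)]

theorem lower_bound_rho_footrule (C : ℝ → ℝ → ℝ) (hC : IsCopula C) :
    2 * Real.sqrt 3 / 9 * (1 + 2 * spearmanFootrule C) ^ ((3:ℝ)/2) - 1 ≤ spearmanRho C := by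
  have huIcc : uIcc (0:ℝ) 1 = Icc (0:ℝ) 1 := uIcc_of_le zero_le_one
  set h : ℝ → ℝ := fun t => C t t - max 0 (2*t - 1) with hhdef
  have hhc : ContinuousOn h (Icc (0:ℝ) 1) := cop_h_cont hC
  have hii_h : IntervalIntegrable h volume 0 1 :=
    ContinuousOn.intervalIntegrable (by rw [huIcc]; exact hhc)
  set e := ∫ t in (0:ℝ)..1, h t with hedef
  have hh_nonneg : ∀ t ∈ Icc (0:ℝ) 1, 0 ≤ h t := by
    intro t ht
    have h1 : 0 ≤ C t t := cop_nonneg hC ht ht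
    have h2 : 2*t - 1 ≤ C t t := by have := cop_lowW hC ht ht; linarith
    simp only [hhdef, sub_nonneg]
    exact max_le h1 h2
  have he0 : 0 ≤ e := intervalIntegral.integral_nonneg zero_le_one hh_nonneg
  have he14 : e ≤ 1/4 := by
    rw [hedef, ← integral_minpart]
    apply intervalIntegral.integral_mono_on zero_le_one hii_h
      (Continuous.intervalIntegrable (by fun_prop) _ _)
    intro t ht
    have hd1 : C t t ≤ t := cop_diag_le hC ht
    rcases le_total t (1/2) with hc | hc
    · rw [min_eq_left (by linarith)]
      simp only [hhdef]
      rw [max_eq_left (by linarith)]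
      linarith
    · rw [min_eq_right (by linarith)]
      simp only [hhdef]
      rw [max_eq_right (by linarith)]
      linarith
  set s := Real.sqrt e with hsdef
  have hse : s^2 = e := Real.sq_sqrt he0
  have hs0 : 0 ≤ s := Real.sqrt_nonneg e
  set L := 2 * s with hLdef
  have hL0 : 0 ≤ L := by positivity
  have hL1 : L ≤ 1 := by nlinarith [sq_nonneg (s - 1/2)]
  have hIq := integral_qmax L hL0 hL1
  -- pointwise quadratic bound
  have hpoint : ∀ t ∈ Icc (0:ℝ) 1,
      L * h t - (max (L - |1-2*t|) 0)^2/4 ≤ (h t)^2 + |1-2*t| * h t := by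
    intro t ht
    exact quad_aux L (|1-2*t|) (h t) (hh_nonneg t ht)
  have habs_c : Continuous (fun t : ℝ => |1 - 2*t|) := by fun_prop
  have hii_hq : IntervalIntegrable (fun t => (h t)^2 + |1-2*t| * h t) volume 0 1 := by
    apply ContinuousOn.intervalIntegrable
    rw [huIcc]
    exact ((hhc.pow 2).add (habs_c.continuousOn.mul hhc))
  have hE6 : L * e - L^3/12 ≤ ∫ t in (0:ℝ)..1, ((h t)^2 + |1-2*t| * h t) := by
    have hii_lhs : IntervalIntegrable (fun t => L * h t - (max (L - |1-2*t|) 0)^2/4) volume 0 1 := by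
      apply ContinuousOn.intervalIntegrable
      rw [huIcc]
      exact (hhc.const_smul L).sub (by fun_prop : Continuous fun t : ℝ => (max (L - |1-2*t|) 0)^2/4).continuousOn
    have hmono := intervalIntegral.integral_mono_on zero_le_one hii_lhs hii_hq hpoint
    have hcomp : (∫ t in (0:ℝ)..1, (L * h t - (max (L - |1-2*t|) 0)^2/4))
        = L * e - (L^3/3)/4 := by
      rw [intervalIntegral.integral_sub ((hii_h.const_mul L))
          (Continuous.intervalIntegrable (by fun_prop) _ _),
        intervalIntegral.integral_const_mul, intervalIntegral.integral_div, hIq]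
    rw [hcomp] at hmono
    linarith
  -- outer bound
  have hdc := cop_diag_cont hC
  have hg2c : ContinuousOn (fun t => (C t t)^2 + (1-2*t)*(C t t) + t^2/2) (Icc (0:ℝ) 1) := by
    apply ContinuousOn.add
    apply ContinuousOn.add (hdc.pow 2)
    · exact (by fun_prop : Continuous fun t : ℝ => 1 - 2*t).continuousOn.mul hdc
    · exact (by fun_prop : Continuous fun t : ℝ => t^2/2).continuousOn
  have houter : (∫ t in (0:ℝ)..1, ((h t)^2 + |1-2*t| * h t)) + 1/6
      ≤ ∫ u in (0:ℝ)..1, ∫ v in (0:ℝ)..1, C u v := by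
    have hg1_ii : IntervalIntegrable (fun u => ∫ v in (0:ℝ)..1, C u v) volume 0 1 :=
      MonotoneOn.intervalIntegrable (by rw [huIcc]; exact outer_mono hC)
    have step := intervalIntegral.integral_mono_on zero_le_one
      (ContinuousOn.intervalIntegrable (by rw [huIcc]; exact hg2c)) hg1_ii
      (fun t ht => inner_bound hC ht)
    have hsplit : (∫ t in (0:ℝ)..1, ((C t t)^2 + (1-2*t)*(C t t) + t^2/2))
        = (∫ t in (0:ℝ)..1, (((h t)^2 + |1-2*t| * h t) + t^2/2)) := by
      apply intervalIntegral.integral_congr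
      intro t ht
      rw [huIcc] at ht
      show (C t t)^2 + (1-2*t)*(C t t) + t^2/2 = ((h t)^2 + |1-2*t| * h t) + t^2/2
      simp only [hhdef]
      rcases le_total t (1/2) with hc | hc
      · rw [max_eq_left (by linarith), abs_of_nonneg (by linarith : (0:ℝ) ≤ 1 - 2*t)]
        ring
      · rw [max_eq_right (by linarith), abs_of_nonpos (by linarith : 1 - 2*t ≤ (0:ℝ))]
        ring
    have hadd : (∫ t in (0:ℝ)..1, (((h t)^2 + |1-2*t| * h t) + t^2/2))
        = (∫ t in (0:ℝ)..1, ((h t)^2 + |1-2*t| * h t)) + ∫ t in (0:ℝ)..1, t^2/2 := by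
      exact intervalIntegral.integral_add hii_hq (Continuous.intervalIntegrable (by fun_prop) _ _)
    have hval : (∫ t in (0:ℝ)..1, t^2/2) = 1/6 := by
      rw [intervalIntegral.integral_div, integral_pow]
      norm_num
    rw [hsplit, hadd, hval] at step
    exact step
  -- combine
  have key : 4/3 * (e * s) + 1/6 ≤ ∫ u in (0:ℝ)..1, ∫ v in (0:ℝ)..1, C u v := by
    have hLcalc : L * e - L^3/12 = 4/3 * (e * s) := by
      have : L^3 = 8 * (s^2 * s) := by rw [hLdef]; ring
      rw [this, hse, hLdef]
      ring
    rw [hLcalc] at hE6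
    linarith
  -- footrule value
  have hd_split : (∫ t in (0:ℝ)..1, C t t) = e + 1/4 := by
    have heq : (∫ t in (0:ℝ)..1, C t t) = ∫ t in (0:ℝ)..1, (h t + max 0 (2*t-1)) := by
      apply intervalIntegral.integral_congr
      intro t ht
      simp only [hhdef]
      ring
    rw [heq, intervalIntegral.integral_add hii_h
      (Continuous.intervalIntegrable (by fun_prop) _ _), integral_pospart, hedef]
  -- final computation
  unfold spearmanRho spearmanFootrule
  rw [hd_split]
  have h12 : 1 + 2*(6*(e+1/4) - 2) = 12*e := by ring
  rw [h12]
  have hrpow : (12*e) ^ ((3:ℝ)/2) = 24 * Real.sqrt 3 * (e * s) := by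
    have h1 : (12*e) ^ ((3:ℝ)/2) = ((12*e) ^ ((1:ℝ)/2))^(3:ℕ) := by
      rw [← Real.rpow_natCast ((12*e) ^ ((1:ℝ)/2)) 3, ← Real.rpow_mul (by positivity)]
      norm_num
    have h2 : (12*e) ^ ((1:ℝ)/2) = Real.sqrt (12*e) := (Real.sqrt_eq_rpow _).symm
    have h3 : Real.sqrt (12*e) = 2 * Real.sqrt 3 * s := by
      rw [hsdef, show (12:ℝ)*e = (2^2*3)*e by ring, Real.sqrt_mul (by positivity) e,
        Real.sqrt_mul (by positivity) 3, Real.sqrt_sq (by norm_num : (0:ℝ) ≤ 2)]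
      try ring
    rw [h1, h2, h3]
    have h4 : (2 * Real.sqrt 3 * s)^(3:ℕ) = 8 * (Real.sqrt 3^2 * Real.sqrt 3) * (s^2 * s) := by
      ring
    rw [h4, Real.sq_sqrt (by norm_num : (0:ℝ) ≤ 3), hse]
    ring
  rw [hrpow]
  have hfin : 2 * Real.sqrt 3 / 9 * (24 * Real.sqrt 3 * (e * s)) = 16 * (e * s) := by
    have h3 : Real.sqrt 3^2 = 3 := Real.sq_sqrt (by norm_num)
    linear_combination ((48:ℝ)/9)*(e*s)*h3
  rw [hfin]
  linarith
end
end

section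
/- For every a ∈ [0, 1/2], the function C_a(u,v) = max{0, u + v − 1, min(u,v) − a} on [0,1]² is a bivariate copula, and it satisfies φ(C_a) = 6a² − 6a + 1 and ρ(C_a) = −16a³ + 24a² − 12a + 1; consequently ρ(C_a) = (2√3/9)·(1 + 2·φ(C_a))^{3/2} − 1, so for every p ∈ [−1/2, 1] the lower bound (2√3/9)·(1+2p)^{3/2} − 1 for ρ given φ = p is attained. -/
open MeasureTheory Set

noncomputable section

/-- The shuffle-of-`M` copula `C_a(u,v) = max {0, u + v - 1, min u v - a}`. -/
def shuffleCa (a : ℝ) : ℝ → ℝ → ℝ := fun u v => max 0 (max (u + v - 1) (min u v - a))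

/- ## Auxiliary lemmas -/

lemma plus_supermod (s₁ s₂ t₁ t₂ : ℝ) (hs : s₁ ≤ s₂) (ht : t₁ ≤ t₂) :
    max 0 (s₂ + t₁) + max 0 (s₁ + t₂) ≤ max 0 (s₂ + t₂) + max 0 (s₁ + t₁) := by
  simp only [max_def]; split_ifs <;> linarith

lemma min_supermod (a b₁ b₂ c₁ c₂ : ℝ) (hb : b₁ ≤ b₂) (hc : c₁ ≤ c₂) :
    max 0 (min b₂ c₁ - a) + max 0 (min b₁ c₂ - a) ≤
      max 0 (min b₂ c₂ - a) + max 0 (min b₁ c₁ - a) := by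
  simp only [max_def, min_def]; split_ifs <;> linarith

set_option maxHeartbeats 2000000 in
lemma rep_le (a u v : ℝ) (ha0 : 0 ≤ a) (ha1 : a ≤ 1/2) (hu0 : 0 ≤ u) (hu1 : u ≤ 1)
    (hv0 : 0 ≤ v) (hv1 : v ≤ 1) (huv : u ≤ v) :
    shuffleCa a u v = max 0 (v + min a u - 1) +
      max 0 (min (min u (1-a)) (min v (1-a)) - a) + max 0 (u + min a v - 1) := by
  unfold shuffleCa
  rw [min_eq_left huv, min_eq_left (min_le_min_right (1-a) huv)]
  simp only [max_def, min_def]; split_ifs <;> linarith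

lemma rep (a u v : ℝ) (ha0 : 0 ≤ a) (ha1 : a ≤ 1/2) (hu0 : 0 ≤ u) (hu1 : u ≤ 1)
    (hv0 : 0 ≤ v) (hv1 : v ≤ 1) :
    shuffleCa a u v = max 0 (v + min a u - 1) +
      max 0 (min (min u (1-a)) (min v (1-a)) - a) + max 0 (u + min a v - 1) := by
  rcases le_total u v with h | h
  · exact rep_le a u v ha0 ha1 hu0 hu1 hv0 hv1 h
  · have h2 := rep_le a v u ha0 ha1 hv0 hv1 hu0 hu1 h
    unfold shuffleCa at h2 ⊢
    rw [min_comm v u, add_comm v u] at h2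
    rw [h2, min_comm (min v (1-a))]
    ring

lemma intq (c2 c1 c0 x y : ℝ) :
    ∫ t in x..y, (c2*t^2 + c1*t + c0) =
      c2*(y^3-x^3)/3 + c1*(y^2-x^2)/2 + c0*(y-x) := by
  have h1 : IntervalIntegrable (fun t : ℝ => c2*t^2) volume x y :=
    (Continuous.intervalIntegrable (by fun_prop) x y)
  have h2 : IntervalIntegrable (fun t : ℝ => c1*t) volume x y :=
    (Continuous.intervalIntegrable (by fun_prop) x y)
  have h3 : IntervalIntegrable (fun t : ℝ => c0) volume x y :=
    intervalIntegrable_const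
  rw [intervalIntegral.integral_add (h1.add h2) h3, intervalIntegral.integral_add h1 h2,
    intervalIntegral.integral_const_mul, intervalIntegral.integral_const_mul,
    _root_.integral_pow, _root_.integral_id, intervalIntegral.integral_const]
  simp only [smul_eq_mul]
  push_cast
  ring

lemma intervalIntegrable_of_eqOn {f g : ℝ → ℝ} {x y : ℝ} (hxy : x ≤ y)
    (hg : IntervalIntegrable g volume x y) (h : EqOn f g (Icc x y)) :
    IntervalIntegrable f volume x y := by
  rw [intervalIntegrable_iff, uIoc_of_le hxy] at hg ⊢
  exact hg.congr_fun (fun t ht => (h (Ioc_subset_Icc_self ht)).symm ▸ rfl) measurableSet_Ioc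

/- ## Inner integrals -/

lemma shuffle_eq_plus (a u v : ℝ) (h : min u v - a ≤ max 0 (u + v - 1)) :
    shuffleCa a u v = max 0 (u + v - 1) := by
  unfold shuffleCa
  rw [← max_assoc, max_eq_left h]

lemma integral_plus (u : ℝ) (hu0 : 0 ≤ u) (hu1 : u ≤ 1) :
    ∫ v in (0:ℝ)..1, max 0 (u + v - 1) = u^2/2 := by
  have key : ∫ v in (0:ℝ)..1, max 0 (u + v - 1) =
      (∫ v in (0:ℝ)..(1-u), max 0 (u + v - 1)) + ∫ v in (1-u)..1, max 0 (u + v - 1) := by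
    rw [intervalIntegral.integral_add_adjacent_intervals] <;>
      exact Continuous.intervalIntegrable (by fun_prop) _ _
  rw [key]
  have e1 : ∫ v in (0:ℝ)..(1-u), max 0 (u + v - 1) = ∫ v in (0:ℝ)..(1-u), (0:ℝ) := by
    apply intervalIntegral.integral_congr
    intro v hv
    rw [uIcc_of_le (by linarith)] at hv
    exact max_eq_left (by obtain ⟨h1, h2⟩ := hv; linarith)
  have e2 : ∫ v in (1-u)..1, max 0 (u + v - 1) =
      ∫ v in (1-u)..1, ((0:ℝ)*v^2 + 1*v + (u-1)) := by
    apply intervalIntegral.integral_congr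
    intro v hv
    rw [uIcc_of_le (by linarith)] at hv
    obtain ⟨h1, h2⟩ := hv
    show max 0 (u + v - 1) = 0*v^2 + 1*v + (u-1)
    rw [max_eq_right (show (0:ℝ) ≤ u + v - 1 by linarith)]
    ring
  rw [e1, e2, intq, intervalIntegral.integral_const]
  simp only [smul_eq_mul]
  ring

lemma inner_A (a u : ℝ) (ha0 : 0 ≤ a) (ha1 : a ≤ 1/2) (hu0 : 0 ≤ u) (hu1 : u ≤ 1)
    (h : u ≤ a ∨ 1 - a ≤ u) :
    ∫ v in (0:ℝ)..1, shuffleCa a u v = u^2/2 := by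
  have e : ∫ v in (0:ℝ)..1, shuffleCa a u v = ∫ v in (0:ℝ)..1, max 0 (u + v - 1) := by
    apply intervalIntegral.integral_congr
    intro v hv
    rw [uIcc_of_le (by norm_num)] at hv
    obtain ⟨hv0, hv1⟩ := hv
    apply shuffle_eq_plus
    rcases h with h | h
    · calc min u v - a ≤ u - a := by
            have := min_le_left u v; linarith
        _ ≤ 0 := by linarith
        _ ≤ _ := le_max_left _ _
    · rcases le_total u v with huv | huv
      · calc min u v - a = u - a := by rw [min_eq_left huv]
          _ ≤ u + v - 1 := by linarith
          _ ≤ _ := le_max_right _ _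
      · calc min u v - a = v - a := by rw [min_eq_right huv]
          _ ≤ u + v - 1 := by linarith
          _ ≤ _ := le_max_right _ _
  rw [e, integral_plus u hu0 hu1]

lemma inner_B (a u : ℝ) (ha0 : 0 ≤ a) (ha1 : a ≤ 1/2) (h1 : a ≤ u) (h2 : u ≤ 1 - a) :
    ∫ v in (0:ℝ)..1, shuffleCa a u v = -u^2/2 + u - a + a^2 := by
  have hu1 : u ≤ 1 := by linarith
  have key : ∫ v in (0:ℝ)..1, shuffleCa a u v =
      ((∫ v in (0:ℝ)..a, shuffleCa a u v) + ∫ v in a..u, shuffleCa a u v) +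
        (∫ v in u..(1-a), shuffleCa a u v) + ∫ v in (1-a)..1, shuffleCa a u v := by
    rw [intervalIntegral.integral_add_adjacent_intervals,
      intervalIntegral.integral_add_adjacent_intervals,
      intervalIntegral.integral_add_adjacent_intervals] <;>
      exact Continuous.intervalIntegrable (by unfold shuffleCa; fun_prop) _ _
  rw [key]
  have e1 : ∫ v in (0:ℝ)..a, shuffleCa a u v = ∫ v in (0:ℝ)..a, (0:ℝ) := by
    apply intervalIntegral.integral_congr
    intro v hv
    rw [uIcc_of_le ha0] at hv
    obtain ⟨hv0, hv1⟩ := hv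
    show shuffleCa a u v = 0
    unfold shuffleCa
    rw [min_eq_right (show v ≤ u by linarith),
      max_eq_right (show u + v - 1 ≤ v - a by linarith),
      max_eq_left (show v - a ≤ 0 by linarith)]
  have e2 : ∫ v in a..u, shuffleCa a u v = ∫ v in a..u, ((0:ℝ)*v^2 + 1*v + (-a)) := by
    apply intervalIntegral.integral_congr
    intro v hv
    rw [uIcc_of_le h1] at hv
    obtain ⟨hv0, hv1⟩ := hv
    show shuffleCa a u v = 0*v^2 + 1*v + (-a)
    unfold shuffleCa
    rw [min_eq_right (show v ≤ u by linarith),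
      max_eq_right (show u + v - 1 ≤ v - a by linarith),
      max_eq_right (show (0:ℝ) ≤ v - a by linarith)]
    ring
  have e3 : ∫ v in u..(1-a), shuffleCa a u v = ∫ v in u..(1-a), (u - a) := by
    apply intervalIntegral.integral_congr
    intro v hv
    rw [uIcc_of_le h2] at hv
    obtain ⟨hv0, hv1⟩ := hv
    show shuffleCa a u v = u - a
    unfold shuffleCa
    rw [min_eq_left (show u ≤ v by linarith),
      max_eq_right (show u + v - 1 ≤ u - a by linarith),
      max_eq_right (show (0:ℝ) ≤ u - a by linarith)]
  have e4 : ∫ v in (1-a)..1, shuffleCa a u v = ∫ v in (1-a)..1, ((0:ℝ)*v^2 + 1*v + (u-1)) := by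
    apply intervalIntegral.integral_congr
    intro v hv
    rw [uIcc_of_le (by linarith)] at hv
    obtain ⟨hv0, hv1⟩ := hv
    show shuffleCa a u v = 0*v^2 + 1*v + (u-1)
    unfold shuffleCa
    rw [min_eq_left (show u ≤ v by linarith),
      max_eq_left (show u - a ≤ u + v - 1 by linarith),
      max_eq_right (show (0:ℝ) ≤ u + v - 1 by linarith)]
    ring
  rw [e1, e2, e3, e4, intq, intq, intervalIntegral.integral_const,
    intervalIntegral.integral_const]
  simp only [smul_eq_mul]
  ring


/- ## Outer integrals -/

lemma diag_integral (a : ℝ) (ha0 : 0 ≤ a) (ha1 : a ≤ 1/2) :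
    ∫ u in (0:ℝ)..1, shuffleCa a u u = a^2 - a + 1/2 := by
  have key : ∫ u in (0:ℝ)..1, shuffleCa a u u =
      ((∫ u in (0:ℝ)..a, shuffleCa a u u) + ∫ u in a..(1-a), shuffleCa a u u) +
        ∫ u in (1-a)..1, shuffleCa a u u := by
    rw [intervalIntegral.integral_add_adjacent_intervals,
      intervalIntegral.integral_add_adjacent_intervals] <;>
      exact Continuous.intervalIntegrable (by unfold shuffleCa; fun_prop) _ _
  rw [key]
  have e1 : ∫ u in (0:ℝ)..a, shuffleCa a u u = ∫ u in (0:ℝ)..a, (0:ℝ) := by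
    apply intervalIntegral.integral_congr
    intro u hu
    rw [uIcc_of_le ha0] at hu
    obtain ⟨h1, h2⟩ := hu
    show shuffleCa a u u = 0
    unfold shuffleCa
    rw [min_self, max_eq_right (show u + u - 1 ≤ u - a by linarith),
      max_eq_left (show u - a ≤ 0 by linarith)]
  have e2 : ∫ u in a..(1-a), shuffleCa a u u = ∫ u in a..(1-a), ((0:ℝ)*u^2 + 1*u + (-a)) := by
    apply intervalIntegral.integral_congr
    intro u hu
    rw [uIcc_of_le (by linarith)] at hu
    obtain ⟨h1, h2⟩ := hu
    show shuffleCa a u u = 0*u^2 + 1*u + (-a)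
    unfold shuffleCa
    rw [min_self, max_eq_right (show u + u - 1 ≤ u - a by linarith),
      max_eq_right (show (0:ℝ) ≤ u - a by linarith)]
    ring
  have e3 : ∫ u in (1-a)..1, shuffleCa a u u = ∫ u in (1-a)..1, ((0:ℝ)*u^2 + 2*u + (-1)) := by
    apply intervalIntegral.integral_congr
    intro u hu
    rw [uIcc_of_le (by linarith)] at hu
    obtain ⟨h1, h2⟩ := hu
    show shuffleCa a u u = 0*u^2 + 2*u + (-1)
    unfold shuffleCa
    rw [min_self, max_eq_left (show u - a ≤ u + u - 1 by linarith),
      max_eq_right (show (0:ℝ) ≤ u + u - 1 by linarith)]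
    ring
  rw [e1, e2, e3, intq, intq, intervalIntegral.integral_const]
  simp only [smul_eq_mul]
  ring

lemma double_integral (a : ℝ) (ha0 : 0 ≤ a) (ha1 : a ≤ 1/2) :
    ∫ u in (0:ℝ)..1, ∫ v in (0:ℝ)..1, shuffleCa a u v = (-4*a^3 + 6*a^2 - 3*a + 1)/3 := by
  set F : ℝ → ℝ := fun u => ∫ v in (0:ℝ)..1, shuffleCa a u v with hF
  have i1 : IntervalIntegrable F volume 0 a := by
    apply intervalIntegrable_of_eqOn ha0
      ((show Continuous (fun u : ℝ => u^2/2) by fun_prop).intervalIntegrable 0 a)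
    intro u hu
    obtain ⟨h1, h2⟩ := hu
    exact inner_A a u ha0 ha1 h1 (by linarith) (Or.inl h2)
  have i2 : IntervalIntegrable F volume a (1-a) := by
    apply intervalIntegrable_of_eqOn (by linarith)
      ((show Continuous (fun u : ℝ => -u^2/2 + u - a + a^2) by fun_prop).intervalIntegrable a (1-a))
    intro u hu
    obtain ⟨h1, h2⟩ := hu
    exact inner_B a u ha0 ha1 h1 h2
  have i3 : IntervalIntegrable F volume (1-a) 1 := by
    apply intervalIntegrable_of_eqOn (by linarith)
      ((show Continuous (fun u : ℝ => u^2/2) by fun_prop).intervalIntegrable (1-a) 1)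
    intro u hu
    obtain ⟨h1, h2⟩ := hu
    exact inner_A a u ha0 ha1 (by linarith) h2 (Or.inr h1)
  have key : ∫ u in (0:ℝ)..1, F u = ((∫ u in (0:ℝ)..a, F u) + ∫ u in a..(1-a), F u) +
      ∫ u in (1-a)..1, F u := by
    rw [intervalIntegral.integral_add_adjacent_intervals i1 i2,
      intervalIntegral.integral_add_adjacent_intervals (i1.trans i2) i3]
  rw [show (∫ u in (0:ℝ)..1, ∫ v in (0:ℝ)..1, shuffleCa a u v) = ∫ u in (0:ℝ)..1, F u from rfl,
    key]
  have e1 : ∫ u in (0:ℝ)..a, F u = ∫ u in (0:ℝ)..a, ((1/2)*u^2 + 0*u + 0) := by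
    apply intervalIntegral.integral_congr
    intro u hu
    rw [uIcc_of_le ha0] at hu
    obtain ⟨h1, h2⟩ := hu
    show (∫ v in (0:ℝ)..1, shuffleCa a u v) = (1/2)*u^2 + 0*u + 0
    rw [inner_A a u ha0 ha1 h1 (by linarith) (Or.inl h2)]
    ring
  have e2 : ∫ u in a..(1-a), F u = ∫ u in a..(1-a), ((-1/2)*u^2 + 1*u + (a^2 - a)) := by
    apply intervalIntegral.integral_congr
    intro u hu
    rw [uIcc_of_le (by linarith)] at hu
    obtain ⟨h1, h2⟩ := hu
    show (∫ v in (0:ℝ)..1, shuffleCa a u v) = (-1/2)*u^2 + 1*u + (a^2 - a)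
    rw [inner_B a u ha0 ha1 h1 h2]
    ring
  have e3 : ∫ u in (1-a)..1, F u = ∫ u in (1-a)..1, ((1/2)*u^2 + 0*u + 0) := by
    apply intervalIntegral.integral_congr
    intro u hu
    rw [uIcc_of_le (by linarith)] at hu
    obtain ⟨h1, h2⟩ := hu
    show (∫ v in (0:ℝ)..1, shuffleCa a u v) = (1/2)*u^2 + 0*u + 0
    rw [inner_A a u ha0 ha1 (by linarith) h2 (Or.inr h1)]
    ring
  rw [e1, e2, e3, intq, intq, intq]
  ring

/- ## The copula property -/

lemma plus2 (m₁ m₂ w₁ w₂ : ℝ) (hm : m₁ ≤ m₂) (hw : w₁ ≤ w₂) :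
    max 0 (w₁ + m₂ - 1) + max 0 (w₂ + m₁ - 1) ≤
      max 0 (w₂ + m₂ - 1) + max 0 (w₁ + m₁ - 1) := by
  simp only [max_def]; split_ifs <;> linarith

lemma isCopula_shuffle (a : ℝ) (ha0 : 0 ≤ a) (ha1 : a ≤ 1/2) : IsCopula (shuffleCa a) := by
  refine ⟨?_, ?_, ?_⟩
  · rintro u ⟨hu0, hu1⟩ v ⟨hv0, hv1⟩
    refine ⟨le_max_left _ _, ?_⟩
    unfold shuffleCa
    refine max_le (by norm_num) (max_le (by linarith) ?_)
    have := min_le_left u v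
    linarith
  · rintro u ⟨hu0, hu1⟩
    unfold shuffleCa
    refine ⟨?_, ?_, ?_, ?_⟩
    · rw [min_eq_right hu0, max_eq_left (max_le (by linarith) (by linarith))]
    · rw [min_eq_left hu0, max_eq_left (max_le (by linarith) (by linarith))]
    · rw [min_eq_left hu1, max_eq_left (show u - a ≤ u + 1 - 1 by linarith),
        show u + 1 - 1 = u by ring, max_eq_right hu0]
    · rw [min_eq_right hu1, max_eq_left (show u - a ≤ 1 + u - 1 by linarith),
        show 1 + u - 1 = u by ring, max_eq_right hu0]
  · intro u₁ u₂ v₁ v₂ h1 h2 h3 h4 h5 h6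
    rw [rep a u₂ v₂ ha0 ha1 (by linarith) h3 (by linarith) h6,
      rep a u₂ v₁ ha0 ha1 (by linarith) h3 h4 (by linarith),
      rep a u₁ v₂ ha0 ha1 h1 (by linarith) (by linarith) h6,
      rep a u₁ v₁ ha0 ha1 h1 (by linarith) h4 (by linarith)]
    have A := plus2 (min a u₁) (min a u₂) v₁ v₂ (min_le_min le_rfl h2) h5
    have B := plus2 (min a v₁) (min a v₂) u₁ u₂ (min_le_min le_rfl h5) h2
    have C := min_supermod a (min u₁ (1-a)) (min u₂ (1-a)) (min v₁ (1-a)) (min v₂ (1-a))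
      (min_le_min h2 le_rfl) (min_le_min h5 le_rfl)
    linarith

/- ## The rpow algebra -/

lemma rpow_eq (a : ℝ) (ha1 : a ≤ 1/2) :
    (3*(1-2*a)^2 : ℝ) ^ ((3:ℝ)/2) = 3 * Real.sqrt 3 * (1-2*a)^3 := by
  have h1 : (0:ℝ) ≤ 3*(1-2*a)^2 := by positivity
  rw [show ((3:ℝ)/2) = (1/2) * ((3:ℕ):ℝ) by norm_num, Real.rpow_mul h1, Real.rpow_natCast,
    ← Real.sqrt_eq_rpow, Real.sqrt_mul (by norm_num) ((1-2*a)^2),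
    Real.sqrt_sq (by linarith)]
  have h3 : Real.sqrt 3 ^ 2 = 3 := Real.sq_sqrt (by norm_num)
  linear_combination (Real.sqrt 3 * (1-2*a)^3) * h3

theorem lower_bound_attained :
    (∀ a ∈ Icc (0:ℝ) (1/2),
      IsCopula (shuffleCa a) ∧
      spearmanFootrule (shuffleCa a) = 6 * a ^ 2 - 6 * a + 1 ∧
      spearmanRho (shuffleCa a) = -16 * a ^ 3 + 24 * a ^ 2 - 12 * a + 1 ∧
      spearmanRho (shuffleCa a) =
        2 * Real.sqrt 3 / 9 * (1 + 2 * spearmanFootrule (shuffleCa a)) ^ ((3:ℝ)/2) - 1) ∧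
    (∀ p ∈ Icc (-(1:ℝ)/2) 1, ∃ C : ℝ → ℝ → ℝ, IsCopula C ∧
      spearmanFootrule C = p ∧
      spearmanRho C = 2 * Real.sqrt 3 / 9 * (1 + 2 * p) ^ ((3:ℝ)/2) - 1) := by
  have main : ∀ a ∈ Icc (0:ℝ) (1/2),
      IsCopula (shuffleCa a) ∧
      spearmanFootrule (shuffleCa a) = 6 * a ^ 2 - 6 * a + 1 ∧
      spearmanRho (shuffleCa a) = -16 * a ^ 3 + 24 * a ^ 2 - 12 * a + 1 ∧
      spearmanRho (shuffleCa a) =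
        2 * Real.sqrt 3 / 9 * (1 + 2 * spearmanFootrule (shuffleCa a)) ^ ((3:ℝ)/2) - 1 := by
    rintro a ⟨ha0, ha1⟩
    have hf : spearmanFootrule (shuffleCa a) = 6 * a ^ 2 - 6 * a + 1 := by
      unfold spearmanFootrule
      rw [diag_integral a ha0 ha1]
      ring
    have hr : spearmanRho (shuffleCa a) = -16 * a ^ 3 + 24 * a ^ 2 - 12 * a + 1 := by
      unfold spearmanRho
      rw [double_integral a ha0 ha1]
      ring
    refine ⟨isCopula_shuffle a ha0 ha1, hf, hr, ?_⟩
    rw [hf, hr, show (1 + 2*(6 * a ^ 2 - 6 * a + 1)) = 3*(1-2*a)^2 by ring, rpow_eq a ha1]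
    have h3 : Real.sqrt 3 ^ 2 = 3 := Real.sq_sqrt (by norm_num)
    linear_combination (-(2/3)*(1-2*a)^3) * h3
  refine ⟨main, ?_⟩
  rintro p ⟨hp0, hp1⟩
  have harg0 : (0:ℝ) ≤ (1+2*p)/3 := by linarith
  set s := Real.sqrt ((1+2*p)/3) with hsdef
  have hs2 : s^2 = (1+2*p)/3 := Real.sq_sqrt harg0
  have hs0 : 0 ≤ s := Real.sqrt_nonneg _
  have hs1 : s ≤ 1 := by
    rw [hsdef]
    exact Real.sqrt_le_one.mpr (by linarith)
  obtain ⟨hcop, hf, hrho, hrel⟩ := main ((1-s)/2) ⟨by linarith, by linarith⟩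
  have hfp : spearmanFootrule (shuffleCa ((1-s)/2)) = p := by
    rw [hf]
    linear_combination (3/2) * hs2
  exact ⟨shuffleCa ((1-s)/2), hcop, hfp, by rw [hrel, hfp]⟩

end
end

section
/- For any bivariate copula C, the function C̃(u,v) = (1/4)·( C(u,v) + C(v,u) + (u + v − 1 + C(1−u,1−v)) + (u + v − 1 + C(1−v,1−u)) ) is a bivariate copula that is doubly symmetric, i.e. C̃(u,v) = C̃(v,u) and C̃(u,v) = u + v − 1 + C̃(1−u,1−v) for all u, v ∈ [0,1], and it satisfies ρ(C̃) = ρ(C) and φ(C̃) = φ(C). -/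
open MeasureTheory Set

noncomputable section

section Aux

variable {C : ℝ → ℝ → ℝ}

lemma cop_mono_right (hC : IsCopula C) {u : ℝ} (hu : u ∈ Icc (0:ℝ) 1) :
    MonotoneOn (C u) (Icc (0:ℝ) 1) := by
  intro v₁ hv₁ v₂ hv₂ h
  have h2 := hC.2.2 0 u v₁ v₂ le_rfl hu.1 hu.2 hv₁.1 h hv₂.2
  have e₁ := (hC.2.1 v₁ hv₁).2.1
  have e₂ := (hC.2.1 v₂ hv₂).2.1
  linarith

lemma cop_mono_left (hC : IsCopula C) {v : ℝ} (hv : v ∈ Icc (0:ℝ) 1) :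
    MonotoneOn (fun u => C u v) (Icc (0:ℝ) 1) := by
  intro u₁ hu₁ u₂ hu₂ h
  have h2 := hC.2.2 u₁ u₂ 0 v hu₁.1 h hu₂.2 le_rfl hv.1 hv.2
  have e₁ := (hC.2.1 u₁ hu₁).1
  have e₂ := (hC.2.1 u₂ hu₂).1
  simp only; linarith

lemma cop_lip_left (hC : IsCopula C) {u₁ u₂ v : ℝ} (hu₁ : u₁ ∈ Icc (0:ℝ) 1)
    (hu₂ : u₂ ∈ Icc (0:ℝ) 1) (hv : v ∈ Icc (0:ℝ) 1) (h : u₁ ≤ u₂) :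
    C u₂ v - C u₁ v ≤ u₂ - u₁ := by
  have h2 := hC.2.2 u₁ u₂ v 1 hu₁.1 h hu₂.2 hv.1 hv.2 le_rfl
  have e₁ := (hC.2.1 u₁ hu₁).2.2.1
  have e₂ := (hC.2.1 u₂ hu₂).2.2.1
  linarith

lemma cop_lip_right (hC : IsCopula C) {u v₁ v₂ : ℝ} (hu : u ∈ Icc (0:ℝ) 1)
    (hv₁ : v₁ ∈ Icc (0:ℝ) 1) (hv₂ : v₂ ∈ Icc (0:ℝ) 1) (h : v₁ ≤ v₂) :
    C u v₂ - C u v₁ ≤ v₂ - v₁ := by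
  have h2 := hC.2.2 u 1 v₁ v₂ hu.1 hu.2 le_rfl hv₁.1 h hv₂.2
  have e₁ := (hC.2.1 v₁ hv₁).2.2.2
  have e₂ := (hC.2.1 v₂ hv₂).2.2.2
  linarith

lemma cop_abs_left (hC : IsCopula C) {u₁ u₂ v : ℝ} (hu₁ : u₁ ∈ Icc (0:ℝ) 1)
    (hu₂ : u₂ ∈ Icc (0:ℝ) 1) (hv : v ∈ Icc (0:ℝ) 1) :
    |C u₁ v - C u₂ v| ≤ |u₁ - u₂| := by
  rcases le_total u₁ u₂ with h | h
  · have := cop_lip_left hC hu₁ hu₂ hv h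
    have := cop_mono_left hC hv hu₁ hu₂ h
    rw [abs_sub_comm, abs_of_nonneg (by simpa using sub_nonneg.2 this), abs_sub_comm,
      abs_of_nonneg (sub_nonneg.2 h)]
    linarith
  · have := cop_lip_left hC hu₂ hu₁ hv h
    have := cop_mono_left hC hv hu₂ hu₁ h
    rw [abs_of_nonneg (by simpa using sub_nonneg.2 this), abs_of_nonneg (sub_nonneg.2 h)]
    linarith

lemma cop_abs_right (hC : IsCopula C) {u v₁ v₂ : ℝ} (hu : u ∈ Icc (0:ℝ) 1)
    (hv₁ : v₁ ∈ Icc (0:ℝ) 1) (hv₂ : v₂ ∈ Icc (0:ℝ) 1) :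
    |C u v₁ - C u v₂| ≤ |v₁ - v₂| := by
  rcases le_total v₁ v₂ with h | h
  · have := cop_lip_right hC hu hv₁ hv₂ h
    have := cop_mono_right hC hu hv₁ hv₂ h
    rw [abs_sub_comm, abs_of_nonneg (by linarith), abs_sub_comm, abs_of_nonneg (sub_nonneg.2 h)]
    linarith
  · have := cop_lip_right hC hu hv₂ hv₁ h
    have := cop_mono_right hC hu hv₂ hv₁ h
    rw [abs_of_nonneg (by linarith), abs_of_nonneg (sub_nonneg.2 h)]
    linarith

lemma cop_contOn (hC : IsCopula C) :
    ContinuousOn (fun p : ℝ × ℝ => C p.1 p.2) (Icc (0:ℝ) 1 ×ˢ Icc (0:ℝ) 1) := by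
  refine (LipschitzOnWith.of_dist_le_mul (K := 2) ?_).continuousOn
  rintro ⟨a, b⟩ ⟨ha, hb⟩ ⟨c, d⟩ ⟨hc, hd⟩
  have h1 : |C a b - C c b| ≤ |a - c| := cop_abs_left hC ha hc hb
  have h2 : |C c b - C c d| ≤ |b - d| := cop_abs_right hC hc hb hd
  have h3 : dist (C a b) (C c d) ≤ |a - c| + |b - d| := by
    rw [Real.dist_eq]
    calc |C a b - C c d| ≤ |C a b - C c b| + |C c b - C c d| := abs_sub_le _ _ _
      _ ≤ |a - c| + |b - d| := add_le_add h1 h2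
  refine h3.trans ?_
  rw [Prod.dist_eq, Real.dist_eq, Real.dist_eq]
  push_cast
  rcases le_total |a - c| |b - d| with h | h
  · rw [sup_eq_right.2 h]; linarith
  · rw [sup_eq_left.2 h]; linarith

lemma cop_ii_right (hC : IsCopula C) {u : ℝ} (hu : u ∈ Icc (0:ℝ) 1) :
    IntervalIntegrable (fun v => C u v) volume 0 1 := by
  apply MonotoneOn.intervalIntegrable
  rw [uIcc_of_le zero_le_one]; exact cop_mono_right hC hu

lemma cop_ii_left (hC : IsCopula C) {v : ℝ} (hv : v ∈ Icc (0:ℝ) 1) :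
    IntervalIntegrable (fun u => C u v) volume 0 1 := by
  apply MonotoneOn.intervalIntegrable
  rw [uIcc_of_le zero_le_one]; exact cop_mono_left hC hv

lemma cop_swap (hC : IsCopula C) :
    ∫ u in (0:ℝ)..1, ∫ v in (0:ℝ)..1, C v u = ∫ u in (0:ℝ)..1, ∫ v in (0:ℝ)..1, C u v := by
  have hcont : ContinuousOn (fun p : ℝ × ℝ => C p.2 p.1) (Icc (0:ℝ) 1 ×ˢ Icc (0:ℝ) 1) :=
    (cop_contOn hC).comp continuous_swap.continuousOn (fun p hp => ⟨hp.2, hp.1⟩)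
  have hint : IntegrableOn (fun p : ℝ × ℝ => C p.2 p.1)
      ((Ioc (0:ℝ) 1) ×ˢ (Ioc (0:ℝ) 1)) (volume.prod volume) := by
    have : IntegrableOn (fun p : ℝ × ℝ => C p.2 p.1)
        ((Icc (0:ℝ) 1) ×ˢ (Icc (0:ℝ) 1)) (volume.prod volume) := by
      exact ContinuousOn.integrableOn_compact (μ := volume.prod volume)
        (isCompact_Icc.prod isCompact_Icc) hcont
    exact this.mono_set (prod_mono Ioc_subset_Icc_self Ioc_subset_Icc_self)
  have hf : Integrable (Function.uncurry fun u v => C v u)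
      ((volume.restrict (Ioc (0:ℝ) 1)).prod (volume.restrict (Ioc (0:ℝ) 1))) := by
    rw [Measure.prod_restrict]
    exact hint
  have := MeasureTheory.integral_integral_swap hf
  simp only [intervalIntegral.integral_of_le zero_le_one]
  exact this

lemma sub01 (f : ℝ → ℝ) : ∫ x in (0:ℝ)..1, f (1 - x) = ∫ x in (0:ℝ)..1, f x := by
  rw [intervalIntegral.integral_comp_sub_left f 1]
  norm_num

lemma ii_split4 {f1 f2 f3 f4 : ℝ → ℝ}
    (h1 : IntervalIntegrable f1 volume 0 1) (h2 : IntervalIntegrable f2 volume 0 1)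
    (h3 : IntervalIntegrable f3 volume 0 1) (h4 : IntervalIntegrable f4 volume 0 1) :
    ∫ x in (0:ℝ)..1, (1/4 : ℝ) * (f1 x + f2 x + f3 x + f4 x) =
      (1/4 : ℝ) * ((∫ x in (0:ℝ)..1, f1 x) + (∫ x in (0:ℝ)..1, f2 x) +
        (∫ x in (0:ℝ)..1, f3 x) + (∫ x in (0:ℝ)..1, f4 x)) := by
  rw [intervalIntegral.integral_const_mul,
    intervalIntegral.integral_add ((h1.add h2).add h3) h4,
    intervalIntegral.integral_add (h1.add h2) h3,
    intervalIntegral.integral_add h1 h2]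

end Aux

theorem symmetrization_is_doubly_symmetric_copula (C : ℝ → ℝ → ℝ) (hC : IsCopula C)
    (Ctilde : ℝ → ℝ → ℝ)
    (hdef : ∀ u v : ℝ, Ctilde u v =
      (1/4) * (C u v + C v u + (u + v - 1 + C (1-u) (1-v)) + (u + v - 1 + C (1-v) (1-u)))) :
    IsCopula Ctilde ∧
    (∀ u ∈ Icc (0:ℝ) 1, ∀ v ∈ Icc (0:ℝ) 1, Ctilde u v = Ctilde v u) ∧
    (∀ u ∈ Icc (0:ℝ) 1, ∀ v ∈ Icc (0:ℝ) 1, Ctilde u v = u + v - 1 + Ctilde (1-u) (1-v)) ∧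
    spearmanRho Ctilde = spearmanRho C ∧
    spearmanFootrule Ctilde = spearmanFootrule C := by
  have h11 : (1:ℝ) ∈ Icc (0:ℝ) 1 := ⟨zero_le_one, le_rfl⟩
  -- IsCopula
  have hcop : IsCopula Ctilde := by
    refine ⟨?_, ?_, ?_⟩
    · intro u hu v hv
      have h1u : (1:ℝ) - u ∈ Icc (0:ℝ) 1 := ⟨by linarith [hu.1, hu.2], by linarith [hu.1]⟩
      have h1v : (1:ℝ) - v ∈ Icc (0:ℝ) 1 := ⟨by linarith [hv.1, hv.2], by linarith [hv.1]⟩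
      have t1 := hC.1 u hu v hv
      have t2 := hC.1 v hv u hu
      have hsl := hC.2.2 (1-u) 1 (1-v) 1 h1u.1 h1u.2 le_rfl h1v.1 h1v.2 le_rfl
      have e11 : C 1 1 = 1 := (hC.2.1 1 h11).2.2.1
      have e1v : C 1 (1-v) = 1 - v := (hC.2.1 (1-v) h1v).2.2.2
      have e1u : C (1-u) 1 = 1 - u := (hC.2.1 (1-u) h1u).2.2.1
      have eu1 : C 1 (1-u) = 1 - u := (hC.2.1 (1-u) h1u).2.2.2
      have ev1 : C (1-v) 1 = 1 - v := (hC.2.1 (1-v) h1v).2.2.1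
      have hsl' := hC.2.2 (1-v) 1 (1-u) 1 h1v.1 h1v.2 le_rfl h1u.1 h1u.2 le_rfl
      have hup : C (1-u) (1-v) ≤ 1 - u := by
        have := cop_mono_right hC h1u h1v h11 h1v.2
        simpa [e1u] using this
      have hup' : C (1-v) (1-u) ≤ 1 - v := by
        have := cop_mono_right hC h1v h1u h11 h1u.2
        simpa [ev1] using this
      rw [hdef]
      constructor
      · have := t1.1; have := t2.1; have := hu.1; have := hv.1; linarith
      · have := t1.2; have := t2.2; have := hu.2; have := hv.2; linarith
    · intro u hu
      have h1u : (1:ℝ) - u ∈ Icc (0:ℝ) 1 := ⟨by linarith [hu.1, hu.2], by linarith [hu.1]⟩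
      have hu0 := hC.2.1 u hu
      have h1uf := hC.2.1 (1-u) h1u
      have e10 : (1:ℝ) - 0 = 1 := by norm_num
      have e11' : (1:ℝ) - 1 = 0 := by norm_num
      refine ⟨?_, ?_, ?_, ?_⟩
      · rw [hdef, e10]
        have := hu0.1; have := hu0.2.1
        have := h1uf.2.2.1; have := h1uf.2.2.2
        linarith
      · rw [hdef, e10]
        have := hu0.1; have := hu0.2.1
        have := h1uf.2.2.1; have := h1uf.2.2.2
        linarith
      · rw [hdef, e11']
        have := hu0.2.2.1; have := hu0.2.2.2
        have := h1uf.1; have := h1uf.2.1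
        linarith
      · rw [hdef, e11']
        have := hu0.2.2.1; have := hu0.2.2.2
        have := h1uf.1; have := h1uf.2.1
        linarith
    · intro u₁ u₂ v₁ v₂ hu₁0 hu12 hu₂1 hv₁0 hv12 hv₂1
      have g1 := hC.2.2 u₁ u₂ v₁ v₂ hu₁0 hu12 hu₂1 hv₁0 hv12 hv₂1
      have g2 := hC.2.2 v₁ v₂ u₁ u₂ hv₁0 hv12 hv₂1 hu₁0 hu12 hu₂1
      have g3 := hC.2.2 (1-u₂) (1-u₁) (1-v₂) (1-v₁) (by linarith) (by linarith) (by linarith)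
        (by linarith) (by linarith) (by linarith)
      have g4 := hC.2.2 (1-v₂) (1-v₁) (1-u₂) (1-u₁) (by linarith) (by linarith) (by linarith)
        (by linarith) (by linarith) (by linarith)
      rw [hdef u₂ v₂, hdef u₂ v₁, hdef u₁ v₂, hdef u₁ v₁]
      linarith
  refine ⟨hcop, ?_, ?_, ?_, ?_⟩
  · intro u _ v _
    rw [hdef u v, hdef v u]; ring
  · intro u _ v _
    rw [hdef u v, hdef (1-u) (1-v), show (1:ℝ) - (1-u) = u from by ring,
      show (1:ℝ) - (1-v) = v from by ring]
    ring
  · -- Spearman's rho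
    have key : (∫ u in (0:ℝ)..1, ∫ v in (0:ℝ)..1, Ctilde u v)
        = ∫ u in (0:ℝ)..1, ∫ v in (0:ℝ)..1, C u v := by
      set F : ℝ → ℝ := fun u => ∫ v in (0:ℝ)..1, C u v with hF
      set G : ℝ → ℝ := fun u => ∫ v in (0:ℝ)..1, C v u with hG
      have hFmono : MonotoneOn F (Icc (0:ℝ) 1) := by
        intro u₁ h₁ u₂ h₂ h
        exact intervalIntegral.integral_mono_on zero_le_one (cop_ii_right hC h₁)
          (cop_ii_right hC h₂) (fun v hv => cop_mono_left hC hv h₁ h₂ h)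
      have hGmono : MonotoneOn G (Icc (0:ℝ) 1) := by
        intro u₁ h₁ u₂ h₂ h
        exact intervalIntegral.integral_mono_on zero_le_one (cop_ii_left hC h₁)
          (cop_ii_left hC h₂) (fun v hv => cop_mono_right hC hv h₁ h₂ h)
      have inner : ∀ u ∈ Icc (0:ℝ) 1,
          (∫ v in (0:ℝ)..1, Ctilde u v)
            = (1/4 : ℝ) * (F u + G u + (u - 1/2 + F (1-u)) + (u - 1/2 + G (1-u))) := by
        intro u hu
        have h1u : (1:ℝ) - u ∈ Icc (0:ℝ) 1 := ⟨by linarith [hu.1, hu.2], by linarith [hu.1]⟩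
        have i1 : IntervalIntegrable (fun v => C u v) volume 0 1 := cop_ii_right hC hu
        have i2 : IntervalIntegrable (fun v => C v u) volume 0 1 := cop_ii_left hC hu
        have ia3 : IntervalIntegrable (fun v => C (1-u) (1-v)) volume 0 1 := by
          apply AntitoneOn.intervalIntegrable
          rw [uIcc_of_le zero_le_one]
          intro v₁ h₁ v₂ h₂ h
          exact cop_mono_right hC h1u ⟨by linarith [h₂.1, h₂.2], by linarith [h₂.1]⟩
            ⟨by linarith [h₁.1, h₁.2], by linarith [h₁.1]⟩ (by linarith)
        have ia4 : IntervalIntegrable (fun v => C (1-v) (1-u)) volume 0 1 := by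
          apply AntitoneOn.intervalIntegrable
          rw [uIcc_of_le zero_le_one]
          intro v₁ h₁ v₂ h₂ h
          exact cop_mono_left hC h1u ⟨by linarith [h₂.1, h₂.2], by linarith [h₂.1]⟩
            ⟨by linarith [h₁.1, h₁.2], by linarith [h₁.1]⟩ (by linarith)
        have ilin : IntervalIntegrable (fun v : ℝ => u + v - 1) volume 0 1 :=
          Continuous.intervalIntegrable (by continuity) _ _
        have i3 : IntervalIntegrable (fun v => u + v - 1 + C (1-u) (1-v)) volume 0 1 :=
          ilin.add ia3
        have i4 : IntervalIntegrable (fun v => u + v - 1 + C (1-v) (1-u)) volume 0 1 :=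
          ilin.add ia4
        have elin : (∫ v in (0:ℝ)..1, (u + v - 1)) = u - 1/2 := by
          rw [show (fun v : ℝ => u + v - 1) = (fun v : ℝ => v + (u - 1)) from by
            funext v; ring]
          rw [intervalIntegral.integral_add (Continuous.intervalIntegrable (by continuity) _ _)
            intervalIntegrable_const, integral_id, intervalIntegral.integral_const]
          norm_num
          ring
        have e3 : (∫ v in (0:ℝ)..1, (u + v - 1 + C (1-u) (1-v))) = u - 1/2 + F (1-u) := by
          rw [intervalIntegral.integral_add ilin ia3, elin, sub01 (fun w => C (1-u) w)]
        have e4 : (∫ v in (0:ℝ)..1, (u + v - 1 + C (1-v) (1-u))) = u - 1/2 + G (1-u) := by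
          rw [intervalIntegral.integral_add ilin ia4, elin, sub01 (fun w => C w (1-u))]
        calc (∫ v in (0:ℝ)..1, Ctilde u v)
            = ∫ v in (0:ℝ)..1, (1/4 : ℝ) * (C u v + C v u + (u + v - 1 + C (1-u) (1-v))
              + (u + v - 1 + C (1-v) (1-u))) := by
              apply intervalIntegral.integral_congr
              intro v _
              exact hdef u v
          _ = (1/4 : ℝ) * ((∫ v in (0:ℝ)..1, C u v) + (∫ v in (0:ℝ)..1, C v u)
              + (∫ v in (0:ℝ)..1, (u + v - 1 + C (1-u) (1-v)))
              + (∫ v in (0:ℝ)..1, (u + v - 1 + C (1-v) (1-u)))) := ii_split4 i1 i2 i3 i4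
          _ = (1/4 : ℝ) * (F u + G u + (u - 1/2 + F (1-u)) + (u - 1/2 + G (1-u))) := by
              rw [e3, e4]
      have jF : IntervalIntegrable F volume 0 1 := by
        apply MonotoneOn.intervalIntegrable
        rw [uIcc_of_le zero_le_one]; exact hFmono
      have jG : IntervalIntegrable G volume 0 1 := by
        apply MonotoneOn.intervalIntegrable
        rw [uIcc_of_le zero_le_one]; exact hGmono
      have jF' : IntervalIntegrable (fun u => F (1-u)) volume 0 1 := by
        apply AntitoneOn.intervalIntegrable
        rw [uIcc_of_le zero_le_one]
        intro u₁ h₁ u₂ h₂ h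
        exact hFmono ⟨by linarith [h₂.1, h₂.2], by linarith [h₂.1]⟩
          ⟨by linarith [h₁.1, h₁.2], by linarith [h₁.1]⟩ (by linarith)
      have jG' : IntervalIntegrable (fun u => G (1-u)) volume 0 1 := by
        apply AntitoneOn.intervalIntegrable
        rw [uIcc_of_le zero_le_one]
        intro u₁ h₁ u₂ h₂ h
        exact hGmono ⟨by linarith [h₂.1, h₂.2], by linarith [h₂.1]⟩
          ⟨by linarith [h₁.1, h₁.2], by linarith [h₁.1]⟩ (by linarith)
      have jlin : IntervalIntegrable (fun u : ℝ => u - 1/2) volume 0 1 :=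
        Continuous.intervalIntegrable (by continuity) _ _
      have elin2 : (∫ u in (0:ℝ)..1, (u - 1/2 : ℝ)) = 0 := by
        rw [intervalIntegral.integral_sub (Continuous.intervalIntegrable (by continuity) _ _)
          intervalIntegrable_const, integral_id, intervalIntegral.integral_const]
        norm_num
      calc (∫ u in (0:ℝ)..1, ∫ v in (0:ℝ)..1, Ctilde u v)
          = ∫ u in (0:ℝ)..1, (1/4 : ℝ) * (F u + G u + (u - 1/2 + F (1-u))
            + (u - 1/2 + G (1-u))) := by
            apply intervalIntegral.integral_congr
            intro u hu
            rw [uIcc_of_le zero_le_one] at hu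
            exact inner u hu
        _ = (1/4 : ℝ) * ((∫ u in (0:ℝ)..1, F u) + (∫ u in (0:ℝ)..1, G u)
            + (∫ u in (0:ℝ)..1, (u - 1/2 + F (1-u)))
            + (∫ u in (0:ℝ)..1, (u - 1/2 + G (1-u)))) :=
            ii_split4 jF jG (jlin.add jF') (jlin.add jG')
        _ = (1/4 : ℝ) * ((∫ u in (0:ℝ)..1, F u) + (∫ u in (0:ℝ)..1, G u)
            + (0 + ∫ u in (0:ℝ)..1, F u) + (0 + ∫ u in (0:ℝ)..1, G u)) := by
            rw [intervalIntegral.integral_add jlin jF', intervalIntegral.integral_add jlin jG',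
              elin2, sub01 F, sub01 G]
        _ = ∫ u in (0:ℝ)..1, ∫ v in (0:ℝ)..1, C u v := by
            have := cop_swap hC
            simp only [hF, hG] at *
            linarith [this]
    simp only [spearmanRho, key]
  · -- Spearman's footrule
    have hdiagmono : MonotoneOn (fun u => C u u) (Icc (0:ℝ) 1) := by
      intro u₁ h₁ u₂ h₂ h
      have a1 := cop_mono_left hC h₁ h₁ h₂ h
      have a2 := cop_mono_right hC h₂ h₁ h₂ h
      simp only at a1 a2 ⊢
      linarith
    have id1 : IntervalIntegrable (fun u => C u u) volume 0 1 := by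
      apply MonotoneOn.intervalIntegrable
      rw [uIcc_of_le zero_le_one]; exact hdiagmono
    have id2 : IntervalIntegrable (fun u => C (1-u) (1-u)) volume 0 1 := by
      apply AntitoneOn.intervalIntegrable
      rw [uIcc_of_le zero_le_one]
      intro u₁ h₁ u₂ h₂ h
      exact hdiagmono ⟨by linarith [h₂.1, h₂.2], by linarith [h₂.1]⟩
        ⟨by linarith [h₁.1, h₁.2], by linarith [h₁.1]⟩ (by linarith)
    have ilin : IntervalIntegrable (fun u : ℝ => u + u - 1) volume 0 1 :=
      Continuous.intervalIntegrable (by continuity) _ _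
    have elin : (∫ u in (0:ℝ)..1, (u + u - 1 : ℝ)) = 0 := by
      rw [show (fun u : ℝ => u + u - 1) = (fun u : ℝ => 2 * u - 1) from by funext u; ring,
        intervalIntegral.integral_sub (Continuous.intervalIntegrable (by continuity) _ _)
        intervalIntegrable_const, intervalIntegral.integral_const_mul, integral_id,
        intervalIntegral.integral_const]
      norm_num
    have i3 : IntervalIntegrable (fun u : ℝ => u + u - 1 + C (1-u) (1-u)) volume 0 1 :=
      ilin.add id2
    have key : (∫ u in (0:ℝ)..1, Ctilde u u) = ∫ u in (0:ℝ)..1, C u u := by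
      calc (∫ u in (0:ℝ)..1, Ctilde u u)
          = ∫ u in (0:ℝ)..1, (1/4 : ℝ) * (C u u + C u u + (u + u - 1 + C (1-u) (1-u))
            + (u + u - 1 + C (1-u) (1-u))) := by
            apply intervalIntegral.integral_congr
            intro u _
            exact hdef u u
        _ = (1/4 : ℝ) * ((∫ u in (0:ℝ)..1, C u u) + (∫ u in (0:ℝ)..1, C u u)
            + (∫ u in (0:ℝ)..1, (u + u - 1 + C (1-u) (1-u)))
            + (∫ u in (0:ℝ)..1, (u + u - 1 + C (1-u) (1-u)))) := ii_split4 id1 id1 i3 i3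
        _ = ∫ u in (0:ℝ)..1, C u u := by
            rw [intervalIntegral.integral_add ilin id2, elin,
              sub01 (fun w => C w w)]
            ring
    simp only [spearmanFootrule, key]
end
end

section
/- For every positive integer n there exists a bivariate copula C such that φ(C) = 1 − 3/(2n) and ρ(C) = 1 − 3/(2n²); in particular ρ(C) = 1 − (2/3)·(1 − φ(C))², so the upper bound for ρ given φ is attained at the values φ = 1 − 3/(2n). -/
open MeasureTheory Set

noncomputable section

namespace CopulaAttain

open intervalIntegral

/-! ### Auxiliary sum lemmas -/

lemma sum_linear (c₁ c₂ : ℝ) (n : ℕ) :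
    ∑ k ∈ Finset.range n, (c₁ + c₂ * (k:ℝ)) = n * c₁ + c₂ * (n * (n-1)) / 2 := by
  induction n with
  | zero => simp
  | succ m ih => rw [Finset.sum_range_succ, ih]; push_cast; ring

lemma sum_quad (c₀ c₁ c₂ : ℝ) (n : ℕ) :
    ∑ k ∈ Finset.range n, (c₀ + c₁ * (k:ℝ) + c₂ * (k:ℝ)^2)
      = n * c₀ + c₁ * (n * (n-1)) / 2 + c₂ * (n * (n-1) * (2*n-1)) / 6 := by
  induction n with
  | zero => simp
  | succ m ih => rw [Finset.sum_range_succ, ih]; push_cast; ring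

/-! ### Basic clamp integrals -/

lemma int_clamp (c h : ℝ) (hh : 0 ≤ h) (hc : 0 ≤ c) (hch : c + h ≤ 1) :
    ∫ u in (0:ℝ)..1, max 0 (min (u - c) h) = h^2/2 + h*(1-c-h) := by
  have cont : Continuous fun u : ℝ => max 0 (min (u - c) h) := by fun_prop
  have i1 : IntervalIntegrable (fun u : ℝ => max 0 (min (u - c) h)) volume 0 c :=
    cont.intervalIntegrable _ _
  have i2 : IntervalIntegrable (fun u : ℝ => max 0 (min (u - c) h)) volume c (c+h) :=
    cont.intervalIntegrable _ _
  have i3 : IntervalIntegrable (fun u : ℝ => max 0 (min (u - c) h)) volume (c+h) 1 :=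
    cont.intervalIntegrable _ _
  rw [← integral_add_adjacent_intervals i1 (i2.trans i3),
      ← integral_add_adjacent_intervals i2 i3]
  have e1 : ∫ u in (0:ℝ)..c, max 0 (min (u - c) h) = 0 := by
    have heq : EqOn (fun u : ℝ => max 0 (min (u - c) h)) (fun _ => (0:ℝ)) (Set.uIcc 0 c) := by
      intro u hu
      rw [Set.uIcc_of_le hc] at hu
      exact max_eq_left (le_trans (min_le_left _ _) (by linarith [hu.2]))
    rw [integral_congr heq, intervalIntegral.integral_zero]
  have e2 : ∫ u in c..(c+h), max 0 (min (u - c) h) = h^2/2 := by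
    have heq : EqOn (fun u : ℝ => max 0 (min (u - c) h)) (fun u => u - c) (Set.uIcc c (c+h)) := by
      intro u hu
      rw [Set.uIcc_of_le (by linarith)] at hu
      show max 0 (min (u - c) h) = u - c
      rw [min_eq_left (by linarith [hu.2]), max_eq_right (by linarith [hu.1])]
    rw [integral_congr heq, integral_comp_sub_right (fun x => x) c]
    simp
  have e3 : ∫ u in (c+h)..1, max 0 (min (u - c) h) = h * (1 - c - h) := by
    have heq : EqOn (fun u : ℝ => max 0 (min (u - c) h)) (fun _ => h) (Set.uIcc (c+h) 1) := by
      intro u hu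
      rw [Set.uIcc_of_le (by linarith)] at hu
      show max 0 (min (u - c) h) = h
      rw [min_eq_right (by linarith [hu.1]), max_eq_right hh]
    rw [integral_congr heq, intervalIntegral.integral_const, smul_eq_mul]
    ring
  rw [e1, e2, e3]; ring

lemma int_clamp_sq (c h : ℝ) (hh : 0 ≤ h) (hc : 0 ≤ c) (hch : c + h ≤ 1) :
    ∫ u in (0:ℝ)..1, (max 0 (min (u - c) h))^2 = h^3/3 + h^2*(1-c-h) := by
  have cont : Continuous fun u : ℝ => (max 0 (min (u - c) h))^2 := by fun_prop
  have i1 : IntervalIntegrable (fun u : ℝ => (max 0 (min (u - c) h))^2) volume 0 c :=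
    cont.intervalIntegrable _ _
  have i2 : IntervalIntegrable (fun u : ℝ => (max 0 (min (u - c) h))^2) volume c (c+h) :=
    cont.intervalIntegrable _ _
  have i3 : IntervalIntegrable (fun u : ℝ => (max 0 (min (u - c) h))^2) volume (c+h) 1 :=
    cont.intervalIntegrable _ _
  rw [← integral_add_adjacent_intervals i1 (i2.trans i3),
      ← integral_add_adjacent_intervals i2 i3]
  have e1 : ∫ u in (0:ℝ)..c, (max 0 (min (u - c) h))^2 = 0 := by
    have heq : EqOn (fun u : ℝ => (max 0 (min (u - c) h))^2) (fun _ => (0:ℝ)) (Set.uIcc 0 c) := by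
      intro u hu
      rw [Set.uIcc_of_le hc] at hu
      show (max 0 (min (u - c) h))^2 = 0
      rw [max_eq_left (le_trans (min_le_left _ _) (by linarith [hu.2]))]
      norm_num
    rw [integral_congr heq, intervalIntegral.integral_zero]
  have e2 : ∫ u in c..(c+h), (max 0 (min (u - c) h))^2 = h^3/3 := by
    have heq : EqOn (fun u : ℝ => (max 0 (min (u - c) h))^2) (fun u => (u - c)^2)
        (Set.uIcc c (c+h)) := by
      intro u hu
      rw [Set.uIcc_of_le (by linarith)] at hu
      show (max 0 (min (u - c) h))^2 = (u - c)^2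
      rw [min_eq_left (by linarith [hu.2]), max_eq_right (by linarith [hu.1])]
    rw [integral_congr heq, integral_comp_sub_right (fun x => x^2) c]
    simp [integral_pow]
    ring
  have e3 : ∫ u in (c+h)..1, (max 0 (min (u - c) h))^2 = h^2 * (1 - c - h) := by
    have heq : EqOn (fun u : ℝ => (max 0 (min (u - c) h))^2) (fun _ => h^2)
        (Set.uIcc (c+h) 1) := by
      intro u hu
      rw [Set.uIcc_of_le (by linarith)] at hu
      show (max 0 (min (u - c) h))^2 = h^2
      rw [min_eq_right (by linarith [hu.1]), max_eq_right hh]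
    rw [integral_congr heq, intervalIntegral.integral_const, smul_eq_mul]
    ring
  rw [e1, e2, e3]; ring

/-! ### The segment mass function -/

/-- Mass below `(u,v)` of a unit-slope diagonal segment starting at `(a,b)` of length `h`. -/
def seg (a b h u v : ℝ) : ℝ := max 0 (min (min (u - a) (v - b)) h)

lemma seg_nonneg (a b h u v : ℝ) : 0 ≤ seg a b h u v := le_max_left _ _

lemma seg_cont_v (a b h u : ℝ) : Continuous fun v => seg a b h u v := by
  unfold seg; fun_prop

lemma seg_rect (a b h : ℝ) {u₁ u₂ v₁ v₂ : ℝ} (hu : u₁ ≤ u₂) (hv : v₁ ≤ v₂) :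
    seg a b h u₂ v₁ + seg a b h u₁ v₂ ≤ seg a b h u₁ v₁ + seg a b h u₂ v₂ := by
  unfold seg
  rcases le_total (u₁ - a) (v₁ - b) with hc | hc
  · have e : min (u₁-a) (v₁-b) = min (u₁-a) (v₂-b) := by
      rw [min_eq_left hc, min_eq_left (by linarith)]
    have mono : max 0 (min (min (u₂-a) (v₁-b)) h) ≤ max 0 (min (min (u₂-a) (v₂-b)) h) := by
      gcongr
    rw [e]; linarith
  · have e : min (u₁-a) (v₁-b) = min (u₂-a) (v₁-b) := by
      rw [min_eq_right hc, min_eq_right (by linarith)]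
    have mono : max 0 (min (min (u₁-a) (v₂-b)) h) ≤ max 0 (min (min (u₂-a) (v₂-b)) h) := by
      gcongr
    rw [e]; linarith

lemma seg_v_zero (a b h u : ℝ) (hb : 0 ≤ b) : seg a b h u 0 = 0 := by
  unfold seg
  exact max_eq_left (le_trans (min_le_left _ _) (le_trans (min_le_right _ _) (by linarith)))

lemma seg_u_zero (a b h v : ℝ) (ha : 0 ≤ a) : seg a b h 0 v = 0 := by
  unfold seg
  exact max_eq_left (le_trans (min_le_left _ _) (le_trans (min_le_left _ _) (by linarith)))

lemma seg_v_one (a b h u : ℝ) (hbh : b + h ≤ 1) : seg a b h u 1 = max 0 (min (u - a) h) := by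
  unfold seg
  rw [min_right_comm, min_eq_left (le_trans (min_le_right _ _) (by linarith))]

lemma seg_u_one (a b h v : ℝ) (hah : a + h ≤ 1) : seg a b h 1 v = max 0 (min (v - b) h) := by
  unfold seg
  rw [min_assoc, min_eq_right (le_trans (min_le_right _ _) (by linarith))]

lemma seg_mono_v (a b h u : ℝ) {v₁ v₂ : ℝ} (hv : v₁ ≤ v₂) :
    seg a b h u v₁ ≤ seg a b h u v₂ := by
  unfold seg; gcongr

/-! ### One clamp step and the telescoping sum -/

lemma clamp_step (u A h : ℝ) (hh : 0 ≤ h) :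
    min u A + max 0 (min (u - A) h) = min u (A + h) := by
  rcases le_total u A with h1 | h1
  · rw [min_eq_left h1, max_eq_left (le_trans (min_le_left _ _) (by linarith)),
      min_eq_left (by linarith)]
    ring
  · rcases le_total u (A+h) with h2 | h2
    · rw [min_eq_right h1, min_eq_left (by linarith), max_eq_right (by linarith),
        min_eq_left h2]
      ring
    · rw [min_eq_right h1, min_eq_right (by linarith), max_eq_right hh, min_eq_right h2]

lemma sum_pairs (h : ℝ) (hh : 0 ≤ h) (m : ℕ) (u : ℝ) (hu : 0 ≤ u) :
    ∑ k ∈ Finset.range m,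
      (max 0 (min (u - 2*(k:ℝ)*h) h) + max 0 (min (u - (2*(k:ℝ)+1)*h) h))
      = min u (2*(m:ℝ)*h) := by
  induction m with
  | zero => simp [min_eq_right hu]
  | succ p ih =>
      rw [Finset.sum_range_succ, ih, ← add_assoc]
      have e1 : (2*((p:ℝ))+1)*h = 2*(p:ℝ)*h + h := by ring
      rw [e1, clamp_step u (2*(p:ℝ)*h) h hh, clamp_step u (2*(p:ℝ)*h + h) h hh]
      congr 1
      push_cast
      ring

/-! ### Inner and outer integrals of a segment term -/

lemma int_inner (u a b h : ℝ) (hb : 0 ≤ b) (hbh : b + h ≤ 1) :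
    ∫ v in (0:ℝ)..1, seg a b h u v
      = max 0 (min (u-a) h) * (1-b) - (max 0 (min (u-a) h))^2 / 2 := by
  unfold seg
  have key : ∀ v : ℝ, min (min (u-a) (v-b)) h = min (min (u-a) h) (v-b) := fun v =>
    min_right_comm _ _ _
  simp only [key]
  set s := min (u-a) h with hs
  have hsh : s ≤ h := min_le_right _ _
  rcases le_total s 0 with h0 | h0
  · have heq : EqOn (fun v : ℝ => max 0 (min s (v-b))) (fun _ => (0:ℝ)) (Set.uIcc 0 1) :=
      fun v _ => max_eq_left (le_trans (min_le_left _ _) h0)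
    rw [integral_congr heq, intervalIntegral.integral_zero, max_eq_left h0]
    ring
  · have hsb : b + s ≤ 1 := by linarith
    have cont : Continuous fun v : ℝ => max 0 (min s (v-b)) := by fun_prop
    have i1 : IntervalIntegrable (fun v : ℝ => max 0 (min s (v-b))) volume 0 b :=
      cont.intervalIntegrable _ _
    have i2 : IntervalIntegrable (fun v : ℝ => max 0 (min s (v-b))) volume b (b+s) :=
      cont.intervalIntegrable _ _
    have i3 : IntervalIntegrable (fun v : ℝ => max 0 (min s (v-b))) volume (b+s) 1 :=
      cont.intervalIntegrable _ _
    rw [← integral_add_adjacent_intervals i1 (i2.trans i3),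
        ← integral_add_adjacent_intervals i2 i3]
    have e1 : ∫ v in (0:ℝ)..b, max 0 (min s (v-b)) = 0 := by
      have heq : EqOn (fun v : ℝ => max 0 (min s (v-b))) (fun _ => (0:ℝ)) (Set.uIcc 0 b) := by
        intro v hv
        rw [Set.uIcc_of_le hb] at hv
        exact max_eq_left (le_trans (min_le_right _ _) (by linarith [hv.2]))
      rw [integral_congr heq, intervalIntegral.integral_zero]
    have e2 : ∫ v in b..(b+s), max 0 (min s (v-b)) = s^2/2 := by
      have heq : EqOn (fun v : ℝ => max 0 (min s (v-b))) (fun v => v - b) (Set.uIcc b (b+s)) := by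
        intro v hv
        rw [Set.uIcc_of_le (by linarith)] at hv
        show max 0 (min s (v-b)) = v - b
        rw [min_eq_right (by linarith [hv.2]), max_eq_right (by linarith [hv.1])]
      rw [integral_congr heq, integral_comp_sub_right (fun x => x) b]
      simp
    have e3 : ∫ v in (b+s)..1, max 0 (min s (v-b)) = s * (1 - b - s) := by
      have heq : EqOn (fun v : ℝ => max 0 (min s (v-b))) (fun _ => s) (Set.uIcc (b+s) 1) := by
        intro v hv
        rw [Set.uIcc_of_le (by linarith)] at hv
        show max 0 (min s (v-b)) = s
        rw [min_eq_left (by linarith [hv.1]), max_eq_right h0]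
      rw [integral_congr heq, intervalIntegral.integral_const, smul_eq_mul]
      ring
    rw [e1, e2, e3, max_eq_right h0]
    ring

lemma int_outer (a b h : ℝ) (hh : 0 ≤ h) (ha : 0 ≤ a) (hah : a + h ≤ 1) :
    ∫ u in (0:ℝ)..1, (max 0 (min (u-a) h) * (1-b) - (max 0 (min (u-a) h))^2 / 2)
      = (h^2/2 + h*(1-a-h))*(1-b) - (h^3/3 + h^2*(1-a-h))/2 := by
  have c1 : Continuous fun u : ℝ => max 0 (min (u-a) h) := by fun_prop
  rw [integral_sub (Continuous.intervalIntegrable (by fun_prop) _ _)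
      (Continuous.intervalIntegrable (by fun_prop) _ _),
    intervalIntegral.integral_mul_const, intervalIntegral.integral_div, int_clamp a h hh ha hah, int_clamp_sq a h hh ha hah]

/-! ### The copula -/

/-- Ordinal sum of `n` shifted shuffles of `M`. -/
def Cg (n : ℕ) (h : ℝ) (u v : ℝ) : ℝ :=
  ∑ k ∈ Finset.range n,
    (seg (2*(k:ℝ)*h) ((2*(k:ℝ)+1)*h) h u v + seg ((2*(k:ℝ)+1)*h) (2*(k:ℝ)*h) h u v)

end CopulaAttain

theorem upper_bound_attained_at_special_values (n : ℕ) (hn : 0 < n) :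
    ∃ C : ℝ → ℝ → ℝ, IsCopula C ∧
      spearmanFootrule C = 1 - 3 / (2 * (n:ℝ)) ∧
      spearmanRho C = 1 - 3 / (2 * (n:ℝ)^2) ∧
      spearmanRho C = 1 - 2/3 * (1 - spearmanFootrule C) ^ 2 := by
  open CopulaAttain in
  have hn0 : (0:ℝ) < n := by exact_mod_cast hn
  have hnne : (n:ℝ) ≠ 0 := ne_of_gt hn0
  set h : ℝ := (2*(n:ℝ))⁻¹ with hdef
  have hhp : 0 < h := by positivity
  have h2n : 2*(n:ℝ)*h = 1 := by rw [hdef]; field_simp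
  have hk1 : ∀ k : ℕ, k ∈ Finset.range n → (2*(k:ℝ)+2)*h ≤ 1 := by
    intro k hk
    have hkn : (k:ℝ)+1 ≤ (n:ℝ) := by
      have := Finset.mem_range.mp hk
      exact_mod_cast Nat.succ_le_of_lt this
    calc (2*(k:ℝ)+2)*h ≤ 2*(n:ℝ)*h := by
          apply mul_le_mul_of_nonneg_right _ hhp.le
          linarith
      _ = 1 := h2n
  -- boundary values
  have hCv0 : ∀ u : ℝ, Cg n h u 0 = 0 := by
    intro u
    unfold Cg
    refine Finset.sum_eq_zero fun k _ => ?_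
    rw [seg_v_zero _ _ _ _ (by positivity), seg_v_zero _ _ _ _ (by positivity)]
    ring
  have hCu0 : ∀ v : ℝ, Cg n h 0 v = 0 := by
    intro v
    unfold Cg
    refine Finset.sum_eq_zero fun k _ => ?_
    rw [seg_u_zero _ _ _ _ (by positivity), seg_u_zero _ _ _ _ (by positivity)]
    ring
  have hCv1 : ∀ u : ℝ, 0 ≤ u → u ≤ 1 → Cg n h u 1 = u := by
    intro u hu0 hu1
    unfold Cg
    rw [Finset.sum_congr rfl (fun k hk => ?_), sum_pairs h hhp.le n u hu0, h2n,
      min_eq_left hu1]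
    rw [seg_v_one _ _ _ _ (by linarith [hk1 k hk, hhp.le]),
      seg_v_one _ _ _ _ (by linarith [hk1 k hk, hhp.le])]
  have hCu1 : ∀ v : ℝ, 0 ≤ v → v ≤ 1 → Cg n h 1 v = v := by
    intro v hv0 hv1
    unfold Cg
    rw [Finset.sum_congr rfl (fun k hk => ?_), sum_pairs h hhp.le n v hv0, h2n,
      min_eq_left hv1]
    rw [seg_u_one _ _ _ _ (by linarith [hk1 k hk, hhp.le]),
      seg_u_one _ _ _ _ (by linarith [hk1 k hk, hhp.le])]
    exact add_comm _ _
  have hNN : ∀ u v : ℝ, 0 ≤ Cg n h u v := fun u v =>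
    Finset.sum_nonneg fun k _ => add_nonneg (seg_nonneg _ _ _ _ _) (seg_nonneg _ _ _ _ _)
  have hMono : ∀ u : ℝ, ∀ v₁ v₂ : ℝ, v₁ ≤ v₂ → Cg n h u v₁ ≤ Cg n h u v₂ := by
    intro u v₁ v₂ hv
    exact Finset.sum_le_sum fun k _ =>
      add_le_add (seg_mono_v _ _ _ _ hv) (seg_mono_v _ _ _ _ hv)
  have hfoot : spearmanFootrule (Cg n h) = 1 - 3 / (2 * (n:ℝ)) := by
    unfold spearmanFootrule
    have diag : ∀ u : ℝ, Cg n h u u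
        = ∑ k ∈ Finset.range n, 2 * max 0 (min (u - (2*(k:ℝ)+1)*h) h) := by
      intro u
      unfold Cg seg
      refine Finset.sum_congr rfl fun k _ => ?_
      have hle : u - (2*(k:ℝ)+1)*h ≤ u - 2*(k:ℝ)*h := by nlinarith [hhp.le]
      rw [min_eq_right hle, min_eq_left hle]
      ring
    simp only [diag]
    have step1 : (∫ u in (0:ℝ)..1, ∑ k ∈ Finset.range n, 2 * max 0 (min (u - (2*(k:ℝ)+1)*h) h))
        = ∑ k ∈ Finset.range n, ((2*h - 3*h^2) + (-4*h^2) * (k:ℝ)) := by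
      rw [intervalIntegral.integral_finset_sum
        (fun k _ => (Continuous.intervalIntegrable (by fun_prop) _ _))]
      refine Finset.sum_congr rfl fun k hk => ?_
      rw [intervalIntegral.integral_const_mul,
        int_clamp _ h hhp.le (by positivity) (by linarith [hk1 k hk, hhp.le])]
      ring
    rw [step1, sum_linear, hdef]
    field_simp
    ring
  have hrho : spearmanRho (Cg n h) = 1 - 3 / (2 * (n:ℝ)^2) := by
    unfold spearmanRho
    have inner : ∀ u : ℝ, (∫ v in (0:ℝ)..1, Cg n h u v)
        = ∑ k ∈ Finset.range n,
          ((max 0 (min (u - 2*(k:ℝ)*h) h) * (1-(2*(k:ℝ)+1)*h)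
              - (max 0 (min (u - 2*(k:ℝ)*h) h))^2 / 2)
           + (max 0 (min (u - (2*(k:ℝ)+1)*h) h) * (1-2*(k:ℝ)*h)
              - (max 0 (min (u - (2*(k:ℝ)+1)*h) h))^2 / 2)) := by
      intro u
      unfold Cg
      rw [intervalIntegral.integral_finset_sum
        (fun k _ => Continuous.intervalIntegrable
          (by exact (seg_cont_v _ _ _ _).add (seg_cont_v _ _ _ _)) _ _)]
      refine Finset.sum_congr rfl fun k hk => ?_
      rw [intervalIntegral.integral_add ((seg_cont_v _ _ _ _).intervalIntegrable _ _)
          ((seg_cont_v _ _ _ _).intervalIntegrable _ _),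
        int_inner u _ _ h (by positivity) (by linarith [hk1 k hk, hhp.le]),
        int_inner u _ _ h (by positivity) (by linarith [hk1 k hk, hhp.le])]
    simp only [inner]
    have step2 : (∫ u in (0:ℝ)..1, ∑ k ∈ Finset.range n,
          ((max 0 (min (u - 2*(k:ℝ)*h) h) * (1-(2*(k:ℝ)+1)*h)
              - (max 0 (min (u - 2*(k:ℝ)*h) h))^2 / 2)
           + (max 0 (min (u - (2*(k:ℝ)+1)*h) h) * (1-2*(k:ℝ)*h)
              - (max 0 (min (u - (2*(k:ℝ)+1)*h) h))^2 / 2)))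
        = ∑ k ∈ Finset.range n,
          ((2*h - 4*h^2 + 5/3*h^3) + (-8*h^2 + 8*h^3) * (k:ℝ) + (8*h^3) * (k:ℝ)^2) := by
      rw [intervalIntegral.integral_finset_sum
        (fun k _ => (Continuous.intervalIntegrable (by fun_prop) _ _))]
      refine Finset.sum_congr rfl fun k hk => ?_
      rw [intervalIntegral.integral_add
          (Continuous.intervalIntegrable (by fun_prop) _ _)
          (Continuous.intervalIntegrable (by fun_prop) _ _),
        int_outer _ _ h hhp.le (by positivity) (by linarith [hk1 k hk, hhp.le]),
        int_outer _ _ h hhp.le (by positivity) (by linarith [hk1 k hk, hhp.le])]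
      ring
    rw [step2, sum_quad, hdef]
    field_simp
    ring
  refine ⟨Cg n h, ⟨?_, ?_, ?_⟩, ?_, ?_, ?_⟩
  · -- range
    intro u hu v hv
    refine ⟨hNN u v, ?_⟩
    calc Cg n h u v ≤ Cg n h u 1 := hMono u v 1 hv.2
      _ = u := hCv1 u hu.1 hu.2
      _ ≤ 1 := hu.2
  · -- boundary
    intro u hu
    exact ⟨hCv0 u, hCu0 u, hCv1 u hu.1 hu.2, hCu1 u hu.1 hu.2⟩
  · -- 2-increasing
    intro u₁ u₂ v₁ v₂ _ hu12 _ _ hv12 _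
    have key : Cg n h u₂ v₁ + Cg n h u₁ v₂ ≤ Cg n h u₁ v₁ + Cg n h u₂ v₂ := by
      unfold Cg
      rw [← Finset.sum_add_distrib, ← Finset.sum_add_distrib]
      refine Finset.sum_le_sum fun k _ => ?_
      have r1 := seg_rect (2*(k:ℝ)*h) ((2*(k:ℝ)+1)*h) h hu12 hv12
      have r2 := seg_rect ((2*(k:ℝ)+1)*h) (2*(k:ℝ)*h) h hu12 hv12
      linarith
    linarith
  · exact hfoot
  · exact hrho
  · rw [hfoot, hrho]
    field_simp
    ring

end
end

section
/- Let C be a bivariate copula concentrated on the two diagonals with diagonal δ(u) = C(u,u). Then for every u ∈ [0, 1/2] one has δ(1−u) = 1 − 2u + δ(u), and C equals its survival copula, i.e. C(u,v) = u + v − 1 + C(1−u, 1−v) for all u, v ∈ [0,1]. -/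
open MeasureTheory Set

noncomputable section

/-- A copula whose mass is concentrated on the main and opposite diagonal:
its values are determined by its diagonal `δ(u) = C(u,u)` as stated. -/
def ConcentratedOnDiagonals (C : ℝ → ℝ → ℝ) : Prop :=
  ∀ u ∈ Icc (0:ℝ) 1, ∀ v ∈ Icc (0:ℝ) 1,
    (u ≤ v → v ≤ 1 - u → C u v = C u u) ∧
    (v ≤ u → u ≤ 1 - v → C u v = C v v) ∧
    (1 - u ≤ v → v ≤ u → C u v = C u u + v - u) ∧
    (1 - v ≤ u → u ≤ v → C u v = C v v + u - v)

theorem diagonal_symmetry_and_survival (C : ℝ → ℝ → ℝ) (hC : IsCopula C)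
    (hD : ConcentratedOnDiagonals C) :
    (∀ u ∈ Icc (0:ℝ) (1/2), C (1-u) (1-u) = 1 - 2*u + C u u) ∧
    (∀ u ∈ Icc (0:ℝ) 1, ∀ v ∈ Icc (0:ℝ) 1, C u v = u + v - 1 + C (1-u) (1-v)) := by
  have key : ∀ u ∈ Icc (0:ℝ) (1/2), C (1-u) (1-u) = 1 - 2*u + C u u := by
    intro u hu
    obtain ⟨hu0, hu2⟩ := hu
    have h1u : (1-u) ∈ Icc (0:ℝ) 1 := ⟨by linarith, by linarith⟩
    have hu1 : u ∈ Icc (0:ℝ) 1 := ⟨hu0, by linarith⟩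
    obtain ⟨_, h2, h3, _⟩ := hD (1-u) h1u u hu1
    have e2 := h2 (by linarith) (by linarith)
    have e3 := h3 (by linarith) (by linarith)
    linarith
  refine ⟨key, ?_⟩
  intro u hu v hv
  obtain ⟨hu0, hu1⟩ := hu
  obtain ⟨hv0, hv1⟩ := hv
  have hu' : (1-u) ∈ Icc (0:ℝ) 1 := ⟨by linarith, by linarith⟩
  have hv' : (1-v) ∈ Icc (0:ℝ) 1 := ⟨by linarith, by linarith⟩
  obtain ⟨a1, a2, a3, a4⟩ := hD u ⟨hu0, hu1⟩ v ⟨hv0, hv1⟩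
  obtain ⟨b1, b2, b3, b4⟩ := hD (1-u) hu' (1-v) hv'
  rcases le_total u v with huv | huv
  · rcases le_total (u+v) 1 with hs | hs
    · -- region A: C u v = C u u, C(1-u)(1-v) = C(1-u)(1-u) + (1-v)-(1-u)
      have e1 := a1 huv (by linarith)
      have e2 := b3 (by linarith) (by linarith)
      have e3 := key u ⟨hu0, by linarith⟩
      linarith
    · -- region D: v ≥ 1/2
      have e1 := a4 (by linarith) huv
      have e2 := b2 (by linarith) (by linarith)
      have e3 := key (1-v) ⟨by linarith, by linarith⟩
      have : (1 - (1-v) : ℝ) = v := by ring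
      rw [this] at e3
      linarith
  · rcases le_total (u+v) 1 with hs | hs
    · -- region B
      have e1 := a2 huv (by linarith)
      have e2 := b4 (by linarith) (by linarith)
      have e3 := key v ⟨hv0, by linarith⟩
      linarith
    · -- region C: u ≥ 1/2
      have e1 := a3 (by linarith) huv
      have e2 := b1 (by linarith) (by linarith)
      have e3 := key (1-u) ⟨by linarith, by linarith⟩
      have : (1 - (1-u) : ℝ) = u := by ring
      rw [this] at e3
      linarith
end
end

section
/- Let C be a bivariate copula concentrated on the two diagonals with diagonal δ(u) = C(u,u), let α(u) = ∫₀ᵘ δ(t) dt, and let p = φ(C). Then for every u ∈ [0, 1/2] one has α(1−u) = 2·α(1/2) − α(u) + (1−2u)²/4; moreover α(1) = (p+2)/6 and α(1/2) = (2p+1)/24. -/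
open MeasureTheory Set

noncomputable section

theorem alpha_symmetry_and_values (C : ℝ → ℝ → ℝ) (hC : IsCopula C)
    (hD : ConcentratedOnDiagonals C)
    (α : ℝ → ℝ) (hα : ∀ u : ℝ, α u = ∫ t in (0:ℝ)..u, C t t)
    (p : ℝ) (hp : p = spearmanFootrule C) :
    (∀ u ∈ Icc (0:ℝ) (1/2), α (1-u) = 2 * α (1/2) - α u + (1 - 2*u)^2 / 4) ∧
    α 1 = (p + 2) / 6 ∧ α (1/2) = (2*p + 1) / 24 := by
  obtain ⟨hrange, hbdry, h2inc⟩ := hC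
  -- monotonicity of the diagonal
  have hmono : MonotoneOn (fun t => C t t) (Icc (0:ℝ) 1) := by
    intro a ha b hb hab
    have h1 := h2inc a b 0 a ha.1 hab hb.2 le_rfl ha.1 ha.2
    have h2 := h2inc 0 b a b le_rfl hb.1 hb.2 ha.1 hab hb.2
    have e1 := (hbdry b hb).1
    have e2 := (hbdry a ha).1
    have e3 := (hbdry b hb).2.1
    have e4 := (hbdry a ha).2.1
    simp only []
    linarith
  have hint : ∀ a b : ℝ, 0 ≤ a → a ≤ b → b ≤ 1 →
      IntervalIntegrable (fun t => C t t) volume a b := by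
    intro a b h1 h2 h3
    exact (hmono.mono (by rw [uIcc_of_le h2]; exact Icc_subset_Icc h1 h3)).intervalIntegrable
  -- key diagonal symmetry
  have hd : ∀ u : ℝ, 0 ≤ u → u ≤ 1/2 → C (1-u) (1-u) = C u u + 1 - 2*u := by
    intro u h0 h2
    have hu1 : (1-u) ∈ Icc (0:ℝ) 1 := ⟨by linarith, by linarith⟩
    have hu2 : u ∈ Icc (0:ℝ) 1 := ⟨h0, by linarith⟩
    obtain ⟨-, hB, hCc, -⟩ := hD (1-u) hu1 u hu2
    have eB := hB (by linarith) (by linarith)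
    have eC := hCc (by linarith) (by linarith)
    linarith
  have hlin : ∀ u : ℝ, ∫ s in u..(1/2:ℝ), (1 - 2*s) = (1/4 - u + u^2) := by
    intro u
    have h1 : IntervalIntegrable (fun s : ℝ => 2*s) volume u (1/2) :=
      (continuous_const.mul continuous_id).intervalIntegrable _ _
    rw [intervalIntegral.integral_sub intervalIntegrable_const h1,
      intervalIntegral.integral_const_mul, integral_id]
    simp
    ring
  have hsym : ∀ u ∈ Icc (0:ℝ) (1/2), α (1-u) = 2 * α (1/2) - α u + (1 - 2*u)^2 / 4 := by
    intro u hu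
    have h0 : (0:ℝ) ≤ u := hu.1
    have h2 : u ≤ 1/2 := hu.2
    have e1 : α (1-u) = α (1/2) + ∫ t in (1/2:ℝ)..(1-u), C t t := by
      rw [hα, hα, ← intervalIntegral.integral_add_adjacent_intervals
        (hint 0 (1/2) le_rfl (by norm_num) (by norm_num))
        (hint (1/2) (1-u) (by norm_num) (by linarith) (by linarith))]
    have e2 : (∫ t in (1/2:ℝ)..(1-u), C t t) = ∫ s in u..(1/2:ℝ), C (1-s) (1-s) := by
      rw [intervalIntegral.integral_comp_sub_left (fun t => C t t) 1]
      norm_num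
    have e3 : (∫ s in u..(1/2:ℝ), C (1-s) (1-s))
        = (∫ s in u..(1/2:ℝ), C s s) + ∫ s in u..(1/2:ℝ), (1 - 2*s) := by
      rw [← intervalIntegral.integral_add (hint u (1/2) h0 h2 (by norm_num))
        ((by continuity : Continuous fun s:ℝ => 1 - 2*s).intervalIntegrable _ _)]
      apply intervalIntegral.integral_congr
      intro s hs
      rw [uIcc_of_le h2] at hs
      have := hd s (le_trans h0 hs.1) hs.2
      dsimp only
      linarith
    have e5 : (∫ s in u..(1/2:ℝ), C s s) = α (1/2) - α u := by
      rw [hα, hα, ← intervalIntegral.integral_add_adjacent_intervals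
        (hint 0 u le_rfl h0 (by linarith))
        (hint u (1/2) h0 h2 (by norm_num))]
      ring
    rw [e1, e2, e3, e5, hlin u]
    ring
  have hα1 : α 1 = (p + 2) / 6 := by
    rw [hp, spearmanFootrule, hα]; ring
  refine ⟨hsym, hα1, ?_⟩
  have h0 := hsym 0 ⟨le_rfl, by norm_num⟩
  have hz : α 0 = 0 := by rw [hα]; simp
  norm_num [hz] at h0
  linarith
end
end

section
/- Let C be a bivariate copula concentrated on the two diagonals with diagonal δ(u) = C(u,u) and let α(u) = ∫₀ᵘ δ(t) dt. Then ∫₀¹∫₀¹ C(u,v) du dv = 8·∫₀^{1/2} α(u) du + 1/6. -/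
open MeasureTheory Set intervalIntegral

noncomputable section

theorem copulaAux_mono_right (C : ℝ → ℝ → ℝ) (hC : IsCopula C) {u : ℝ} (hu : u ∈ Icc (0:ℝ) 1) :
    MonotoneOn (fun v => C u v) (Icc (0:ℝ) 1) := by
  intro v₁ h1 v₂ h2 h12
  have h := hC.2.2 0 u v₁ v₂ le_rfl hu.1 hu.2 h1.1 h12 h2.2
  have e1 := (hC.2.1 v₁ h1).2.1
  have e2 := (hC.2.1 v₂ h2).2.1
  simp only
  linarith

theorem copulaAux_lip_right (C : ℝ → ℝ → ℝ) (hC : IsCopula C) {u : ℝ} (hu : u ∈ Icc (0:ℝ) 1)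
    {v₁ v₂ : ℝ} (h1 : v₁ ∈ Icc (0:ℝ) 1) (h2 : v₂ ∈ Icc (0:ℝ) 1) (h12 : v₁ ≤ v₂) :
    C u v₂ - C u v₁ ≤ v₂ - v₁ := by
  have h := hC.2.2 u 1 v₁ v₂ hu.1 hu.2 le_rfl h1.1 h12 h2.2
  have e1 := (hC.2.1 v₁ h1).2.2.2
  have e2 := (hC.2.1 v₂ h2).2.2.2
  linarith

theorem copulaAux_mono_left (C : ℝ → ℝ → ℝ) (hC : IsCopula C) {v : ℝ} (hv : v ∈ Icc (0:ℝ) 1)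
    {u₁ u₂ : ℝ} (h1 : u₁ ∈ Icc (0:ℝ) 1) (h2 : u₂ ∈ Icc (0:ℝ) 1) (h12 : u₁ ≤ u₂) :
    C u₁ v ≤ C u₂ v := by
  have h := hC.2.2 u₁ u₂ 0 v h1.1 h12 h2.2 le_rfl hv.1 hv.2
  have e1 := (hC.2.1 u₁ h1).1
  have e2 := (hC.2.1 u₂ h2).1
  linarith

theorem copulaAux_lip_left (C : ℝ → ℝ → ℝ) (hC : IsCopula C) {v : ℝ} (hv : v ∈ Icc (0:ℝ) 1)
    {u₁ u₂ : ℝ} (h1 : u₁ ∈ Icc (0:ℝ) 1) (h2 : u₂ ∈ Icc (0:ℝ) 1) (h12 : u₁ ≤ u₂) :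
    C u₂ v - C u₁ v ≤ u₂ - u₁ := by
  have h := hC.2.2 u₁ u₂ v 1 h1.1 h12 h2.2 hv.1 hv.2 le_rfl
  have e1 := (hC.2.1 u₁ h1).2.2.1
  have e2 := (hC.2.1 u₂ h2).2.2.1
  linarith

theorem copulaAux_diag_cont (C : ℝ → ℝ → ℝ) (hC : IsCopula C) :
    ContinuousOn (fun t => C t t) (Icc (0:ℝ) 1) := by
  have : LipschitzOnWith 2 (fun t => C t t) (Icc (0:ℝ) 1) := by
    rw [lipschitzOnWith_iff_dist_le_mul]
    intro s hs t ht
    rw [Real.dist_eq, Real.dist_eq]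
    wlog h : t ≤ s generalizing s t
    · rw [abs_sub_comm, abs_sub_comm s t]; exact this t ht s hs (le_of_not_ge h)
    have h1 := copulaAux_mono_left C hC hs ht hs h
    have h2 := copulaAux_lip_left C hC hs ht hs h
    have h3 := copulaAux_mono_right C hC hs ht hs h
    have h4 := copulaAux_lip_right C hC hs ht hs h
    have h5 := copulaAux_mono_left C hC ht ht hs h
    have h6 := copulaAux_lip_left C hC ht ht hs h
    simp only at h3
    rw [abs_of_nonneg (by linarith), abs_of_nonneg (by linarith)]
    -- C s s - C t t = (C s s - C s t) + (C s t - C t t)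
    push_cast
    linarith
  exact this.continuousOn

theorem double_integral_via_alpha (C : ℝ → ℝ → ℝ) (hC : IsCopula C)
    (hD : ConcentratedOnDiagonals C)
    (α : ℝ → ℝ) (hα : ∀ u : ℝ, α u = ∫ t in (0:ℝ)..u, C t t) :
    (∫ u in (0:ℝ)..1, ∫ v in (0:ℝ)..1, C u v) = 8 * (∫ u in (0:ℝ)..(1/2), α u) + 1/6 := by
  have m0 : (0:ℝ) ∈ Icc (0:ℝ) 1 := by norm_num
  have mh : (1/2:ℝ) ∈ Icc (0:ℝ) 1 := by norm_num
  have m1 : (1:ℝ) ∈ Icc (0:ℝ) 1 := by norm_num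
  have hδc : ContinuousOn (fun t => C t t) (Icc (0:ℝ) 1) := copulaAux_diag_cont C hC
  have hδint : ∀ a b : ℝ, a ∈ Icc (0:ℝ) 1 → b ∈ Icc (0:ℝ) 1 →
      IntervalIntegrable (fun t => C t t) volume a b := fun a b ha hb =>
    (hδc.mono (uIcc_subset_Icc ha hb)).intervalIntegrable
  have hαc : ContinuousOn α (Icc (0:ℝ) 1) := by
    rw [funext hα]
    have := intervalIntegral.continuousOn_primitive_interval
      (a := (0:ℝ)) (b := 1) (μ := volume) (f := fun t => C t t) ?_
    · rwa [uIcc_of_le (by norm_num : (0:ℝ) ≤ 1)] at this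
    · rw [uIcc_of_le (by norm_num : (0:ℝ) ≤ 1)]; exact hδc.integrableOn_Icc
  have hα0 : α 0 = 0 := by rw [hα]; simp
  have hCuint : ∀ u ∈ Icc (0:ℝ) 1, ∀ a b : ℝ, a ∈ Icc (0:ℝ) 1 → b ∈ Icc (0:ℝ) 1 →
      IntervalIntegrable (fun v => C u v) volume a b := fun u hu a b ha hb =>
    ((copulaAux_mono_right C hC hu).mono (uIcc_subset_Icc ha hb)).intervalIntegrable
  have hsym : ∀ t ∈ Icc (0:ℝ) (1/2), C (1-t) (1-t) = C t t + 1 - 2*t := by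
    intro t ht
    have ht1 : t ∈ Icc (0:ℝ) 1 := ⟨ht.1, by linarith [ht.2]⟩
    have hu1 : (1-t) ∈ Icc (0:ℝ) 1 := ⟨by linarith [ht.2], by linarith [ht.1]⟩
    have h2 := (hD (1-t) hu1 t ht1).2.1 (by linarith [ht.2]) (by linarith)
    have h3 := (hD (1-t) hu1 t ht1).2.2.1 (by linarith) (by linarith [ht.2])
    linarith
  have hpoly : ∀ a b c : ℝ, (∫ v in a..b, (c - v)) = (b-a)*c - (b^2-a^2)/2 := by
    intro a b c
    rw [intervalIntegral.integral_sub intervalIntegrable_const intervalIntegrable_id,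
      intervalIntegral.integral_const, integral_id, smul_eq_mul]
  have hpoly2 : ∀ a b c : ℝ, (∫ v in a..b, (v - c)) = (b^2-a^2)/2 - (b-a)*c := by
    intro a b c
    rw [intervalIntegral.integral_sub intervalIntegrable_id intervalIntegrable_const,
      intervalIntegral.integral_const, integral_id, smul_eq_mul]
  have hflip : ∀ u ∈ Icc (0:ℝ) (1/2), (∫ v in (1-u : ℝ)..1, C v v) = α u + u - u^2 := by
    intro u hu
    have h1 : (∫ x in (0:ℝ)..u, C (1-x) (1-x)) = ∫ x in (1-u : ℝ)..1, C x x := by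
      simpa using intervalIntegral.integral_comp_sub_left (a := (0:ℝ)) (b := u)
        (fun t => C t t) 1
    rw [← h1, intervalIntegral.integral_congr (g := fun x => C x x + (1 - 2*x))
      (fun x hx => by
        rw [uIcc_of_le hu.1] at hx
        have := hsym x ⟨hx.1, le_trans hx.2 hu.2⟩
        simp only; linarith),
      intervalIntegral.integral_add (g := fun x => 1 - 2*x) (hδint 0 u m0 ⟨hu.1, by linarith [hu.2]⟩)
        ((continuous_const.sub (continuous_const.mul continuous_id')).intervalIntegrable _ _),
      ← hα u]
    have h2 : (∫ x in (0:ℝ)..u, (1 - 2*x)) = u - u^2 := by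
      rw [intervalIntegral.integral_sub (g := fun x => 2*x) intervalIntegrable_const
        ((continuous_const.mul continuous_id').intervalIntegrable _ _),
        intervalIntegral.integral_const, intervalIntegral.integral_const_mul, integral_id,
        smul_eq_mul]
      ring
    rw [h2]; ring
  have hinner1 : ∀ u ∈ Icc (0:ℝ) (1/2),
      (∫ v in (0:ℝ)..1, C u v) = 2 * α u + (1 - 2*u) * C u u + u^2/2 := by
    intro u hu
    have hu1 : u ∈ Icc (0:ℝ) 1 := ⟨hu.1, by linarith [hu.2]⟩
    have h1u : (1-u) ∈ Icc (0:ℝ) 1 := ⟨by linarith [hu.2], by linarith [hu.1]⟩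
    have key : (∫ v in (0:ℝ)..1, C u v) = (∫ v in (0:ℝ)..u, C u v)
        + (∫ v in u..(1-u:ℝ), C u v) + (∫ v in (1-u:ℝ)..1, C u v) := by
      rw [intervalIntegral.integral_add_adjacent_intervals (hCuint u hu1 0 u m0 hu1)
        (hCuint u hu1 u (1-u) hu1 h1u),
        intervalIntegral.integral_add_adjacent_intervals (hCuint u hu1 0 (1-u) m0 h1u)
        (hCuint u hu1 (1-u) 1 h1u m1)]
    have p1 : (∫ v in (0:ℝ)..u, C u v) = α u := by
      rw [intervalIntegral.integral_congr (g := fun v => C v v)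
        (fun v hv => by
          rw [uIcc_of_le hu.1] at hv
          exact (hD u hu1 v ⟨hv.1, by linarith [hv.2, hu.2]⟩).2.1 hv.2
            (by linarith [hv.2, hu.2])),
        ← hα u]
    have p2 : (∫ v in u..(1-u:ℝ), C u v) = (1 - 2*u) * C u u := by
      rw [intervalIntegral.integral_congr (g := fun _ => C u u)
        (fun v hv => by
          rw [uIcc_of_le (by linarith [hu.2] : u ≤ 1-u)] at hv
          exact (hD u hu1 v ⟨by linarith [hv.1, hu.1], by linarith [hv.2, hu.1]⟩).1
            hv.1 hv.2),
        intervalIntegral.integral_const, smul_eq_mul]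
      ring
    have p3 : (∫ v in (1-u:ℝ)..1, C u v)
        = (α u + u - u^2) + ((1-(1-u))*u - (1^2-(1-u)^2)/2) := by
      rw [intervalIntegral.integral_congr (g := fun v => C v v + (u - v))
        (fun v hv => by
          rw [uIcc_of_le (by linarith [hu.1] : (1-u:ℝ) ≤ 1)] at hv
          have := (hD u hu1 v ⟨by linarith [hv.1, hu.2], hv.2⟩).2.2.2
            (by linarith [hv.1]) (by linarith [hv.1, hu.2])
          simp only; linarith),
        intervalIntegral.integral_add (g := fun x => u - x) (hδint (1-u) 1 h1u m1)
          ((continuous_const.sub continuous_id').intervalIntegrable _ _),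
        hflip u hu, hpoly]
    rw [key, p1, p2, p3]; ring
  have hinner2 : ∀ u ∈ Icc (1/2:ℝ) 1, (∫ v in (0:ℝ)..1, C u v)
      = (2 * α (1-u) + (1 - 2*(1-u)) * C (1-u) (1-u) + (1-u)^2/2) + (u - 1/2) := by
    intro u hu
    have hu1 : u ∈ Icc (0:ℝ) 1 := ⟨by linarith [hu.1], hu.2⟩
    have h1u : (1-u) ∈ Icc (0:ℝ) 1 := ⟨by linarith [hu.2], by linarith [hu.1]⟩
    have h1uh : (1-u) ∈ Icc (0:ℝ) (1/2) := ⟨by linarith [hu.2], by linarith [hu.1]⟩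
    have hCuu : C u u = C (1-u) (1-u) + 1 - 2*(1-u) := by
      have := hsym (1-u) h1uh
      rw [show (1:ℝ)-(1-u) = u by ring] at this
      exact this
    have key : (∫ v in (0:ℝ)..1, C u v) = (∫ v in (0:ℝ)..(1-u:ℝ), C u v)
        + (∫ v in (1-u:ℝ)..u, C u v) + (∫ v in u..(1:ℝ), C u v) := by
      rw [intervalIntegral.integral_add_adjacent_intervals (hCuint u hu1 0 (1-u) m0 h1u)
        (hCuint u hu1 (1-u) u h1u hu1),
        intervalIntegral.integral_add_adjacent_intervals (hCuint u hu1 0 u m0 hu1)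
        (hCuint u hu1 u 1 hu1 m1)]
    have p1 : (∫ v in (0:ℝ)..(1-u:ℝ), C u v) = α (1-u) := by
      rw [intervalIntegral.integral_congr (g := fun v => C v v)
        (fun v hv => by
          rw [uIcc_of_le h1u.1] at hv
          exact (hD u hu1 v ⟨hv.1, by linarith [hv.2, hu.1]⟩).2.1
            (by linarith [hv.2, hu.1]) (by linarith [hv.2])),
        ← hα (1-u)]
    have p2 : (∫ v in (1-u:ℝ)..u, C u v)
        = (u-(1-u)) * C u u + ((u^2-(1-u)^2)/2 - (u-(1-u))*u) := by
      rw [intervalIntegral.integral_congr (g := fun v => C u u + (v - u))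
        (fun v hv => by
          rw [uIcc_of_le (by linarith [hu.1] : (1-u:ℝ) ≤ u)] at hv
          have := (hD u hu1 v ⟨by linarith [hv.1, hu.2], by linarith [hv.2, hu.2]⟩).2.2.1
            hv.1 hv.2
          simp only; linarith),
        intervalIntegral.integral_add (g := fun x => x - u) intervalIntegrable_const
          ((continuous_id'.sub continuous_const).intervalIntegrable _ _),
        intervalIntegral.integral_const, hpoly2, smul_eq_mul]
    have p3 : (∫ v in u..(1:ℝ), C u v)
        = (α (1-u) + (1-u) - (1-u)^2) + ((1-u)*u - (1^2-u^2)/2) := by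
      have hf := hflip (1-u) h1uh
      rw [show (1:ℝ)-(1-u) = u by ring] at hf
      rw [intervalIntegral.integral_congr (g := fun v => C v v + (u - v))
        (fun v hv => by
          rw [uIcc_of_le hu1.2] at hv
          have := (hD u hu1 v ⟨by linarith [hv.1, hu.1], hv.2⟩).2.2.2
            (by linarith [hv.1, hu.1]) hv.1
          simp only; linarith),
        intervalIntegral.integral_add (g := fun x => u - x) (hδint u 1 hu1 m1)
          ((continuous_const.sub continuous_id').intervalIntegrable _ _),
        hf, hpoly]
    rw [key, p1, p2, p3, hCuu]; ring
  -- integration by parts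
  have hsubIcc : Icc (0:ℝ) (1/2) ⊆ Icc (0:ℝ) 1 := Icc_subset_Icc le_rfl (by norm_num)
  have hαc2 : ContinuousOn α (Icc (0:ℝ) (1/2)) := hαc.mono hsubIcc
  have hαint : ∀ a b : ℝ, a ∈ Icc (0:ℝ) 1 → b ∈ Icc (0:ℝ) 1 →
      IntervalIntegrable α volume a b := fun a b ha hb =>
    (hαc.mono (uIcc_subset_Icc ha hb)).intervalIntegrable
  have hmidc : ContinuousOn (fun t : ℝ => (1 - 2*t) * C t t) (Icc (0:ℝ) 1) :=
    (continuous_const.sub (continuous_const.mul continuous_id')).continuousOn.mul hδc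
  have hmidint : ∀ a b : ℝ, a ∈ Icc (0:ℝ) 1 → b ∈ Icc (0:ℝ) 1 →
      IntervalIntegrable (fun t : ℝ => (1 - 2*t) * C t t) volume a b := fun a b ha hb =>
    (hmidc.mono (uIcc_subset_Icc ha hb)).intervalIntegrable
  have hibp : (∫ t in (0:ℝ)..(1/2), (1 - 2*t) * C t t)
      = 2 * ∫ t in (0:ℝ)..(1/2), α t := by
    have hderiv : ∀ x ∈ Ioo (0:ℝ) (1/2), HasDerivAt (fun t => (1 - 2*t) * α t)
        ((-2) * α x + (1 - 2*x) * C x x) x := by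
      intro x hx
      have hx1 : x ∈ Ioo (0:ℝ) 1 := ⟨hx.1, by linarith [hx.2]⟩
      have hαd : HasDerivAt α (C x x) x := by
        rw [funext hα]
        exact intervalIntegral.integral_hasDerivAt_right
          (hδint 0 x m0 ⟨le_of_lt hx1.1, le_of_lt hx1.2⟩)
          ((hδc.mono Ioo_subset_Icc_self).stronglyMeasurableAtFilter isOpen_Ioo x hx1)
          (hδc.continuousAt (Icc_mem_nhds hx1.1 hx1.2))
      have h1 : HasDerivAt (fun t : ℝ => 1 - 2*t) (-2) x := by
        simpa using ((hasDerivAt_id x).const_mul (2:ℝ)).const_sub 1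
      exact h1.mul hαd
    have hint : IntervalIntegrable (fun t => (-2) * α t + (1 - 2*t) * C t t)
        volume 0 (1/2) := by
      apply IntervalIntegrable.add
      · exact ((continuousOn_const.mul hαc2).mono
          (by rw [uIcc_of_le (by norm_num : (0:ℝ) ≤ 1/2)])).intervalIntegrable
      · exact hmidint 0 (1/2) m0 mh
    have hFc : ContinuousOn (fun t : ℝ => (1 - 2*t) * α t) (Icc (0:ℝ) (1/2)) :=
      (continuous_const.sub (continuous_const.mul continuous_id')).continuousOn.mul hαc2
    have heq := intervalIntegral.integral_eq_sub_of_hasDeriv_right_of_le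
      (by norm_num : (0:ℝ) ≤ 1/2) hFc
      (fun x hx => (hderiv x hx).hasDerivWithinAt) hint
    rw [intervalIntegral.integral_add (f := fun x => -2 * α x) ((continuousOn_const.mul hαc2).mono
        (by rw [uIcc_of_le (by norm_num : (0:ℝ) ≤ 1/2)])).intervalIntegrable
      (hmidint 0 (1/2) m0 mh), intervalIntegral.integral_const_mul] at heq
    simp only [hα0] at heq
    norm_num at heq
    linarith
  -- value of the half-integral of g
  have hgc : ContinuousOn (fun t : ℝ => 2 * α t + (1 - 2*t) * C t t + t^2/2)
      (Icc (0:ℝ) 1) := by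
    exact ((continuousOn_const.mul hαc).add hmidc).add
      (((continuous_pow 2).div_const 2).continuousOn)
  have hgint : ∀ a b : ℝ, a ∈ Icc (0:ℝ) 1 → b ∈ Icc (0:ℝ) 1 →
      IntervalIntegrable (fun t : ℝ => 2 * α t + (1 - 2*t) * C t t + t^2/2) volume a b :=
    fun a b ha hb => (hgc.mono (uIcc_subset_Icc ha hb)).intervalIntegrable
  have hgval : (∫ t in (0:ℝ)..(1/2), (2 * α t + (1 - 2*t) * C t t + t^2/2))
      = 4 * (∫ u in (0:ℝ)..(1/2), α u) + 1/48 := by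
    rw [intervalIntegral.integral_add (f := fun x => 2 * α x + (1 - 2*x) * C x x)
        (g := fun x => x^2/2) (IntervalIntegrable.add
        (((continuousOn_const.mul hαc2).mono
          (by rw [uIcc_of_le (by norm_num : (0:ℝ) ≤ 1/2)])).intervalIntegrable)
        (hmidint 0 (1/2) m0 mh))
      (((continuous_pow 2).div_const 2).intervalIntegrable _ _),
      intervalIntegral.integral_add (f := fun x => 2 * α x) (((continuousOn_const.mul hαc2).mono
          (by rw [uIcc_of_le (by norm_num : (0:ℝ) ≤ 1/2)])).intervalIntegrable)
        (hmidint 0 (1/2) m0 mh),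
      intervalIntegral.integral_const_mul, hibp]
    have : (∫ t in (0:ℝ)..(1/2), t^2/2) = 1/48 := by
      rw [intervalIntegral.integral_div, integral_pow]
      norm_num
    rw [this]; ring
  -- transfer integrability of the inner integral
  have htrans : ∀ (f g : ℝ → ℝ) (a b : ℝ), a ≤ b → EqOn f g (Icc a b) →
      IntervalIntegrable g volume a b → IntervalIntegrable f volume a b := by
    intro f g a b hab h hg
    rw [intervalIntegrable_iff_integrableOn_Ioc_of_le hab] at hg ⊢
    exact hg.congr_fun (fun x hx => (h (Ioc_subset_Icc_self hx)).symm) measurableSet_Ioc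
  have hI1 : IntervalIntegrable (fun u => ∫ v in (0:ℝ)..1, C u v) volume 0 (1/2) :=
    htrans _ _ _ _ (by norm_num) (fun u hu => hinner1 u hu) (hgint 0 (1/2) m0 mh)
  have hg2c : ContinuousOn
      (fun u : ℝ => (2 * α (1-u) + (1 - 2*(1-u)) * C (1-u) (1-u) + (1-u)^2/2) + (u - 1/2))
      (Icc (1/2:ℝ) 1) := by
    apply ContinuousOn.add
    · exact hgc.comp (continuous_const.sub continuous_id').continuousOn
        (fun x hx => ⟨by show (0:ℝ) ≤ 1 - x; linarith [hx.2],
          by show (1:ℝ) - x ≤ 1; linarith [hx.1]⟩)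
    · exact (continuous_id'.sub continuous_const).continuousOn
  have hI2 : IntervalIntegrable (fun u => ∫ v in (0:ℝ)..1, C u v) volume (1/2) 1 :=
    htrans _ _ _ _ (by norm_num) (fun u hu => hinner2 u hu)
      ((hg2c.mono (by rw [uIcc_of_le (by norm_num : (1/2:ℝ) ≤ 1)])).intervalIntegrable)
  have hsplit : (∫ u in (0:ℝ)..1, ∫ v in (0:ℝ)..1, C u v)
      = (∫ u in (0:ℝ)..(1/2), ∫ v in (0:ℝ)..1, C u v)
        + ∫ u in (1/2:ℝ)..1, ∫ v in (0:ℝ)..1, C u v :=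
    (intervalIntegral.integral_add_adjacent_intervals hI1 hI2).symm
  have hfirst : (∫ u in (0:ℝ)..(1/2), ∫ v in (0:ℝ)..1, C u v)
      = 4 * (∫ u in (0:ℝ)..(1/2), α u) + 1/48 := by
    rw [intervalIntegral.integral_congr (g := fun t => 2 * α t + (1 - 2*t) * C t t + t^2/2)
      (fun u hu => hinner1 u (by rwa [uIcc_of_le (by norm_num : (0:ℝ) ≤ 1/2)] at hu))]
    exact hgval
  have hsecond : (∫ u in (1/2:ℝ)..1, ∫ v in (0:ℝ)..1, C u v)
      = 4 * (∫ u in (0:ℝ)..(1/2), α u) + 1/48 + 1/8 := by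
    rw [intervalIntegral.integral_congr
      (g := fun u => (2 * α (1-u) + (1 - 2*(1-u)) * C (1-u) (1-u) + (1-u)^2/2) + (u - 1/2))
      (fun u hu => hinner2 u (by rwa [uIcc_of_le (by norm_num : (1/2:ℝ) ≤ 1)] at hu))]
    have hq : IntervalIntegrable
        (fun u : ℝ => 2 * α (1-u) + (1 - 2*(1-u)) * C (1-u) (1-u) + (1-u)^2/2)
        volume (1/2) 1 := by
      have : ContinuousOn
          (fun u : ℝ => 2 * α (1-u) + (1 - 2*(1-u)) * C (1-u) (1-u) + (1-u)^2/2)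
          (uIcc (1/2:ℝ) 1) := by
        rw [uIcc_of_le (by norm_num : (1/2:ℝ) ≤ 1)]
        exact hgc.comp (continuous_const.sub continuous_id').continuousOn
          (fun x hx => ⟨by show (0:ℝ) ≤ 1 - x; linarith [hx.2],
            by show (1:ℝ) - x ≤ 1; linarith [hx.1]⟩)
      exact this.intervalIntegrable
    rw [intervalIntegral.integral_add (g := fun u => u - 1/2) hq
      ((continuous_id'.sub continuous_const).intervalIntegrable _ _)]
    have h1 : (∫ u in (1/2:ℝ)..1, (2 * α (1-u) + (1 - 2*(1-u)) * C (1-u) (1-u) + (1-u)^2/2))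
        = ∫ t in (0:ℝ)..(1/2), (2 * α t + (1 - 2*t) * C t t + t^2/2) := by
      have h := intervalIntegral.integral_comp_sub_left (a := (1/2:ℝ)) (b := 1)
        (fun t : ℝ => 2 * α t + (1 - 2*t) * C t t + t^2/2) 1
      rw [show (1:ℝ)-1 = 0 by norm_num, show (1:ℝ)-1/2 = 1/2 by norm_num] at h
      exact h
    rw [h1, hgval, hpoly2]
    norm_num
  rw [hsplit, hfirst, hsecond]
  ring
end
end

section
/- Let C be a bivariate copula concentrated on the two diagonals with diagonal δ(u) = C(u,u), let α(u) = ∫₀ᵘ δ(t) dt, let p = φ(C) (which lies in [−1/2, 1]), and set u₀ = (1/2)·(1 − √(2p+1)/√3) ∈ [0, 1/2]. Then for every u ∈ [0, 1/2]: α(u) ≥ 0, and if u₀ < u ≤ 1/2 then α(u) ≥ (1/2)·(u − u₀)². -/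
open MeasureTheory Set

noncomputable section

set_option maxHeartbeats 2000000 in
theorem alpha_lower_bound (C : ℝ → ℝ → ℝ) (hC : IsCopula C)
    (hD : ConcentratedOnDiagonals C)
    (α : ℝ → ℝ) (hα : ∀ u : ℝ, α u = ∫ t in (0:ℝ)..u, C t t)
    (p : ℝ) (hp : p = spearmanFootrule C)
    (u₀ : ℝ) (hu₀ : u₀ = (1/2) * (1 - Real.sqrt (2*p + 1) / Real.sqrt 3)) :
    p ∈ Icc (-(1:ℝ)/2) 1 ∧ u₀ ∈ Icc (0:ℝ) (1/2) ∧
    ∀ u ∈ Icc (0:ℝ) (1/2), 0 ≤ α u ∧ (u₀ < u → (1/2) * (u - u₀)^2 ≤ α u) := by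
  obtain ⟨hrange, hbdry, h2inc⟩ := hC
  -- δ(t) = C t t basic facts
  have hd0 : ∀ t ∈ Icc (0:ℝ) 1, 0 ≤ C t t := fun t ht => (hrange t ht t ht).1
  have hdle : ∀ t ∈ Icc (0:ℝ) 1, C t t ≤ t := by
    intro t ht
    have h := h2inc t 1 0 t ht.1 ht.2 le_rfl le_rfl ht.1 ht.2
    have e1 : C 1 t = t := (hbdry t ht).2.2.2
    have e2 : C 1 0 = 0 := (hbdry 1 (by norm_num)).1
    have e3 : C t 0 = 0 := (hbdry t ht).1
    linarith
  have hmono : MonotoneOn (fun t => C t t) (Icc (0:ℝ) 1) := by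
    intro a ha b hb hab
    have h1 := h2inc a b 0 a ha.1 hab hb.2 le_rfl ha.1 ha.2
    have h2 := h2inc 0 b a b le_rfl hb.1 hb.2 ha.1 hab hb.2
    have e1 : C a 0 = 0 := (hbdry a ha).1
    have e2 : C b 0 = 0 := (hbdry b hb).1
    have e3 : C 0 b = 0 := (hbdry b hb).2.1
    have e4 : C 0 a = 0 := (hbdry a ha).2.1
    simp only
    linarith
  have hsym : ∀ t ∈ Icc (0:ℝ) (1/2), C (1-t) (1-t) = C t t + 1 - 2*t := by
    intro t ht
    have ht1 : t ∈ Icc (0:ℝ) 1 := ⟨ht.1, by linarith [ht.2]⟩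
    have h1t : (1-t) ∈ Icc (0:ℝ) 1 := ⟨by linarith [ht.2], by linarith [ht.1]⟩
    have h := hD (1-t) h1t t ht1
    have e1 : C (1-t) t = C t t := h.2.1 (by linarith [ht.2]) (by linarith)
    have e2 : C (1-t) t = C (1-t) (1-t) + t - (1-t) := h.2.2.1 (by linarith) (by linarith [ht.2])
    linarith
  have hlip : ∀ t t' : ℝ, 0 ≤ t → t ≤ t' → t' ≤ 1/2 → C t' t' ≤ C t t + (t' - t) := by
    intro t t' h0 htt' h12
    have h := h2inc t t' (1-t') (1-t) h0 htt' (by linarith) (by linarith) (by linarith) (by linarith)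
    have ht1 : t ∈ Icc (0:ℝ) 1 := ⟨h0, by linarith⟩
    have ht'1 : t' ∈ Icc (0:ℝ) 1 := ⟨by linarith, by linarith⟩
    have h1t : (1-t) ∈ Icc (0:ℝ) 1 := ⟨by linarith, by linarith⟩
    have h1t' : (1-t') ∈ Icc (0:ℝ) 1 := ⟨by linarith, by linarith⟩
    have e1 : C t' (1-t) = C (1-t) (1-t) + t' - (1-t) :=
      (hD t' ht'1 (1-t) h1t).2.2.2 (by linarith) (by linarith)
    have e2 : C t' (1-t') = C t' t' := (hD t' ht'1 (1-t') h1t').1 (by linarith) (by linarith)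
    have e3 : C t (1-t) = C t t := (hD t ht1 (1-t) h1t).1 (by linarith) (by linarith)
    have e4 : C t (1-t') = C t t := (hD t ht1 (1-t') h1t').1 (by linarith) (by linarith)
    have esym := hsym t ⟨h0, by linarith⟩
    linarith
  -- integrability of δ on subintervals of [0,1]
  have hint : ∀ a b : ℝ, 0 ≤ a → a ≤ b → b ≤ 1 →
      IntervalIntegrable (fun t => C t t) volume a b := by
    intro a b ha hab hb
    exact (hmono.mono (by rw [uIcc_of_le hab]; exact Icc_subset_Icc ha hb)).intervalIntegrable
  -- α nonneg
  have hα0 : ∀ u ∈ Icc (0:ℝ) (1/2), 0 ≤ α u := by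
    intro u hu
    rw [hα]
    exact intervalIntegral.integral_nonneg hu.1
      (fun t ht => hd0 t ⟨ht.1, by linarith [ht.2, hu.2]⟩)
  -- key integral identity
  have hkey : ∫ t in (0:ℝ)..1, C t t = 2 * α (1/2) + 1/4 := by
    have hadd : (∫ t in (0:ℝ)..(1/2:ℝ), C t t) + ∫ t in (1/2:ℝ)..1, C t t
        = ∫ t in (0:ℝ)..1, C t t :=
      intervalIntegral.integral_add_adjacent_intervals
        (hint 0 (1/2) le_rfl (by norm_num) (by norm_num))
        (hint (1/2) 1 (by norm_num) (by norm_num) le_rfl)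
    have hcs : ∫ x in (0:ℝ)..(1/2:ℝ), C (1-x) (1-x) = ∫ x in (1/2:ℝ)..1, C x x := by
      have h := intervalIntegral.integral_comp_sub_left (a := (0:ℝ)) (b := (1/2:ℝ))
        (fun t => C t t) 1
      norm_num at h
      exact h
    have hcongr : ∫ x in (0:ℝ)..(1/2:ℝ), C (1-x) (1-x)
        = ∫ x in (0:ℝ)..(1/2:ℝ), (C x x + (1 - 2*x)) := by
      apply intervalIntegral.integral_congr
      intro x hx
      rw [uIcc_of_le (by norm_num : (0:ℝ) ≤ 1/2)] at hx
      have := hsym x hx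
      simp only
      linarith
    have hi2x : IntervalIntegrable (fun x : ℝ => 2*x) volume 0 (1/2) :=
      (continuous_const.mul continuous_id).intervalIntegrable _ _
    have hlin : ∫ x in (0:ℝ)..(1/2:ℝ), ((1:ℝ) - 2*x) = 1/4 := by
      rw [intervalIntegral.integral_sub intervalIntegrable_const hi2x,
        intervalIntegral.integral_const, intervalIntegral.integral_const_mul,
        integral_id, smul_eq_mul]
      norm_num
    have hsplit : ∫ x in (0:ℝ)..(1/2:ℝ), (C x x + (1 - 2*x))
        = (∫ x in (0:ℝ)..(1/2:ℝ), C x x) + 1/4 := by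
      have hi12x : IntervalIntegrable (fun x : ℝ => 1 - 2*x) volume 0 (1/2) :=
        (continuous_const.sub (continuous_const.mul continuous_id)).intervalIntegrable _ _
      rw [intervalIntegral.integral_add (hint 0 (1/2) le_rfl (by norm_num) (by norm_num))
        hi12x, hlin]
    rw [← hadd, ← hcs, hcongr, hsplit, hα]
    ring
  have hpval : p = 12 * α (1/2) - 1/2 := by
    rw [hp, spearmanFootrule, hkey]; ring
  -- bounds on α(1/2)
  have hA0 : 0 ≤ α (1/2) := hα0 _ ⟨by norm_num, le_rfl⟩
  have hA8 : α (1/2) ≤ 1/8 := by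
    rw [hα]
    have hiid : IntervalIntegrable (fun t : ℝ => t) volume 0 (1/2) :=
      continuous_id.intervalIntegrable _ _
    have hm : ∫ t in (0:ℝ)..(1/2:ℝ), C t t ≤ ∫ t in (0:ℝ)..(1/2:ℝ), t :=
      intervalIntegral.integral_mono_on (by norm_num)
        (hint 0 (1/2) le_rfl (by norm_num) (by norm_num))
        hiid
        (fun t ht => hdle t ⟨ht.1, by linarith [ht.2]⟩)
    have hid : ∫ t in (0:ℝ)..(1/2:ℝ), t = 1/8 := by
      rw [integral_id]; norm_num
    linarith
  have hpmem : p ∈ Icc (-(1:ℝ)/2) 1 := ⟨by rw [hpval]; linarith, by rw [hpval]; linarith⟩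
  have h2p1 : (0:ℝ) ≤ 2*p + 1 := by have := hpmem.1; linarith
  have h2p3 : 2*p + 1 ≤ 3 := by have := hpmem.2; linarith
  have hs3 : (0:ℝ) < Real.sqrt 3 := Real.sqrt_pos.mpr (by norm_num)
  have hratio0 : 0 ≤ Real.sqrt (2*p+1) / Real.sqrt 3 :=
    div_nonneg (Real.sqrt_nonneg _) hs3.le
  have hratio1 : Real.sqrt (2*p+1) / Real.sqrt 3 ≤ 1 :=
    (div_le_one hs3).mpr (Real.sqrt_le_sqrt h2p3)
  have hu₀mem : u₀ ∈ Icc (0:ℝ) (1/2) := by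
    constructor
    · rw [hu₀]; linarith
    · rw [hu₀]; linarith
  have hsq : (1 - 2*u₀)^2 = (2*p+1)/3 := by
    have h1 : 1 - 2*u₀ = Real.sqrt (2*p+1) / Real.sqrt 3 := by rw [hu₀]; ring
    rw [h1, div_pow, Real.sq_sqrt h2p1, Real.sq_sqrt (by norm_num : (0:ℝ) ≤ 3)]
  have h8A : (1 - 2*u₀)^2 = 8 * α (1/2) := by rw [hsq]; linarith
  refine ⟨hpmem, hu₀mem, ?_⟩
  intro u hu
  refine ⟨hα0 u hu, ?_⟩
  intro hu₀u
  have hu1 : u ∈ Icc (0:ℝ) 1 := ⟨hu.1, by linarith [hu.2]⟩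
  have hc0 : 0 ≤ C u u := hd0 u hu1
  have hcu : C u u ≤ u := hdle u hu1
  -- lower bound (i): α u ≥ c²/2
  have hi1 : (C u u)^2/2 ≤ α u := by
    rw [hα]
    have hsplit : (∫ t in (0:ℝ)..(u - C u u), C t t) + ∫ t in (u - C u u)..u, C t t
        = ∫ t in (0:ℝ)..u, C t t :=
      intervalIntegral.integral_add_adjacent_intervals
        (hint 0 (u - C u u) le_rfl (by linarith) (by linarith [hu.2]))
        (hint (u - C u u) u (by linarith) (by linarith) (by linarith [hu.2]))
    have h1 : 0 ≤ ∫ t in (0:ℝ)..(u - C u u), C t t :=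
      intervalIntegral.integral_nonneg (by linarith)
        (fun t ht => hd0 t ⟨ht.1, by linarith [ht.2, hu.2]⟩)
    have hif : IntervalIntegrable (fun t : ℝ => t - (u - C u u)) volume (u - C u u) u :=
      (continuous_id.sub continuous_const).intervalIntegrable _ _
    have hiid2 : IntervalIntegrable (fun t : ℝ => t) volume (u - C u u) u :=
      continuous_id.intervalIntegrable _ _
    have h2 : ∫ t in (u - C u u)..u, (t - (u - C u u)) ≤ ∫ t in (u - C u u)..u, C t t := by
      apply intervalIntegral.integral_mono_on (by linarith) hif
        (hint (u - C u u) u (by linarith) (by linarith) (by linarith [hu.2]))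
      intro t ht
      have := hlip t u (by linarith [ht.1]) ht.2 hu.2
      linarith
    have h3 : ∫ t in (u - C u u)..u, (t - (u - C u u)) = (C u u)^2/2 := by
      rw [intervalIntegral.integral_sub hiid2 intervalIntegrable_const, integral_id,
        intervalIntegral.integral_const, smul_eq_mul]
      ring
    linarith
  -- lower bound (ii): α u ≥ A − c·s − s²/2
  have hi2 : α (1/2) - (C u u) * (1/2 - u) - (1/2 - u)^2/2 ≤ α u := by
    have hsplit : (∫ t in (0:ℝ)..u, C t t) + ∫ t in u..(1/2:ℝ), C t t
        = ∫ t in (0:ℝ)..(1/2:ℝ), C t t :=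
      intervalIntegral.integral_add_adjacent_intervals
        (hint 0 u le_rfl hu.1 (by linarith [hu.2]))
        (hint u (1/2) hu.1 hu.2 (by norm_num))
    have hig : IntervalIntegrable (fun t : ℝ => C u u + (t - u)) volume u (1/2) :=
      (continuous_const.add (continuous_id.sub continuous_const)).intervalIntegrable _ _
    have hisub : IntervalIntegrable (fun t : ℝ => t - u) volume u (1/2) :=
      (continuous_id.sub continuous_const).intervalIntegrable _ _
    have hiid3 : IntervalIntegrable (fun t : ℝ => t) volume u (1/2) :=
      continuous_id.intervalIntegrable _ _
    have h2 : ∫ t in u..(1/2:ℝ), C t t ≤ ∫ t in u..(1/2:ℝ), (C u u + (t - u)) := by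
      apply intervalIntegral.integral_mono_on hu.2
        (hint u (1/2) hu.1 hu.2 (by norm_num)) hig
      intro t ht
      have := hlip u t hu.1 ht.1 ht.2
      linarith
    have h3 : ∫ t in u..(1/2:ℝ), ((C u u) + (t - u))
        = (C u u) * (1/2 - u) + (1/2 - u)^2/2 := by
      rw [intervalIntegral.integral_add intervalIntegrable_const hisub,
        intervalIntegral.integral_sub hiid3 intervalIntegrable_const, integral_id,
        intervalIntegral.integral_const, intervalIntegral.integral_const,
        smul_eq_mul, smul_eq_mul]
      ring
    have hAeq : α (1/2) = α u + ∫ t in u..(1/2:ℝ), C t t := by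
      rw [hα, hα]; linarith [hsplit]
    linarith
  rcases le_or_gt (u - u₀) (C u u) with h | h
  · have hx0 : 0 ≤ u - u₀ := by linarith
    have hsq2 : (u - u₀)^2 ≤ (C u u)^2 := pow_le_pow_left₀ hx0 h 2
    linarith [hi1]
  · have hs : (0:ℝ) ≤ 1/2 - u := by linarith [hu.2]
    have key : α (1/2) - C u u * (1/2 - u) - (1/2 - u)^2/2 - 1/2*(u - u₀)^2
        = (u - u₀ - C u u) * (1/2 - u) + (8 * α (1/2) - (1 - 2*u₀)^2)/8 := by ring
    have hprod : 0 ≤ (u - u₀ - C u u) * (1/2 - u) :=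
      mul_nonneg (by linarith) hs
    linarith [hi2, key, hprod, h8A]
end
end

section
/- Let C be a bivariate copula concentrated on the two diagonals. Then ρ(C) ≥ (2√3/9)·(1 + 2·φ(C))^{3/2} − 1. -/
noncomputable section

section Wrappers
open intervalIntegral Set

private lemma iiCongr {a b : ℝ} {f g : ℝ → ℝ} (h : Set.EqOn f g (Set.uIcc a b)) :
    ∫ x in a..b, f x = ∫ x in a..b, g x := integral_congr h

private lemma iiAdd {a b : ℝ} {f g : ℝ → ℝ}
    (hf : IntervalIntegrable f MeasureTheory.volume a b)
    (hg : IntervalIntegrable g MeasureTheory.volume a b) :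
    ∫ x in a..b, (f x + g x) = (∫ x in a..b, f x) + ∫ x in a..b, g x := integral_add hf hg

private lemma iiSub {a b : ℝ} {f g : ℝ → ℝ}
    (hf : IntervalIntegrable f MeasureTheory.volume a b)
    (hg : IntervalIntegrable g MeasureTheory.volume a b) :
    ∫ x in a..b, (f x - g x) = (∫ x in a..b, f x) - ∫ x in a..b, g x := integral_sub hf hg

private lemma iiConstMul {a b : ℝ} (c : ℝ) (f : ℝ → ℝ) :
    ∫ x in a..b, c * f x = c * ∫ x in a..b, f x := integral_const_mul c f

private lemma iiAdj {a b c : ℝ} {f : ℝ → ℝ}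
    (hab : IntervalIntegrable f MeasureTheory.volume a b)
    (hbc : IntervalIntegrable f MeasureTheory.volume b c) :
    (∫ x in a..b, f x) + ∫ x in b..c, f x = ∫ x in a..c, f x :=
  integral_add_adjacent_intervals hab hbc

private lemma iiCompSubLeft {a b : ℝ} (f : ℝ → ℝ) (d : ℝ) :
    (∫ x in a..b, f (d - x)) = ∫ x in (d-b)..(d-a), f x := integral_comp_sub_left f d

private lemma iiFTC {a b : ℝ} {F f : ℝ → ℝ}
    (h : ∀ x ∈ Set.uIcc a b, HasDerivAt F (f x) x)
    (hint : IntervalIntegrable f MeasureTheory.volume a b) :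
    ∫ x in a..b, f x = F b - F a := integral_eq_sub_of_hasDerivAt h hint

private lemma iiFTC' {a b : ℝ} {F f : ℝ → ℝ} (hab : a ≤ b)
    (hcont : ContinuousOn F (Set.Icc a b))
    (hderiv : ∀ x ∈ Set.Ioo a b, HasDerivAt F (f x) x)
    (hint : IntervalIntegrable f MeasureTheory.volume a b) :
    ∫ x in a..b, f x = F b - F a :=
  integral_eq_sub_of_hasDeriv_right_of_le hab hcont (fun x hx => (hderiv x hx).hasDerivWithinAt) hint

private lemma iiMonoOn {a b : ℝ} {f g : ℝ → ℝ} (hab : a ≤ b)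
    (hf : IntervalIntegrable f MeasureTheory.volume a b)
    (hg : IntervalIntegrable g MeasureTheory.volume a b)
    (hle : ∀ x ∈ Set.Icc a b, f x ≤ g x) :
    (∫ x in a..b, f x) ≤ ∫ x in a..b, g x := integral_mono_on hab hf hg hle

private lemma iiNonneg {a b : ℝ} {f : ℝ → ℝ} (hab : a ≤ b)
    (h : ∀ x ∈ Set.Icc a b, 0 ≤ f x) :
    0 ≤ ∫ x in a..b, f x := integral_nonneg hab h

private lemma iiId {a b : ℝ} : ∫ x in a..b, x = (b^2 - a^2)/2 := integral_id

end Wrappers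

section Wrappers2
open intervalIntegral Set
private lemma iiPrimCont {a b : ℝ} {f : ℝ → ℝ}
    (h : IntervalIntegrable f MeasureTheory.volume a b) :
    ContinuousOn (fun x => ∫ t in a..x, f t) (Set.uIcc a b) :=
  continuousOn_primitive_interval' h Set.left_mem_uIcc
end Wrappers2

section Wrappers3
open intervalIntegral Set
private lemma iiConst {a b c : ℝ} : (∫ _x in a..b, c) = (b - a) * c := by
  simp [smul_eq_mul]

private lemma iiHasDeriv {f : ℝ → ℝ} {a p q b : ℝ}
    (hf : IntervalIntegrable f MeasureTheory.volume a b)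
    (hcont : ContinuousOn f (Set.Ioo p q)) (hb : b ∈ Set.Ioo p q) :
    HasDerivAt (fun u => ∫ x in a..u, f x) (f b) b :=
  intervalIntegral.integral_hasDerivAt_right hf
    (ContinuousOn.stronglyMeasurableAtFilter isOpen_Ioo hcont b hb)
    (hcont.continuousAt (isOpen_Ioo.mem_nhds hb))
end Wrappers3

open MeasureTheory Set

private lemma intPoly (a b p q r : ℝ) :
    (∫ v in a..b, (p + q*v + r*v^2)) =
      (p*b + q*b^2/2 + r*b^3/3) - (p*a + q*a^2/2 + r*a^3/3) := by
  have h : ∀ x ∈ Set.uIcc a b,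
      HasDerivAt (fun v => p*v + q*v^2/2 + r*v^3/3) (p + q*x + r*x^2) x := by
    intro x _
    have h2 := ((hasDerivAt_pow 2 x).const_mul q).div_const 2
    have h3 := ((hasDerivAt_pow 3 x).const_mul r).div_const 3
    have h1 : HasDerivAt (fun v : ℝ => p * id v + (q * v^2/2 + r * v^3/3)) _ x := ((hasDerivAt_id x).const_mul p).add (h2.add h3)
    have he : (fun v : ℝ => p * id v + (q * v^2/2 + r * v^3/3))
        = (fun v => p*v + q*v^2/2 + r*v^3/3) := by
      funext v; simp [id]; ring
    rw [he] at h1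
    convert h1 using 1
    push_cast
    ring
  rw [iiFTC h (by apply Continuous.intervalIntegrable; fun_prop)]

private lemma rpow_three_halves {x : ℝ} (hx : 0 ≤ x) :
    x ^ ((3:ℝ)/2) = Real.sqrt x ^ 3 := by
  rw [Real.sqrt_eq_rpow, ← Real.rpow_natCast (x ^ ((1:ℝ)/2)) 3, ← Real.rpow_mul hx]
  norm_num

private lemma core_ineq (d : ℝ → ℝ) (hcont : ContinuousOn d (Icc 0 (1/2)))
    (hd0 : ∀ v ∈ Icc (0:ℝ) (1/2), 0 ≤ d v)
    (hd00 : d 0 = 0)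
    (hlip : ∀ v₁ v₂ : ℝ, 0 ≤ v₁ → v₁ ≤ v₂ → v₂ ≤ 1/2 → d v₂ - d v₁ ≤ v₂ - v₁) :
    2 * Real.sqrt 2 / 3 * (∫ v in (0:ℝ)..(1/2), d v) ^ ((3:ℝ)/2)
      ≤ ∫ v in (0:ℝ)..(1/2), d v * (1 - 2*v) := by
  have huIcc : uIcc (0:ℝ) (1/2) = Icc 0 (1/2) := uIcc_of_le (by norm_num)
  have hw : Continuous fun v : ℝ => 1 - 2*v := by fun_prop
  have hdint : IntervalIntegrable d volume 0 (1/2) :=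
    ContinuousOn.intervalIntegrable (by rw [huIcc]; exact hcont)
  set S : ℝ := ∫ v in (0:ℝ)..(1/2), d v with hSdef
  have hS0 : 0 ≤ S := iiNonneg (by norm_num) (fun u hu => hd0 u hu)
  set h : ℝ := Real.sqrt (2*S) with hhdef
  have hh0 : 0 ≤ h := Real.sqrt_nonneg _
  have hh2 : h^2 = 2*S := Real.sq_sqrt (by linarith)
  have hdlev : ∀ v ∈ Icc (0:ℝ) (1/2), d v ≤ v := by
    intro v hv
    have := hlip 0 v le_rfl hv.1 hv.2
    rw [hd00] at this; linarith
  have hS8 : S ≤ 1/8 := by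
    have h2 := iiMonoOn (g := fun v => v) (by norm_num : (0:ℝ) ≤ 1/2) hdint
      ((by fun_prop : Continuous fun v : ℝ => v).intervalIntegrable _ _) hdlev
    rw [iiId] at h2; rw [hSdef]; linarith
  have hhhalf : h ≤ 1/2 := by nlinarith
  set b : ℝ := 1/2 - h with hbdef
  have hb0 : 0 ≤ b := by rw [hbdef]; linarith
  have hb2 : b ≤ 1/2 := by rw [hbdef]; linarith
  set ds : ℝ → ℝ := fun v => max 0 (v - b) with hdsdef
  have hdscont : Continuous ds := continuous_const.max (continuous_id.sub continuous_const)
  have hds_eq0 : ∀ v ≤ b, ds v = 0 := by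
    intro v hv; rw [hdsdef]; exact max_eq_left (by linarith)
  have hds_eq1 : ∀ v, b ≤ v → ds v = v - b := by
    intro v hv; rw [hdsdef]; exact max_eq_right (by linarith)
  -- integral of ds
  have hds1 : (∫ v in (0:ℝ)..b, ds v) = 0 := by
    have e : (∫ v in (0:ℝ)..b, ds v) = ∫ v in (0:ℝ)..b, (0:ℝ) := by
      apply iiCongr
      intro x hx
      rw [uIcc_of_le hb0] at hx
      exact hds_eq0 x hx.2
    rw [e]; simp
  have hds2 : (∫ v in b..(1/2:ℝ), ds v) = h^2/2 := by
    have e1 : (∫ v in b..(1/2:ℝ), ds v) = ∫ v in b..(1/2:ℝ), ((-b) + 1*v + 0*v^2) := by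
      apply iiCongr
      intro x hx
      rw [uIcc_of_le hb2] at hx
      rw [hds_eq1 x hx.1]; ring
    rw [e1, intPoly, hbdef]; ring
  have hdsS : (∫ v in (0:ℝ)..(1/2), ds v) = h^2/2 := by
    rw [← iiAdj (hdscont.intervalIntegrable 0 b) (hdscont.intervalIntegrable b (1/2)),
      hds1, hds2]
    ring
  have hdsK : (∫ v in (0:ℝ)..(1/2), ds v * (1 - 2*v)) = h^3/3 := by
    have i1 : (∫ v in (0:ℝ)..b, ds v * (1 - 2*v)) = 0 := by
      have e : (∫ v in (0:ℝ)..b, ds v * (1 - 2*v)) = ∫ v in (0:ℝ)..b, (0:ℝ) := by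
        apply iiCongr
        intro x hx
        rw [uIcc_of_le hb0] at hx
        show ds x * (1 - 2*x) = 0
        rw [hds_eq0 x hx.2]; ring
      rw [e]; simp
    have i2 : (∫ v in b..(1/2:ℝ), ds v * (1 - 2*v)) = h^3/3 := by
      have e1 : (∫ v in b..(1/2:ℝ), ds v * (1 - 2*v))
          = ∫ v in b..(1/2:ℝ), ((-b) + (1+2*b)*v + (-2)*v^2) := by
        apply iiCongr
        intro x hx
        rw [uIcc_of_le hb2] at hx
        show ds x * (1 - 2*x) = _
        rw [hds_eq1 x hx.1]; ring
      rw [e1, intPoly, hbdef]; ring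
    rw [← iiAdj (show IntervalIntegrable (fun v => ds v * (1 - 2*v)) volume 0 b from (hdscont.mul hw).intervalIntegrable 0 b)
      (show IntervalIntegrable (fun v => ds v * (1 - 2*v)) volume b (1/2) from (hdscont.mul hw).intervalIntegrable b (1/2)), i1, i2]
    ring
  -- LHS equals h^3/3
  have hsq2 : Real.sqrt 2 ^ 2 = 2 := Real.sq_sqrt (by norm_num)
  have hkey : 2 * Real.sqrt 2 / 3 * S ^ ((3:ℝ)/2) = h^3/3 := by
    rw [rpow_three_halves hS0, hhdef, Real.sqrt_mul (by norm_num) S,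
      mul_pow, show Real.sqrt 2 ^ 3 = 2 * Real.sqrt 2 from by rw [pow_succ, hsq2]]
    ring
  rw [hkey]
  by_cases hcase : h ≤ d (1/2)
  · have hpt : ∀ v ∈ Icc (0:ℝ) (1/2), ds v * (1 - 2*v) ≤ d v * (1 - 2*v) := by
      intro v hv
      have h1v : 0 ≤ 1 - 2*v := by linarith [hv.2]
      apply mul_le_mul_of_nonneg_right _ h1v
      rcases le_or_gt v b with hvb | hvb
      · rw [hds_eq0 v hvb]; exact hd0 v hv
      · have := hlip v (1/2) hv.1 hv.2 le_rfl
        rw [hds_eq1 v (le_of_lt hvb), hbdef]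
        linarith
    calc h^3/3 = ∫ v in (0:ℝ)..(1/2), ds v * (1 - 2*v) := hdsK.symm
      _ ≤ ∫ v in (0:ℝ)..(1/2), d v * (1 - 2*v) := by
          apply iiMonoOn (by norm_num)
            ((hdscont.mul hw).intervalIntegrable _ _)
            (ContinuousOn.intervalIntegrable (by rw [huIcc]; exact hcont.mul hw.continuousOn))
            hpt
  · push_neg at hcase
    set E : ℝ → ℝ := fun v => d v - ds v with hEdef
    have hEcont : ContinuousOn E (Icc 0 (1/2)) := hcont.sub hdscont.continuousOn
    have hEb : 0 ≤ E b := by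
      rw [hEdef]; simp only []
      rw [hds_eq0 b le_rfl]
      simpa using hd0 b ⟨hb0, hb2⟩
    have hEhalf : E (1/2) < 0 := by
      have hd : ds (1/2) = h := by rw [hds_eq1 (1/2) hb2, hbdef]; ring
      rw [hEdef]; simp only []
      rw [hd]; linarith
    obtain ⟨r, hrmem, hEr⟩ : ∃ r ∈ Icc b (1/2), E r = 0 := by
      have hsub := intermediate_value_Icc' hb2 (hEcont.mono (Icc_subset_Icc hb0 le_rfl))
      have h0m : (0:ℝ) ∈ Icc (E (1/2)) (E b) := ⟨le_of_lt hEhalf, hEb⟩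
      obtain ⟨r, hr, hr0⟩ := hsub h0m
      exact ⟨r, hr, hr0⟩
    have hpt : ∀ v ∈ Icc (0:ℝ) (1/2), 0 ≤ E v * (r - v) := by
      intro v hv
      rcases le_or_gt v r with hvr | hvr
      · apply mul_nonneg _ (by linarith)
        rcases le_or_gt v b with hvb | hvb
        · rw [hEdef]; simp only []
          rw [hds_eq0 v hvb]
          simpa using hd0 v hv
        · have hlr := hlip v r (by linarith) hvr hrmem.2
          have hdsv := hds_eq1 v (le_of_lt hvb)
          have hdsr := hds_eq1 r hrmem.1
          rw [hEdef] at hEr ⊢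
          simp only [] at hEr ⊢
          rw [hdsv]; rw [hdsr] at hEr
          linarith
      · have hlr := hlip r v (by linarith [hrmem.1]) (le_of_lt hvr) hv.2
        have hdsv := hds_eq1 v (le_trans hrmem.1 (le_of_lt hvr))
        have hdsr := hds_eq1 r hrmem.1
        have hEv : E v ≤ 0 := by
          rw [hEdef] at hEr ⊢
          simp only [] at hEr ⊢
          rw [hdsv]; rw [hdsr] at hEr
          linarith
        nlinarith [hEv]
    have hEint : IntervalIntegrable E volume 0 (1/2) :=
      ContinuousOn.intervalIntegrable (by rw [huIcc]; exact hEcont)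
    have hrv : Continuous fun v : ℝ => r - v := by fun_prop
    have hErint : IntervalIntegrable (fun v => E v * (r - v)) volume 0 (1/2) :=
      ContinuousOn.intervalIntegrable (by rw [huIcc]; exact hEcont.mul hrv.continuousOn)
    have hES0 : (∫ v in (0:ℝ)..(1/2), E v) = 0 := by
      rw [hEdef]
      rw [iiSub hdint (hdscont.intervalIntegrable _ _), hdsS, ← hSdef]
      linarith [hh2]
    have hsplit : (∫ v in (0:ℝ)..(1/2), E v * (1 - 2*v))
        = 2 * (∫ v in (0:ℝ)..(1/2), E v * (r - v)) + (1 - 2*r) * ∫ v in (0:ℝ)..(1/2), E v := by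
      rw [← iiConstMul, ← iiConstMul, ← iiAdd (hErint.const_mul 2) (hEint.const_mul _)]
      apply iiCongr
      intro x hx
      ring
    have hint2 : 0 ≤ ∫ v in (0:ℝ)..(1/2), E v * (r - v) := iiNonneg (by norm_num) hpt
    have hKE : (∫ v in (0:ℝ)..(1/2), d v * (1 - 2*v))
        = (∫ v in (0:ℝ)..(1/2), E v * (1 - 2*v)) + h^3/3 := by
      rw [← hdsK, ← iiAdd
        (ContinuousOn.intervalIntegrable
          (by rw [huIcc]; exact (hEcont.mul hw.continuousOn) : ContinuousOn _ _))
        (show IntervalIntegrable (fun v => ds v * (1 - 2*v)) volume 0 (1/2) from (hdscont.mul hw).intervalIntegrable _ _)]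
      apply iiCongr
      intro x hx
      rw [hEdef]; ring
    rw [hKE, hsplit, hES0]
    linarith

theorem lower_bound_diagonal_case (C : ℝ → ℝ → ℝ) (hC : IsCopula C)
    (hD : ConcentratedOnDiagonals C) :
    2 * Real.sqrt 3 / 9 * (1 + 2 * spearmanFootrule C) ^ ((3:ℝ)/2) - 1 ≤ spearmanRho C := by
  obtain ⟨hrange, hbdry, h2i⟩ := hC
  have hC0 : ∀ v ∈ Icc (0:ℝ) 1, C 0 v = 0 := fun v hv => (hbdry v hv).2.1
  have hCu0 : ∀ u ∈ Icc (0:ℝ) 1, C u 0 = 0 := fun u hu => (hbdry u hu).1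
  have hC1 : ∀ v ∈ Icc (0:ℝ) 1, C 1 v = v := fun v hv => (hbdry v hv).2.2.2
  have hCu1 : ∀ u ∈ Icc (0:ℝ) 1, C u 1 = u := fun u hu => (hbdry u hu).2.2.1
  have hd00 : C (0:ℝ) 0 = 0 := hCu0 0 ⟨le_rfl, by norm_num⟩
  have hdnn : ∀ u ∈ Icc (0:ℝ) 1, 0 ≤ C u u := fun u hu => (hrange u hu u hu).1
  -- monotone in the second variable
  have hmono2 : ∀ u ∈ Icc (0:ℝ) 1, ∀ v₁ v₂ : ℝ, 0 ≤ v₁ → v₁ ≤ v₂ → v₂ ≤ 1 →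
      C u v₁ ≤ C u v₂ := by
    intro u hu v₁ v₂ h1 h2 h3
    have h4 := h2i 0 u v₁ v₂ le_rfl hu.1 hu.2 h1 h2 h3
    rw [hC0 v₁ ⟨h1, le_trans h2 h3⟩, hC0 v₂ ⟨le_trans h1 h2, h3⟩] at h4
    linarith
  have hincr1 : ∀ u₁ u₂ v : ℝ, 0 ≤ u₁ → u₁ ≤ u₂ → u₂ ≤ 1 → 0 ≤ v → v ≤ 1 →
      0 ≤ C u₂ v - C u₁ v ∧ C u₂ v - C u₁ v ≤ u₂ - u₁ := by
    intro u₁ u₂ v h1 h2 h3 h4 h5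
    constructor
    · have h6 := h2i u₁ u₂ 0 v h1 h2 h3 le_rfl h4 h5
      rw [hCu0 u₁ ⟨h1, le_trans h2 h3⟩, hCu0 u₂ ⟨le_trans h1 h2, h3⟩] at h6
      linarith
    · have h6 := h2i u₁ u₂ v 1 h1 h2 h3 h4 h5 le_rfl
      rw [hCu1 u₁ ⟨h1, le_trans h2 h3⟩, hCu1 u₂ ⟨le_trans h1 h2, h3⟩] at h6
      linarith
  have hincr2 : ∀ u v₁ v₂ : ℝ, 0 ≤ u → u ≤ 1 → 0 ≤ v₁ → v₁ ≤ v₂ → v₂ ≤ 1 →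
      C u v₂ - C u v₁ ≤ v₂ - v₁ := by
    intro u v₁ v₂ h1 h2 h3 h4 h5
    have h6 := h2i u 1 v₁ v₂ h1 h2 le_rfl h3 h4 h5
    rw [hC1 v₁ ⟨h3, le_trans h4 h5⟩, hC1 v₂ ⟨le_trans h3 h4, h5⟩] at h6
    linarith
  -- the diagonal is 2-Lipschitz on [0,1], hence continuous
  have hdkey : ∀ a b : ℝ, a ∈ Icc (0:ℝ) 1 → b ∈ Icc (0:ℝ) 1 → a ≤ b →
      0 ≤ C b b - C a a ∧ C b b - C a a ≤ 2*(b-a) := by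
    intro a b ha hb hab
    have h1 := hincr1 a b b ha.1 hab hb.2 hb.1 hb.2
    have h2 := hincr2 a a b ha.1 ha.2 ha.1 hab hb.2
    have h3 := hmono2 a ha a b ha.1 hab hb.2
    exact ⟨by linarith [h1.1], by linarith [h1.2]⟩
  have hdcont : ContinuousOn (fun u => C u u) (Icc (0:ℝ) 1) := by
    apply LipschitzOnWith.continuousOn (K := 2)
    apply LipschitzOnWith.of_dist_le_mul
    intro x hx y hy
    rw [Real.dist_eq, Real.dist_eq]
    push_cast
    rcases le_total x y with hxy | hxy
    · have := hdkey x y hx hy hxy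
      rw [abs_of_nonpos (by linarith [this.1]), abs_of_nonpos (by linarith)]
      linarith [this.2]
    · have := hdkey y x hy hx hxy
      rw [abs_of_nonneg (by linarith [this.1]), abs_of_nonneg (by linarith)]
      linarith [this.2]
  -- reflection identity
  have hrefl : ∀ u ∈ Icc (1/2:ℝ) 1, C u u = C (1-u) (1-u) + (2*u - 1) := by
    intro u hu
    have hmu : (1-u) ∈ Icc (0:ℝ) 1 := ⟨by linarith [hu.2], by linarith [hu.1]⟩
    have hu1 : u ∈ Icc (0:ℝ) 1 := ⟨by linarith [hu.1], hu.2⟩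
    have h1 := (hD u hu1 (1-u) hmu).2.1 (by linarith [hu.1]) (by linarith)
    have h2 := (hD u hu1 (1-u) hmu).2.2.1 (by linarith) (by linarith [hu.1])
    rw [h1] at h2
    linarith
  -- 1-Lipschitz increment on [0,1/2]
  have hlipd : ∀ u₁ u₂ : ℝ, 0 ≤ u₁ → u₁ ≤ u₂ → u₂ ≤ 1/2 →
      C u₂ u₂ - C u₁ u₁ ≤ u₂ - u₁ := by
    intro u₁ u₂ h1 h2 h3
    have hu1 : u₁ ∈ Icc (0:ℝ) 1 := ⟨h1, by linarith⟩
    have hu2 : u₂ ∈ Icc (0:ℝ) 1 := ⟨by linarith, by linarith⟩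
    have h6 := h2i u₁ u₂ u₂ 1 h1 h2 (by linarith) (by linarith) (by linarith) le_rfl
    rw [hCu1 u₁ hu1, hCu1 u₂ hu2,
      (hD u₁ hu1 u₂ hu2).1 h2 (by linarith)] at h6
    linarith
  -- interval integrability of the diagonal
  have hdii : ∀ a b : ℝ, 0 ≤ a → a ≤ b → b ≤ 1 →
      IntervalIntegrable (fun v => C v v) volume a b := by
    intro a b ha hab hb
    apply ContinuousOn.intervalIntegrable
    rw [uIcc_of_le hab]
    exact hdcont.mono (Icc_subset_Icc ha hb)
  have hdraC : ContinuousOn (fun v => C (1-v) (1-v)) (Icc (0:ℝ) 1) := by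
    have hmt : MapsTo (fun v : ℝ => 1 - v) (Icc (0:ℝ) 1) (Icc (0:ℝ) 1) := by
      intro x hx
      show 1 - x ∈ Icc (0:ℝ) 1
      rw [mem_Icc] at hx ⊢
      exact ⟨by linarith, by linarith⟩
    exact hdcont.comp ((continuous_const.sub continuous_id).continuousOn) hmt
  have hdra : ∀ a b : ℝ, 0 ≤ a → a ≤ b → b ≤ 1 →
      IntervalIntegrable (fun v => C (1-v) (1-v)) volume a b := by
    intro a b ha hab hb
    apply ContinuousOn.intervalIntegrable
    rw [uIcc_of_le hab]
    exact hdraC.mono (Icc_subset_Icc ha hb)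
  have hcomp : ∀ a b : ℝ, (∫ x in a..b, C (1-x) (1-x)) = ∫ x in (1-b)..(1-a), C x x := by
    intro a b
    exact iiCompSubLeft (fun t => C t t) 1
  -- integrability of vertical sections
  have hCvII : ∀ u ∈ Icc (0:ℝ) 1, ∀ a b : ℝ, 0 ≤ a → a ≤ b → b ≤ 1 →
      IntervalIntegrable (fun v => C u v) volume a b := by
    intro u hu a b ha hab hb
    apply MonotoneOn.intervalIntegrable
    rw [uIcc_of_le hab]
    intro x hx y hy hxy
    exact hmono2 u hu x y (le_trans ha hx.1) hxy (le_trans hy.2 hb)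
  -- abbreviations
  set S : ℝ := ∫ v in (0:ℝ)..(1/2), C v v with hSdef
  set K : ℝ := ∫ v in (0:ℝ)..(1/2), C v v * (1 - 2*v) with hKdef
  have hS0 : 0 ≤ S := iiNonneg (by norm_num) (fun x hx => hdnn x ⟨hx.1, by linarith [hx.2]⟩)
  -- footrule value
  have hfoot : (∫ u in (0:ℝ)..1, C u u) = 2*S + 1/4 := by
    have e2 : (∫ u in (1/2:ℝ)..1, C u u)
        = ∫ u in (1/2:ℝ)..1, (C (1-u) (1-u) + ((-1) + 2*u + 0*u^2)) := by
      apply iiCongr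
      intro x hx
      rw [uIcc_of_le (by norm_num : (1/2:ℝ) ≤ 1)] at hx
      show C x x = C (1-x) (1-x) + ((-1) + 2*x + 0*x^2)
      rw [hrefl x hx]; ring
    have e3 : (∫ u in (1/2:ℝ)..1, C u u) = S + 1/4 := by
      rw [e2, iiAdd (hdra (1/2) 1 (by norm_num) (by norm_num) (by norm_num))
        (by apply Continuous.intervalIntegrable; fun_prop), hcomp, intPoly]
      norm_num
      exact hSdef.symm
    rw [← iiAdj (hdii 0 (1/2) (by norm_num) (by norm_num) (by norm_num))
      (hdii (1/2) 1 (by norm_num) (by norm_num) (by norm_num)), e3, ← hSdef]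
    ring
  -- inner integral for u in [0,1/2]
  have hinner1 : ∀ u ∈ Icc (0:ℝ) (1/2),
      (∫ v in (0:ℝ)..1, C u v)
        = 2 * (∫ t in (0:ℝ)..u, C t t) + C u u * (1 - 2*u) + u^2/2 := by
    intro u hu
    have hu1 : u ∈ Icc (0:ℝ) 1 := ⟨hu.1, by linarith [hu.2]⟩
    have h1u : (1:ℝ) - u ≤ 1 := by linarith [hu.1]
    have hu1u : u ≤ 1 - u := by linarith [hu.2]
    have p1 : (∫ v in (0:ℝ)..u, C u v) = ∫ t in (0:ℝ)..u, C t t := by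
      apply iiCongr
      intro x hx
      rw [uIcc_of_le hu.1] at hx
      show C u x = C x x
      exact (hD u hu1 x ⟨hx.1, by linarith [hx.2, hu.2]⟩).2.1 hx.2 (by linarith [hx.2, hu.2])
    have p2 : (∫ v in u..(1-u), C u v) = (1 - 2*u) * C u u := by
      have e : (∫ v in u..(1-u), C u v) = ∫ v in u..(1-u), C u u := by
        apply iiCongr
        intro x hx
        rw [uIcc_of_le hu1u] at hx
        show C u x = C u u
        exact (hD u hu1 x ⟨le_trans hu.1 hx.1, le_trans hx.2 h1u⟩).1 hx.1 hx.2
      rw [e, iiConst]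
      ring
    have p3 : (∫ v in (1-u)..1, C u v)
        = (∫ t in (0:ℝ)..u, C t t) + (u - u^2) + ((3*u^2 - 2*u)/2) := by
      have e : (∫ v in (1-u)..1, C u v) = ∫ v in (1-u)..1, (C v v + (u - v)) := by
        apply iiCongr
        intro x hx
        rw [uIcc_of_le h1u] at hx
        show C u x = C x x + (u - x)
        have hx1 : x ∈ Icc (0:ℝ) 1 := ⟨by linarith [hx.1, hu.2], hx.2⟩
        have h4 := (hD u hu1 x hx1).2.2.2 (by linarith [hx.1]) (by linarith [hx.1, hu.2])
        rw [h4]; ring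
      have e2 : (∫ v in (1-u)..1, C v v) = (∫ t in (0:ℝ)..u, C t t) + (u - u^2) := by
        have e3 : (∫ v in (1-u)..1, C v v)
            = ∫ v in (1-u)..1, (C (1-v) (1-v) + ((-1) + 2*v + 0*v^2)) := by
          apply iiCongr
          intro x hx
          rw [uIcc_of_le h1u] at hx
          show C x x = C (1-x) (1-x) + ((-1) + 2*x + 0*x^2)
          rw [hrefl x ⟨by linarith [hx.1, hu.2], hx.2⟩]; ring
        rw [e3, iiAdd (hdra (1-u) 1 (by linarith [hu.2]) h1u le_rfl)
          (by apply Continuous.intervalIntegrable; fun_prop), hcomp, intPoly]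
        rw [show (1:ℝ) - 1 = 0 by norm_num, show 1 - (1-u) = u by ring]
        ring
      have e4 : (∫ v in (1-u)..1, (u - v)) = (3*u^2 - 2*u)/2 := by
        have e5 : (∫ v in (1-u)..1, (u - v)) = ∫ v in (1-u)..1, (u + (-1)*v + 0*v^2) := by
          apply iiCongr
          intro x _
          show u - x = u + (-1)*x + 0*x^2
          ring
        rw [e5, intPoly]; ring
      rw [e, iiAdd (hdii (1-u) 1 (by linarith [hu.2]) h1u le_rfl)
        (by apply Continuous.intervalIntegrable; fun_prop), e2, e4]
    have esplit : (∫ v in (0:ℝ)..1, C u v)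
        = (∫ v in (0:ℝ)..u, C u v)
          + ((∫ v in u..(1-u), C u v) + (∫ v in (1-u)..1, C u v)) := by
      rw [iiAdj (hCvII u hu1 u (1-u) hu.1 hu1u h1u)
        (hCvII u hu1 (1-u) 1 (by linarith [hu.2]) h1u le_rfl),
        iiAdj (hCvII u hu1 0 u le_rfl hu.1 hu1.2) (hCvII u hu1 u 1 hu.1 hu1.2 le_rfl)]
    rw [esplit, p1, p2, p3]
    ring
  -- inner integral for u in [1/2,1]
  have hinner2 : ∀ u ∈ Icc (1/2:ℝ) 1,
      (∫ v in (0:ℝ)..1, C u v)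
        = 2 * (∫ t in (0:ℝ)..(1-u), C t t) + C (1-u) (1-u) * (1 - 2*(1-u))
          + ((1-2*(1-u))^2/2 + (1-u) - (3/2)*(1-u)^2) := by
    intro u hu
    have hu1 : u ∈ Icc (0:ℝ) 1 := ⟨by linarith [hu.1], hu.2⟩
    have h0u : (0:ℝ) ≤ 1 - u := by linarith [hu.2]
    have h1uu : 1 - u ≤ u := by linarith [hu.1]
    have p1 : (∫ v in (0:ℝ)..(1-u), C u v) = ∫ t in (0:ℝ)..(1-u), C t t := by
      apply iiCongr
      intro x hx
      rw [uIcc_of_le h0u] at hx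
      show C u x = C x x
      exact (hD u hu1 x ⟨hx.1, by linarith [hx.2, hu.2]⟩).2.1
        (by linarith [hx.2, hu.1]) (by linarith [hx.2])
    have p2 : (∫ v in (1-u)..u, C u v) = C u u * (2*u-1) - (2*u-1)^2/2 := by
      have e : (∫ v in (1-u)..u, C u v) = ∫ v in (1-u)..u, (C u u + ((-u) + 1*v + 0*v^2)) := by
        apply iiCongr
        intro x hx
        rw [uIcc_of_le h1uu] at hx
        show C u x = C u u + ((-u) + 1*x + 0*x^2)
        have hx1 : x ∈ Icc (0:ℝ) 1 := ⟨by linarith [hx.1, hu.2], le_trans hx.2 hu.2⟩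
        have h4 := (hD u hu1 x hx1).2.2.1 hx.1 hx.2
        rw [h4]; ring
      rw [e, iiAdd (by apply Continuous.intervalIntegrable; fun_prop)
        (by apply Continuous.intervalIntegrable; fun_prop), iiConst, intPoly]
      ring
    have p3 : (∫ v in u..1, C u v)
        = ((∫ t in (0:ℝ)..(1-u), C t t) + (u - u^2)) + (-(1-u)^2/2) := by
      have e : (∫ v in u..1, C u v) = ∫ v in u..1, (C v v + (u - v)) := by
        apply iiCongr
        intro x hx
        rw [uIcc_of_le hu1.2] at hx
        show C u x = C x x + (u - x)
        have hx1 : x ∈ Icc (0:ℝ) 1 := ⟨by linarith [hx.1, hu.1], hx.2⟩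
        have h4 := (hD u hu1 x hx1).2.2.2 (by linarith [hx.1, hu.1]) hx.1
        rw [h4]; ring
      have e2 : (∫ v in u..1, C v v) = (∫ t in (0:ℝ)..(1-u), C t t) + (u - u^2) := by
        have e3 : (∫ v in u..1, C v v)
            = ∫ v in u..1, (C (1-v) (1-v) + ((-1) + 2*v + 0*v^2)) := by
          apply iiCongr
          intro x hx
          rw [uIcc_of_le hu1.2] at hx
          show C x x = C (1-x) (1-x) + ((-1) + 2*x + 0*x^2)
          rw [hrefl x ⟨le_trans hu.1 hx.1, hx.2⟩]; ring
        rw [e3, iiAdd (hdra u 1 hu1.1 hu1.2 le_rfl)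
          (by apply Continuous.intervalIntegrable; fun_prop), hcomp, intPoly]
        rw [show (1:ℝ) - 1 = 0 by norm_num]
        ring
      have e4 : (∫ v in u..1, (u - v)) = -(1-u)^2/2 := by
        have e5 : (∫ v in u..1, (u - v)) = ∫ v in u..1, (u + (-1)*v + 0*v^2) := by
          apply iiCongr
          intro x _
          show u - x = u + (-1)*x + 0*x^2
          ring
        rw [e5, intPoly]; ring
      rw [e, iiAdd (hdii u 1 hu1.1 hu1.2 le_rfl)
        (by apply Continuous.intervalIntegrable; fun_prop), e2, e4]
    have esplit : (∫ v in (0:ℝ)..1, C u v)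
        = (∫ v in (0:ℝ)..(1-u), C u v)
          + ((∫ v in (1-u)..u, C u v) + (∫ v in u..1, C u v)) := by
      rw [iiAdj (hCvII u hu1 (1-u) u h0u h1uu hu1.2)
        (hCvII u hu1 u 1 hu1.1 hu1.2 le_rfl),
        iiAdj (hCvII u hu1 0 (1-u) le_rfl h0u (by linarith [hu.1]))
          (hCvII u hu1 (1-u) 1 h0u (by linarith [hu.1]) le_rfl)]
    rw [esplit, p1, p2, p3, hrefl u hu]
    ring
  -- continuity of the primitive
  have hTcont : ContinuousOn (fun x => ∫ t in (0:ℝ)..x, C t t) (Icc (0:ℝ) 1) := by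
    have := iiPrimCont (hdii 0 1 le_rfl (by norm_num) le_rfl)
    rwa [uIcc_of_le (by norm_num)] at this
  have hpoly : ∀ p q r : ℝ, Continuous fun x : ℝ => p + q*x + r*x^2 := by
    intro p q r; fun_prop
  -- continuity of the two inner-integral formulas
  have hg1cont : ContinuousOn
      (fun u => 2 * (∫ t in (0:ℝ)..u, C t t) + C u u * (1 - 2*u) + u^2/2)
      (Icc (0:ℝ) (1/2)) := by
    apply ContinuousOn.add
    apply ContinuousOn.add
    · exact continuousOn_const.mul (hTcont.mono (Icc_subset_Icc le_rfl (by norm_num)))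
    · exact (hdcont.mono (Icc_subset_Icc le_rfl (by norm_num))).mul
        (by fun_prop : Continuous fun u : ℝ => 1 - 2*u).continuousOn
    · exact (by fun_prop : Continuous fun u : ℝ => u^2/2).continuousOn
  have hTra : ContinuousOn (fun u => ∫ t in (0:ℝ)..(1-u), C t t) (Icc (0:ℝ) 1) := by
    have hmt : MapsTo (fun v : ℝ => 1 - v) (Icc (0:ℝ) 1) (Icc (0:ℝ) 1) := by
      intro x hx
      show 1 - x ∈ Icc (0:ℝ) 1
      rw [mem_Icc] at hx ⊢
      exact ⟨by linarith, by linarith⟩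
    exact hTcont.comp ((continuous_const.sub continuous_id).continuousOn) hmt
  have hg2cont : ContinuousOn
      (fun u => 2 * (∫ t in (0:ℝ)..(1-u), C t t) + C (1-u) (1-u) * (1 - 2*(1-u))
        + ((1-2*(1-u))^2/2 + (1-u) - (3/2)*(1-u)^2))
      (Icc (1/2:ℝ) 1) := by
    apply ContinuousOn.add
    apply ContinuousOn.add
    · exact continuousOn_const.mul (hTra.mono (Icc_subset_Icc (by norm_num) le_rfl))
    · exact (hdraC.mono (Icc_subset_Icc (by norm_num) le_rfl)).mul
        (by fun_prop : Continuous fun u : ℝ => 1 - 2*(1-u)).continuousOn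
    · exact (by fun_prop :
        Continuous fun u : ℝ => (1-2*(1-u))^2/2 + (1-u) - (3/2)*(1-u)^2).continuousOn
  -- interval integrability of the inner integral on both halves
  have hiint1 : IntervalIntegrable (fun u => ∫ v in (0:ℝ)..1, C u v) volume 0 (1/2) := by
    rw [intervalIntegrable_iff]
    apply MeasureTheory.IntegrableOn.congr_fun
      (f := fun u => 2 * (∫ t in (0:ℝ)..u, C t t) + C u u * (1 - 2*u) + u^2/2)
    · exact intervalIntegrable_iff.mp (ContinuousOn.intervalIntegrable
        (by rw [uIcc_of_le (by norm_num : (0:ℝ) ≤ 1/2)]; exact hg1cont))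
    · intro x hx
      rw [uIoc_of_le (by norm_num : (0:ℝ) ≤ 1/2)] at hx
      exact (hinner1 x ⟨le_of_lt hx.1, hx.2⟩).symm
    · exact measurableSet_uIoc
  have hiint2 : IntervalIntegrable (fun u => ∫ v in (0:ℝ)..1, C u v) volume (1/2) 1 := by
    rw [intervalIntegrable_iff]
    apply MeasureTheory.IntegrableOn.congr_fun
      (f := fun u => 2 * (∫ t in (0:ℝ)..(1-u), C t t) + C (1-u) (1-u) * (1 - 2*(1-u))
        + ((1-2*(1-u))^2/2 + (1-u) - (3/2)*(1-u)^2))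
    · exact intervalIntegrable_iff.mp (ContinuousOn.intervalIntegrable
        (by rw [uIcc_of_le (by norm_num : (1/2:ℝ) ≤ 1)]; exact hg2cont))
    · intro x hx
      rw [uIoc_of_le (by norm_num : (1/2:ℝ) ≤ 1)] at hx
      exact (hinner2 x ⟨le_of_lt hx.1, hx.2⟩).symm
    · exact measurableSet_uIoc
  -- outer split
  have hOsplit : (∫ u in (0:ℝ)..1, ∫ v in (0:ℝ)..1, C u v)
      = (∫ u in (0:ℝ)..(1/2), ∫ v in (0:ℝ)..1, C u v)
        + ∫ u in (1/2:ℝ)..1, ∫ v in (0:ℝ)..1, C u v :=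
    (iiAdj hiint1 hiint2).symm
  -- value of the two outer halves
  set TT : ℝ := ∫ u in (0:ℝ)..(1/2), (∫ t in (0:ℝ)..u, C t t) with hTTdef
  have hO1 : (∫ u in (0:ℝ)..(1/2), ∫ v in (0:ℝ)..1, C u v) = 2*TT + K + 1/48 := by
    have e : (∫ u in (0:ℝ)..(1/2), ∫ v in (0:ℝ)..1, C u v)
        = ∫ u in (0:ℝ)..(1/2),
            (2 * (∫ t in (0:ℝ)..u, C t t) + C u u * (1 - 2*u) + (0 + 0*u + (1/2)*u^2)) := by
      apply iiCongr
      intro x hx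
      rw [uIcc_of_le (by norm_num : (0:ℝ) ≤ 1/2)] at hx
      show (∫ v in (0:ℝ)..1, C x v) = _
      rw [hinner1 x hx]; ring
    rw [e]
    have i1 : IntervalIntegrable (fun u => 2 * (∫ t in (0:ℝ)..u, C t t)) volume 0 (1/2) := by
      apply ContinuousOn.intervalIntegrable
      rw [uIcc_of_le (by norm_num : (0:ℝ) ≤ 1/2)]
      exact continuousOn_const.mul (hTcont.mono (Icc_subset_Icc le_rfl (by norm_num)))
    have i2 : IntervalIntegrable (fun u => C u u * (1 - 2*u)) volume 0 (1/2) := by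
      apply ContinuousOn.intervalIntegrable
      rw [uIcc_of_le (by norm_num : (0:ℝ) ≤ 1/2)]
      exact (hdcont.mono (Icc_subset_Icc le_rfl (by norm_num))).mul
        (by fun_prop : Continuous fun u : ℝ => 1 - 2*u).continuousOn
    rw [iiAdd (i1.add i2) (by apply Continuous.intervalIntegrable; fun_prop),
      iiAdd i1 i2, iiConstMul, intPoly, ← hKdef, ← hTTdef]
    ring
  have hO2 : (∫ u in (1/2:ℝ)..1, ∫ v in (0:ℝ)..1, C u v) = 2*TT + K + 7/48 := by
    have e : (∫ u in (1/2:ℝ)..1, ∫ v in (0:ℝ)..1, C u v)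
        = ∫ u in (1/2:ℝ)..1, (fun w => 2 * (∫ t in (0:ℝ)..w, C t t) + C w w * (1 - 2*w)
            + ((1-2*w)^2/2 + w - (3/2)*w^2)) (1 - u) := by
      apply iiCongr
      intro x hx
      rw [uIcc_of_le (by norm_num : (1/2:ℝ) ≤ 1)] at hx
      show (∫ v in (0:ℝ)..1, C x v) = _
      show _ = 2 * (∫ t in (0:ℝ)..(1-x), C t t) + C (1-x) (1-x) * (1 - 2*(1-x))
            + ((1-2*(1-x))^2/2 + (1-x) - (3/2)*(1-x)^2)
      rw [hinner2 x hx]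
    have e3 : (∫ u in (1/2:ℝ)..1, (fun w => 2 * (∫ t in (0:ℝ)..w, C t t) + C w w * (1 - 2*w)
            + ((1-2*w)^2/2 + w - (3/2)*w^2)) (1 - u))
        = ∫ w in (0:ℝ)..(1/2), (2 * (∫ t in (0:ℝ)..w, C t t) + C w w * (1 - 2*w)
            + ((1-2*w)^2/2 + w - (3/2)*w^2)) := by
      have h5 := iiCompSubLeft (a := (1/2:ℝ)) (b := (1:ℝ))
        (fun w => 2 * (∫ t in (0:ℝ)..w, C t t) + C w w * (1 - 2*w)
            + ((1-2*w)^2/2 + w - (3/2)*w^2)) 1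
      rw [show (1:ℝ) - 1 = 0 by norm_num, show (1:ℝ) - 1/2 = 1/2 by norm_num] at h5
      exact h5
    rw [e, e3]
    have e2 : (∫ w in (0:ℝ)..(1/2), (2 * (∫ t in (0:ℝ)..w, C t t) + C w w * (1 - 2*w)
            + ((1-2*w)^2/2 + w - (3/2)*w^2)))
        = ∫ w in (0:ℝ)..(1/2), (2 * (∫ t in (0:ℝ)..w, C t t) + C w w * (1 - 2*w)
            + (1/2 + (-1)*w + (1/2)*w^2)) := by
      apply iiCongr
      intro x _
      show _ = 2 * (∫ t in (0:ℝ)..x, C t t) + C x x * (1 - 2*x) + (1/2 + (-1)*x + (1/2)*x^2)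
      ring
    have i1 : IntervalIntegrable (fun u => 2 * (∫ t in (0:ℝ)..u, C t t)) volume 0 (1/2) := by
      apply ContinuousOn.intervalIntegrable
      rw [uIcc_of_le (by norm_num : (0:ℝ) ≤ 1/2)]
      exact continuousOn_const.mul (hTcont.mono (Icc_subset_Icc le_rfl (by norm_num)))
    have i2 : IntervalIntegrable (fun u => C u u * (1 - 2*u)) volume 0 (1/2) := by
      apply ContinuousOn.intervalIntegrable
      rw [uIcc_of_le (by norm_num : (0:ℝ) ≤ 1/2)]
      exact (hdcont.mono (Icc_subset_Icc le_rfl (by norm_num))).mul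
        (by fun_prop : Continuous fun u : ℝ => 1 - 2*u).continuousOn
    rw [e2, iiAdd (i1.add i2) (by apply Continuous.intervalIntegrable; fun_prop),
      iiAdd i1 i2, iiConstMul, intPoly, ← hKdef, ← hTTdef]
    ring
  -- integration by parts : TT = K/2
  have hTT2 : K - 2*TT = 0 := by
    have hF : ∀ x ∈ Ioo (0:ℝ) (1/2), HasDerivAt
        (fun y => (∫ t in (0:ℝ)..y, C t t) * (1 - 2*y))
        (C x x * (1 - 2*x) - 2*(∫ t in (0:ℝ)..x, C t t)) x := by
      intro x hx
      have hx1 : x ∈ Ioo (0:ℝ) 1 := ⟨hx.1, by linarith [hx.2]⟩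
      have hTd : HasDerivAt (fun y => ∫ t in (0:ℝ)..y, C t t) (C x x) x := by
        apply iiHasDeriv (p := 0) (q := 1)
          (hdii 0 x le_rfl (le_of_lt hx.1) (by linarith [hx.2]))
          (hdcont.mono Ioo_subset_Icc_self) hx1
      have hlin : HasDerivAt (fun y : ℝ => 1 - 2*y) (-2) x := by
        simpa using ((hasDerivAt_id x).const_mul (2:ℝ)).const_sub 1
      have h6 : HasDerivAt (fun y => (∫ t in (0:ℝ)..y, C t t) * (1 - 2*y)) _ x := hTd.mul hlin
      convert h6 using 1
      ring
    have hcF : ContinuousOn (fun y => (∫ t in (0:ℝ)..y, C t t) * (1 - 2*y))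
        (Icc (0:ℝ) (1/2)) :=
      (hTcont.mono (Icc_subset_Icc le_rfl (by norm_num))).mul
        (by fun_prop : Continuous fun y : ℝ => 1 - 2*y).continuousOn
    have i2 : IntervalIntegrable (fun u => C u u * (1 - 2*u)) volume 0 (1/2) := by
      apply ContinuousOn.intervalIntegrable
      rw [uIcc_of_le (by norm_num : (0:ℝ) ≤ 1/2)]
      exact (hdcont.mono (Icc_subset_Icc le_rfl (by norm_num))).mul
        (by fun_prop : Continuous fun u : ℝ => 1 - 2*u).continuousOn
    have i1 : IntervalIntegrable (fun u => 2*(∫ t in (0:ℝ)..u, C t t)) volume 0 (1/2) := by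
      apply ContinuousOn.intervalIntegrable
      rw [uIcc_of_le (by norm_num : (0:ℝ) ≤ 1/2)]
      exact continuousOn_const.mul (hTcont.mono (Icc_subset_Icc le_rfl (by norm_num)))
    have h7 := iiFTC' (by norm_num : (0:ℝ) ≤ 1/2) hcF hF (i2.sub i1)
    rw [iiSub i2 i1, iiConstMul] at h7
    have h8 : ((∫ t in (0:ℝ)..(1/2:ℝ), C t t) * (1 - 2*(1/2:ℝ)))
        - ((∫ t in (0:ℝ)..(0:ℝ), C t t) * (1 - 2*(0:ℝ))) = 0 := by
      rw [intervalIntegral.integral_same]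
      ring
    rw [← hKdef, ← hTTdef] at h7
    calc K - 2*TT = ((∫ t in (0:ℝ)..(1/2:ℝ), C t t) * (1 - 2*(1/2:ℝ)))
        - ((∫ t in (0:ℝ)..(0:ℝ), C t t) * (1 - 2*(0:ℝ))) := h7
      _ = 0 := h8
  -- value of rho and footrule
  have hrho : spearmanRho C = 48*K - 1 := by
    unfold spearmanRho
    rw [hOsplit, hO1, hO2]
    have : TT = K/2 := by linarith [hTT2]
    rw [this]
    ring
  have hphi : spearmanFootrule C = 12*S - 1/2 := by
    unfold spearmanFootrule
    rw [hfoot]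
    ring
  rw [hrho, hphi, show 1 + 2*(12*S - 1/2) = 24*S by ring]
  -- the core analytic inequality
  have hcore : 2 * Real.sqrt 2 / 3 * S ^ ((3:ℝ)/2) ≤ K :=
    core_ineq (fun v => C v v)
      (hdcont.mono (Icc_subset_Icc le_rfl (by norm_num)))
      (fun v hv => hdnn v ⟨hv.1, by linarith [hv.2]⟩)
      hd00 hlipd
  -- numerics
  have h24 : (24*S)^((3:ℝ)/2) = 24^((3:ℝ)/2) * S^((3:ℝ)/2) :=
    Real.mul_rpow (by norm_num) hS0
  have h243 : (24:ℝ)^((3:ℝ)/2) = 48*Real.sqrt 6 := by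
    rw [rpow_three_halves (by norm_num : (0:ℝ) ≤ 24)]
    have h9 : Real.sqrt 24 = 2*Real.sqrt 6 := by
      rw [show (24:ℝ) = 2^2*6 by norm_num, Real.sqrt_mul (by positivity),
        Real.sqrt_sq (by norm_num : (0:ℝ) ≤ 2)]
    rw [h9]
    linear_combination (8*Real.sqrt 6) * Real.sq_sqrt (by norm_num : (0:ℝ) ≤ 6)
  have h36 : Real.sqrt 3 * Real.sqrt 6 = 3*Real.sqrt 2 := by
    rw [← Real.sqrt_mul (by norm_num) 6, show (3*6:ℝ) = 3^2*2 by norm_num,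
      Real.sqrt_mul (by positivity), Real.sqrt_sq (by norm_num : (0:ℝ) ≤ 3)]
  have hfin : 2 * Real.sqrt 3 / 9 * (24*S)^((3:ℝ)/2)
      = 48 * (2 * Real.sqrt 2 / 3 * S^((3:ℝ)/2)) := by
    rw [h24, h243]
    linear_combination (96/9) * S^((3:ℝ)/2) * h36
  linarith [hfin, hcore]
end
end
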